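/- arXiv:1409.1015 — 12 statements merged into one kernel-verified Lean document; each statement's English description precedes it below -/
import Mathlib

section
/- Let $n>0$ be a real number and for $k\in\mathbb{N}$, $x\ge0$ set $p_{n,k}(x)=e^{-nx}\frac{(nx)^k}{k!}$. Then for all $x,y\ge0$, $\sum_{k=0}^{\infty}p_{n,k}(x)p_{n,k}(y) \;=\; \frac{1}{\pi}\int_{-1}^{1} e^{-n(x+y+2t\sqrt{xy})}\,\frac{dt}{\sqrt{1-t^2}}$. -/
open scoped BigOperators

set_option maxHeartbeats 1000000
open MeasureTheory intervalIntegral Real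

lemma aux_pos {t : ℝ} (ht : t ∈ Set.Ioo (-1:ℝ) 1) : 0 < 1 - t ^ 2 := by
  nlinarith [ht.1, ht.2]

lemma aux_int_inv : IntervalIntegrable (fun t : ℝ => 1 / Real.sqrt (1 - t ^ 2))
    volume (-1) 1 := by
  apply intervalIntegrable_deriv_of_nonneg (g := Real.arcsin)
  · exact Real.continuous_arcsin.continuousOn
  · intro t ht
    simp only [min_eq_left (by norm_num : (-1:ℝ) ≤ 1), max_eq_right (by norm_num : (-1:ℝ) ≤ 1)] at ht
    exact Real.hasDerivAt_arcsin (ne_of_gt ht.1) (ne_of_lt ht.2)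
  · intro t _
    positivity

lemma aux_I0 : ∫ t in (-1:ℝ)..1, 1 / Real.sqrt (1 - t ^ 2) = Real.pi := by
  rw [integral_eq_sub_of_hasDerivAt_of_le (by norm_num)
    Real.continuous_arcsin.continuousOn
    (fun t ht => Real.hasDerivAt_arcsin (ne_of_gt ht.1) (ne_of_lt ht.2)) aux_int_inv]
  rw [Real.arcsin_one, Real.arcsin_neg_one]; ring

lemma aux_int_pow (m : ℕ) : IntervalIntegrable (fun t : ℝ => t ^ m / Real.sqrt (1 - t ^ 2))
    volume (-1) 1 := by
  apply aux_int_inv.mono_fun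
  · apply Measurable.aestronglyMeasurable
    exact (measurable_id.pow_const m).div
      ((measurable_const.sub (measurable_id.pow_const 2)).sqrt)
  · rw [Set.uIoc_of_le (by norm_num : (-1:ℝ) ≤ 1)]
    refine (ae_restrict_iff' measurableSet_Ioc).2 (Filter.Eventually.of_forall fun t ht => ?_)
    have h1 : |t| ≤ 1 := abs_le.2 ⟨le_of_lt ht.1, ht.2⟩
    simp only [norm_div, Real.norm_eq_abs]
    have h2 : |t ^ m| ≤ |(1:ℝ)| := by
      rw [abs_pow, abs_one]
      exact pow_le_one₀ (abs_nonneg t) h1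
    by_cases hs : Real.sqrt (1 - t ^ 2) = 0
    · simp [hs]
    · exact (div_le_div_iff_of_pos_right (abs_pos.2 hs)).2 h2

lemma aux_odd (m : ℕ) : ∫ t in (-1:ℝ)..1, t ^ (2 * m + 1) / Real.sqrt (1 - t ^ 2) = 0 := by
  have h := intervalIntegral.integral_comp_neg (a := (-1:ℝ)) (b := 1)
    (f := fun t : ℝ => t ^ (2 * m + 1) / Real.sqrt (1 - t ^ 2))
  simp only [neg_neg] at h
  have h2 : (∫ t in (-1:ℝ)..1, (-t) ^ (2 * m + 1) / Real.sqrt (1 - (-t) ^ 2)) =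
      - ∫ t in (-1:ℝ)..1, t ^ (2 * m + 1) / Real.sqrt (1 - t ^ 2) := by
    rw [← intervalIntegral.integral_neg]
    apply intervalIntegral.integral_congr
    intro t _
    have hodd : Odd (2 * m + 1) := ⟨m, by omega⟩
    simp only []
    rw [hodd.neg_pow, neg_sq, neg_div]
  rw [h2] at h
  linarith

lemma aux_rec (k : ℕ) :
    (2 * (k:ℝ) + 2) * ∫ t in (-1:ℝ)..1, t ^ (2 * k + 2) / Real.sqrt (1 - t ^ 2)
      = (2 * (k:ℝ) + 1) * ∫ t in (-1:ℝ)..1, t ^ (2 * k) / Real.sqrt (1 - t ^ 2) := by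
  set F : ℝ → ℝ := fun t => t ^ (2 * k + 1) * Real.sqrt (1 - t ^ 2) with hF
  set f : ℝ → ℝ := fun t => (2 * (k:ℝ) + 1) * (t ^ (2 * k) / Real.sqrt (1 - t ^ 2))
      - (2 * (k:ℝ) + 2) * (t ^ (2 * k + 2) / Real.sqrt (1 - t ^ 2)) with hf
  have hderiv : ∀ t ∈ Set.Ioo (-1:ℝ) 1, HasDerivAt F (f t) t := by
    intro t ht
    have hpos := aux_pos ht
    have hs : Real.sqrt (1 - t ^ 2) ≠ 0 := by positivity
    have h1 : HasDerivAt (fun t : ℝ => t ^ (2 * k + 1))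
        ((2 * (k:ℝ) + 1) * t ^ (2 * k)) t := by
      have := hasDerivAt_pow (2 * k + 1) t
      simpa [add_comm, mul_comm] using this
    have hinner : HasDerivAt (fun t : ℝ => 1 - t ^ 2) (-(2 * t)) t := by
      simpa using ((hasDerivAt_pow 2 t).const_sub 1)
    have h2 : HasDerivAt (fun t : ℝ => Real.sqrt (1 - t ^ 2))
        (-(2 * t) / (2 * Real.sqrt (1 - t ^ 2))) t :=
      (Real.hasDerivAt_sqrt (ne_of_gt hpos)).comp t hinner |>.congr_deriv (by ring)
    have h3 := h1.mul h2
    refine h3.congr_deriv ?_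
    symm
    have hsq : Real.sqrt (1 - t ^ 2) ^ 2 = 1 - t ^ 2 := Real.sq_sqrt hpos.le
    rw [hf]
    have e1 : t ^ (2 * k + 1) = t ^ (2 * k) * t := by rw [pow_succ]
    have e2 : t ^ (2 * k + 2) = t ^ (2 * k) * t ^ 2 := by
      rw [pow_add]
    simp only []
    rw [e1, e2]
    field_simp
    linear_combination (-(2 * (k:ℝ) + 1) * t ^ (2 * k)) * hsq
  have hcont : ContinuousOn F (Set.Icc (-1:ℝ) 1) := by
    apply Continuous.continuousOn
    exact (continuous_pow _).mul ((continuous_const.sub (continuous_pow 2)).sqrt)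
  have hint : IntervalIntegrable f volume (-1) 1 :=
    ((aux_int_pow (2 * k)).const_mul _).sub ((aux_int_pow (2 * k + 2)).const_mul _)
  have h0 : ∫ t in (-1:ℝ)..1, f t = F 1 - F (-1) :=
    integral_eq_sub_of_hasDerivAt_of_le (by norm_num) hcont hderiv hint
  have hF1 : F 1 = 0 := by simp [hF]
  have hFm1 : F (-1) = 0 := by norm_num [hF]
  rw [hF1, hFm1, sub_zero, hf] at h0
  rw [intervalIntegral.integral_sub ((aux_int_pow (2 * k)).const_mul _)
    ((aux_int_pow (2 * k + 2)).const_mul _), intervalIntegral.integral_const_mul,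
    intervalIntegral.integral_const_mul] at h0
  linarith

lemma aux_even (k : ℕ) : ∫ t in (-1:ℝ)..1, t ^ (2 * k) / Real.sqrt (1 - t ^ 2)
    = Real.pi * (2 * k).factorial / (4 ^ k * ((k.factorial : ℝ)) ^ 2) := by
  induction k with
  | zero => simpa using aux_I0
  | succ k ih =>
    have hrec := aux_rec k
    rw [ih] at hrec
    have h2 : (2 * ((k:ℝ) + 1)) = 2 * (k:ℝ) + 2 := by ring
    have hk2 : (0:ℝ) < 2 * (k:ℝ) + 2 := by positivity
    have : ∫ t in (-1:ℝ)..1, t ^ (2 * (k + 1)) / Real.sqrt (1 - t ^ 2)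
        = (2 * (k:ℝ) + 1) * (Real.pi * (2 * k).factorial / (4 ^ k * ((k.factorial : ℝ)) ^ 2))
          / (2 * (k:ℝ) + 2) := by
      rw [eq_div_iff (ne_of_gt hk2)]
      have : 2 * (k + 1) = 2 * k + 2 := by ring
      rw [this]
      linarith
    rw [this]
    have hfac : ((2 * (k + 1)).factorial : ℝ)
        = (2 * (k:ℝ) + 2) * (2 * (k:ℝ) + 1) * (2 * k).factorial := by
      have : 2 * (k + 1) = (2 * k + 1) + 1 := by ring
      rw [this, Nat.factorial_succ, Nat.factorial_succ]
      push_cast; ring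
    have hfac2 : (((k+1).factorial : ℝ)) = ((k:ℝ) + 1) * k.factorial := by
      rw [Nat.factorial_succ]; push_cast; ring
    rw [hfac, hfac2]
    have hkf : ((k.factorial : ℝ)) ≠ 0 := Nat.cast_ne_zero.2 k.factorial_ne_zero
    have h4 : (4:ℝ) ^ k ≠ 0 := by positivity
    have hk1 : ((k:ℝ) + 1) ≠ 0 := by positivity
    field_simp
    ring

lemma aux_summable (c : ℝ) (hc : 0 ≤ c) :
    Summable (fun k : ℕ => c ^ k / ((k.factorial : ℝ)) ^ 2) := by
  refine Summable.of_nonneg_of_le (fun k => by positivity)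
    (fun k => ?_) (Real.summable_pow_div_factorial c)
  have h1 : (1:ℝ) ≤ (k.factorial : ℝ) := by exact_mod_cast k.factorial_pos
  have h2 : (k.factorial : ℝ) ≤ ((k.factorial : ℝ)) ^ 2 := by nlinarith
  apply div_le_div_of_nonneg_left (by positivity) (by positivity) h2

lemma aux_key (d : ℝ) :
    ∫ t in (-1:ℝ)..1, Real.exp (d * t) / Real.sqrt (1 - t ^ 2)
      = Real.pi * ∑' k : ℕ, (d ^ 2 / 4) ^ k / ((k.factorial : ℝ)) ^ 2 := by
  set μ := volume.restrict (Set.Ioo (-1:ℝ) 1) with hμ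
  set F : ℕ → ℝ → ℝ := fun m t => d ^ m / (m.factorial : ℝ) * (t ^ m / Real.sqrt (1 - t ^ 2))
    with hFdef
  -- set-integral versions of interval integrals
  have hIoo : ∀ g : ℝ → ℝ, (∫ t in (-1:ℝ)..1, g t) = ∫ t, g t ∂μ := by
    intro g
    rw [intervalIntegral.integral_of_le (by norm_num : (-1:ℝ) ≤ 1), hμ,
      ← MeasureTheory.integral_Ioc_eq_integral_Ioo]
  have hint : ∀ m : ℕ, Integrable (F m) μ := by
    intro m
    rw [hμ]
    exact ((((aux_int_pow m).1).mono_set Set.Ioo_subset_Ioc_self).const_mul _)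
  have hpi : (∫ t, 1 / Real.sqrt (1 - t ^ 2) ∂μ) = Real.pi := by
    rw [← hIoo]; exact aux_I0
  have hnorm : ∀ m : ℕ, (∫ t, ‖F m t‖ ∂μ) ≤ |d| ^ m / (m.factorial : ℝ) * Real.pi := by
    intro m
    have key : ∀ t ∈ Set.Ioo (-1:ℝ) 1, ‖F m t‖ ≤
        |d| ^ m / (m.factorial : ℝ) * (1 / Real.sqrt (1 - t ^ 2)) := by
      intro t ht
      have hpos := aux_pos ht
      have hspos : 0 < Real.sqrt (1 - t ^ 2) := Real.sqrt_pos.2 hpos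
      have h1 : |t| ≤ 1 := by
        rw [abs_le]; exact ⟨ht.1.le, ht.2.le⟩
      rw [hFdef]
      simp only [Real.norm_eq_abs, abs_mul, abs_div, abs_pow, abs_of_nonneg hspos.le,
        Nat.abs_cast]
      gcongr
      exact pow_le_one₀ (abs_nonneg t) h1
    calc (∫ t, ‖F m t‖ ∂μ)
        ≤ ∫ t, |d| ^ m / (m.factorial : ℝ) * (1 / Real.sqrt (1 - t ^ 2)) ∂μ := by
          apply setIntegral_mono_on (hint m).norm
          · exact ((aux_int_inv.1.mono_set Set.Ioo_subset_Ioc_self).const_mul _)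
          · exact measurableSet_Ioo
          · exact key
      _ = |d| ^ m / (m.factorial : ℝ) * Real.pi := by
          rw [MeasureTheory.integral_const_mul, hpi]
  have hsum_norm : Summable (fun m : ℕ => ∫ t, ‖F m t‖ ∂μ) := by
    refine Summable.of_nonneg_of_le (fun m => integral_nonneg fun t => norm_nonneg _)
      hnorm ?_
    exact (Real.summable_pow_div_factorial |d|).mul_right _
  have hHS := MeasureTheory.hasSum_integral_of_summable_integral_norm hint hsum_norm
  -- identify the pointwise sum
  have hptsum : ∀ t : ℝ, (∑' m : ℕ, F m t) = Real.exp (d * t) / Real.sqrt (1 - t ^ 2) := by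
    intro t
    have h1 : ∀ m : ℕ, F m t = (d * t) ^ m / (m.factorial : ℝ) / Real.sqrt (1 - t ^ 2) := by
      intro m; rw [hFdef]; simp only [mul_pow]; ring
    rw [tsum_congr h1, tsum_div_const]
    congr 1
    rw [Real.exp_eq_exp_ℝ, NormedSpace.exp_eq_tsum_div]
  -- identify each integral
  have hintval : ∀ m : ℕ, (∫ t, F m t ∂μ)
      = d ^ m / (m.factorial : ℝ) * ∫ t in (-1:ℝ)..1, t ^ m / Real.sqrt (1 - t ^ 2) := by
    intro m
    rw [hFdef, MeasureTheory.integral_const_mul, hIoo]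
  -- even/odd HasSum
  have hsum2 : Summable (fun k : ℕ => (d ^ 2 / 4) ^ k / ((k.factorial : ℝ)) ^ 2) :=
    aux_summable _ (by positivity)
  have hEven : HasSum (fun k : ℕ => ∫ t, F (2 * k) t ∂μ)
      (Real.pi * ∑' k : ℕ, (d ^ 2 / 4) ^ k / ((k.factorial : ℝ)) ^ 2) := by
    have heq : (fun k : ℕ => ∫ t, F (2 * k) t ∂μ)
        = fun k : ℕ => Real.pi * ((d ^ 2 / 4) ^ k / ((k.factorial : ℝ)) ^ 2) := by
      funext k
      rw [hintval, aux_even]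
      have h1 : ((2 * k).factorial : ℝ) ≠ 0 := Nat.cast_ne_zero.2 (2 * k).factorial_ne_zero
      have h2 : ((k.factorial : ℝ)) ≠ 0 := Nat.cast_ne_zero.2 k.factorial_ne_zero
      have h3 : d ^ (2 * k) = (d ^ 2) ^ k := by rw [← pow_mul]
      have h4 : (d ^ 2 / 4) ^ k = (d ^ 2) ^ k / 4 ^ k := div_pow _ _ _
      rw [h4, h3]
      field_simp
    rw [heq]
    exact hsum2.hasSum.mul_left Real.pi
  have hOdd : HasSum (fun k : ℕ => ∫ t, F (2 * k + 1) t ∂μ) 0 := by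
    have heq : (fun k : ℕ => ∫ t, F (2 * k + 1) t ∂μ) = fun _ : ℕ => (0:ℝ) := by
      funext k
      rw [hintval, aux_odd, mul_zero]
    rw [heq]
    exact hasSum_zero
  have hHS2 : HasSum (fun m : ℕ => ∫ t, F m t ∂μ)
      (Real.pi * ∑' k : ℕ, (d ^ 2 / 4) ^ k / ((k.factorial : ℝ)) ^ 2) := by
    have h := HasSum.even_add_odd (f := fun m : ℕ => ∫ t, F m t ∂μ) hEven hOdd
    rwa [add_zero] at h
  have := hHS.unique hHS2
  rw [hIoo]
  rw [← this]
  apply MeasureTheory.integral_congr_ae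
  filter_upwards with t
  rw [hptsum]

/-- For `n > 0` and the Szász–Mirakjan weights `p k x = e^{-nx}(nx)^k/k!`,
`∑ p k x * p k y = (1/π) ∫_{-1}^1 e^{-n(x+y+2t√(xy))} dt/√(1-t²)`. -/
theorem stmt_2 (n : ℝ) (hn : 0 < n) (x y : ℝ) (hx : 0 ≤ x) (hy : 0 ≤ y) :
    (∑' k : ℕ,
      (Real.exp (-n * x) * (n * x) ^ k / (k.factorial : ℝ)) *
      (Real.exp (-n * y) * (n * y) ^ k / (k.factorial : ℝ))) =
    (1 / Real.pi) * ∫ t in (-1:ℝ)..1,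
      Real.exp (-n * (x + y + 2 * t * Real.sqrt (x * y))) / Real.sqrt (1 - t ^ 2) := by
  set d : ℝ := -2 * n * Real.sqrt (x * y) with hd
  set C : ℝ := Real.exp (-n * x) * Real.exp (-n * y) with hC
  -- rewrite RHS integrand
  have hinteg : ∀ t : ℝ, Real.exp (-n * (x + y + 2 * t * Real.sqrt (x * y)))
      / Real.sqrt (1 - t ^ 2) = C * (Real.exp (d * t) / Real.sqrt (1 - t ^ 2)) := by
    intro t
    have harg : -n * (x + y + 2 * t * Real.sqrt (x * y)) = -n * x + (-n * y + d * t) := by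
      rw [hd]; ring
    rw [hC, harg, Real.exp_add, Real.exp_add]
    ring
  have hint_eq : (∫ t in (-1:ℝ)..1,
      Real.exp (-n * (x + y + 2 * t * Real.sqrt (x * y))) / Real.sqrt (1 - t ^ 2))
      = C * ∫ t in (-1:ℝ)..1, Real.exp (d * t) / Real.sqrt (1 - t ^ 2) := by
    rw [← intervalIntegral.integral_const_mul]
    apply intervalIntegral.integral_congr
    intro t _
    exact hinteg t
  have hd2 : d ^ 2 / 4 = n ^ 2 * (x * y) := by
    rw [hd]
    have : ((-2) * n * Real.sqrt (x * y)) ^ 2 = 4 * n ^ 2 * Real.sqrt (x * y) ^ 2 := by ring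
    rw [this, Real.sq_sqrt (mul_nonneg hx hy)]
    ring
  rw [hint_eq, aux_key, hd2]
  -- LHS
  have hterm : ∀ k : ℕ,
      (Real.exp (-n * x) * (n * x) ^ k / (k.factorial : ℝ)) *
      (Real.exp (-n * y) * (n * y) ^ k / (k.factorial : ℝ))
      = C * ((n ^ 2 * (x * y)) ^ k / ((k.factorial : ℝ)) ^ 2) := by
    intro k
    rw [hC]
    have : (n ^ 2 * (x * y)) ^ k = (n * x) ^ k * (n * y) ^ k := by
      rw [← mul_pow]; ring_nf
    rw [this]
    ring
  rw [tsum_congr hterm, tsum_mul_left]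
  have hpi : Real.pi ≠ 0 := Real.pi_ne_zero
  field_simp
end

section
/- Let $n>0$ be a real number and define $S_{n,0}(x)=\sum_{k=0}^{\infty}\left(e^{-nx}\frac{(nx)^k}{k!}\right)^2$ for $x\ge0$. Then for all $x\ge0$, $S_{n,0}(x)=\frac{1}{\pi}\int_{-1}^{1} e^{-2nx(1+t)}\,\frac{dt}{\sqrt{1-t^2}}$. -/
open scoped BigOperators
open MeasureTheory Real Set

private lemma my_intInt_base :
    IntervalIntegrable (fun t : ℝ => 1 / Real.sqrt (1 - t^2)) volume (-1) 1 := by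
  apply intervalIntegral.intervalIntegrable_deriv_of_nonneg (g := Real.arcsin)
  · exact Real.continuous_arcsin.continuousOn
  · intro t ht
    rw [show min (-1:ℝ) 1 = -1 by norm_num, show max (-1:ℝ) 1 = 1 by norm_num] at ht
    exact Real.hasDerivAt_arcsin (ne_of_gt ht.1) (ne_of_lt ht.2)
  · intro t _; positivity

private lemma my_integral_base :
    ∫ t in (-1:ℝ)..1, 1 / Real.sqrt (1 - t^2) = π := by
  rw [intervalIntegral.integral_eq_sub_of_hasDerivAt_of_le (by norm_num)
    Real.continuous_arcsin.continuousOn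
    (fun t ht => Real.hasDerivAt_arcsin (ne_of_gt ht.1) (ne_of_lt ht.2)) my_intInt_base]
  rw [Real.arcsin_one, Real.arcsin_neg_one]; ring

private lemma my_meas (k : ℕ) :
    Measurable (fun t : ℝ => t^k / Real.sqrt (1 - t^2)) :=
  (measurable_id.pow_const k).div
    (Real.continuous_sqrt.measurable.comp (measurable_const.sub (measurable_id.pow_const 2)))

private lemma my_bound (k : ℕ) {t : ℝ} (h1 : -1 ≤ t) (h2 : t ≤ 1) :
    ‖t^k / Real.sqrt (1 - t^2)‖ ≤ 1 / Real.sqrt (1 - t^2) := by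
  rw [norm_div, Real.norm_eq_abs, Real.norm_eq_abs, abs_of_nonneg (Real.sqrt_nonneg _), abs_pow]
  rcases eq_or_lt_of_le (Real.sqrt_nonneg (1 - t^2)) with h | h
  · rw [← h, div_zero, div_zero]
  · exact (div_le_div_iff_of_pos_right h).2 (by
      exact pow_le_one₀ (abs_nonneg t) (abs_le.2 ⟨h1, h2⟩))

private lemma my_integrableOn (k : ℕ) :
    IntegrableOn (fun t : ℝ => t^k / Real.sqrt (1 - t^2)) (Ioc (-1:ℝ) 1) volume := by
  have h0 : IntegrableOn (fun t : ℝ => 1 / Real.sqrt (1 - t^2)) (Ioc (-1:ℝ) 1) volume :=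
    my_intInt_base.1
  refine h0.mono' ((my_meas k).aestronglyMeasurable) ?_
  refine (ae_restrict_iff' measurableSet_Ioc).2 (Filter.Eventually.of_forall fun t ht => ?_)
  exact my_bound k ht.1.le ht.2

private lemma my_intervalIntegrable (k : ℕ) :
    IntervalIntegrable (fun t : ℝ => t^k / Real.sqrt (1 - t^2)) volume (-1) 1 :=
  (intervalIntegrable_iff_integrableOn_Ioc_of_le (by norm_num)).2 (my_integrableOn k)

private lemma my_step (m : ℕ) :
    (2*(m:ℝ)+2) * ∫ t in (-1:ℝ)..1, t^(2*m+2) / Real.sqrt (1 - t^2)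
      = (2*(m:ℝ)+1) * ∫ t in (-1:ℝ)..1, t^(2*m) / Real.sqrt (1 - t^2) := by
  set g : ℝ → ℝ := fun t => t^(2*m+1) * Real.sqrt (1 - t^2) with hg
  set G : ℝ → ℝ := fun t => (2*(m:ℝ)+1) * (t^(2*m) / Real.sqrt (1-t^2))
      - (2*(m:ℝ)+2) * (t^(2*m+2) / Real.sqrt (1-t^2)) with hG
  have hderiv : ∀ t ∈ Ioo (-1:ℝ) 1, HasDerivAt g (G t) t := by
    intro t ht
    have hpos : 0 < 1 - t^2 := by nlinarith [ht.1, ht.2]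
    have hs : 0 < Real.sqrt (1 - t^2) := Real.sqrt_pos.2 hpos
    have h1 : HasDerivAt (fun t : ℝ => 1 - t^2) (-(2*t)) t := by
      simpa using ((hasDerivAt_pow 2 t).const_sub 1)
    have h2 : HasDerivAt (fun t : ℝ => Real.sqrt (1 - t^2))
        (1 / (2 * Real.sqrt (1 - t^2)) * (-(2*t))) t :=
      (Real.hasDerivAt_sqrt (ne_of_gt hpos)).comp t h1
    have h3 : HasDerivAt (fun y : ℝ => y^(2*m+1) * Real.sqrt (1 - y^2)) _ t :=
      (hasDerivAt_pow (2*m+1) t).mul h2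
    convert h3 using 1
    have hss : Real.sqrt (1-t^2) * Real.sqrt (1-t^2) = 1 - t^2 :=
      Real.mul_self_sqrt hpos.le
    rw [hG]
    rw [show 2*m+1-1 = 2*m by omega]
    beta_reduce
    push_cast
    field_simp
    rw [show t^(2*m+2) = t^(2*m)*t^2 by ring, show t^(2*m+1) = t^(2*m)*t by ring]
    linear_combination (-(2*(m:ℝ)+1) * t^(2*m)) * hss
  have hcontg : ContinuousOn g (Icc (-1:ℝ) 1) := by
    apply Continuous.continuousOn
    exact (continuous_pow _).mul (Real.continuous_sqrt.comp (by continuity))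
  have hGint : IntervalIntegrable G volume (-1) 1 :=
    ((my_intervalIntegrable (2*m)).const_mul _).sub ((my_intervalIntegrable (2*m+2)).const_mul _)
  have hftc := intervalIntegral.integral_eq_sub_of_hasDerivAt_of_le (by norm_num)
    hcontg hderiv hGint
  have hg1 : g 1 = 0 := by simp [hg]
  have hgm1 : g (-1) = 0 := by simp [hg]
  rw [hg1, hgm1, sub_zero] at hftc
  rw [hG] at hftc
  rw [intervalIntegral.integral_sub ((my_intervalIntegrable (2*m)).const_mul _)
    ((my_intervalIntegrable (2*m+2)).const_mul _),
    intervalIntegral.integral_const_mul, intervalIntegral.integral_const_mul] at hftc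
  linarith [hftc]

private lemma my_integral_even (m : ℕ) :
    ∫ t in (-1:ℝ)..1, t^(2*m) / Real.sqrt (1 - t^2)
      = π * ∏ i ∈ Finset.range m, ((2*(i:ℝ)+1)/(2*(i:ℝ)+2)) := by
  induction m with
  | zero => simpa using my_integral_base
  | succ k ih =>
    have hstep := my_step k
    have h2 : (2*(k:ℝ)+2) ≠ 0 := by positivity
    have hexp : 2*(k+1) = 2*k+2 := by ring
    rw [hexp, Finset.prod_range_succ, ← mul_assoc, ← ih]
    field_simp at hstep ⊢
    linarith [hstep]

private lemma my_integral_odd (k : ℕ) :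
    ∫ t in (-1:ℝ)..1, t^(2*k+1) / Real.sqrt (1 - t^2) = 0 := by
  have h := intervalIntegral.integral_comp_neg (a := (-1:ℝ)) (b := 1)
    (fun t => t^(2*k+1) / Real.sqrt (1 - t^2))
  simp only [neg_neg] at h
  have heq : ∀ t : ℝ, (-t)^(2*k+1) / Real.sqrt (1 - (-t)^2)
      = -(t^(2*k+1) / Real.sqrt (1 - t^2)) := by
    intro t
    rw [Odd.neg_pow ⟨k, by ring⟩, neg_sq, neg_div]
  simp only [heq] at h
  rw [intervalIntegral.integral_neg] at h
  linarith [h]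

private lemma my_prod (m : ℕ) :
    ∏ i ∈ Finset.range m, ((2*(i:ℝ)+1)/(2*(i:ℝ)+2))
      = (Nat.factorial (2*m) : ℝ) / (4^m * ((Nat.factorial m : ℝ))^2) := by
  induction m with
  | zero => simp
  | succ k ih =>
    rw [Finset.prod_range_succ, ih]
    have h1 : Nat.factorial (2*(k+1)) = (2*k+2)*((2*k+1)*Nat.factorial (2*k)) := by
      have he : 2*(k+1) = (2*k+1)+1 := by ring
      rw [he, Nat.factorial_succ, Nat.factorial_succ]
    rw [h1, Nat.factorial_succ]
    have hk : ((Nat.factorial k : ℝ)) ≠ 0 := Nat.cast_ne_zero.2 (Nat.factorial_ne_zero k)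
    have h2k : ((Nat.factorial (2*k) : ℝ)) ≠ 0 := Nat.cast_ne_zero.2 (Nat.factorial_ne_zero _)
    push_cast
    field_simp
    ring

/-- For `n > 0`,
`S_{n,0}(x) = ∑ (e^{-nx}(nx)^k/k!)² = (1/π) ∫_{-1}^1 e^{-2nx(1+t)} dt/√(1-t²)`. -/
theorem stmt_4 (n : ℝ) (hn : 0 < n) (x : ℝ) (hx : 0 ≤ x) :
    (∑' k : ℕ, (Real.exp (-n * x) * (n * x) ^ k / (k.factorial : ℝ)) ^ 2) =
    (1 / Real.pi) * ∫ t in (-1:ℝ)..1,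
      Real.exp (-2 * n * x * (1 + t)) / Real.sqrt (1 - t ^ 2) := by
  set a : ℝ := 2 * n * x with ha
  have ha0 : 0 ≤ a := by positivity
  set F : ℕ → ℝ → ℝ :=
    fun k t => ((-a)^k / (k.factorial : ℝ)) * (t^k / Real.sqrt (1 - t^2)) with hF
  have hFint : ∀ k, Integrable (F k) (volume.restrict (Ioc (-1:ℝ) 1)) :=
    fun k => ((my_integrableOn k).const_mul _)
  have hS : ∀ k, (∫ t in Ioc (-1:ℝ) 1, ‖F k t‖) ≤ (a^k / (k.factorial : ℝ)) * π := by
    intro k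
    have hg : IntegrableOn
        (fun t : ℝ => (a^k / (k.factorial:ℝ)) * (1 / Real.sqrt (1 - t^2)))
        (Ioc (-1:ℝ) 1) volume := my_intInt_base.1.const_mul _
    have hle : ∀ t ∈ Ioc (-1:ℝ) 1,
        ‖F k t‖ ≤ (a^k / (k.factorial:ℝ)) * (1 / Real.sqrt (1 - t^2)) := by
      intro t ht
      rw [hF, norm_mul]
      have h1 : ‖(-a)^k / (k.factorial : ℝ)‖ = a^k / (k.factorial:ℝ) := by
        rw [norm_div, norm_pow, norm_neg, Real.norm_eq_abs, Real.norm_eq_abs,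
          abs_of_nonneg ha0, abs_of_nonneg (by positivity : (0:ℝ) ≤ (k.factorial:ℝ))]
      rw [h1]
      exact mul_le_mul_of_nonneg_left (my_bound k ht.1.le ht.2) (by positivity)
    calc (∫ t in Ioc (-1:ℝ) 1, ‖F k t‖)
        ≤ ∫ t in Ioc (-1:ℝ) 1, (a^k / (k.factorial:ℝ)) * (1 / Real.sqrt (1 - t^2)) :=
          setIntegral_mono_on ((hFint k).norm) hg measurableSet_Ioc hle
      _ = (a^k / (k.factorial:ℝ)) * ∫ t in Ioc (-1:ℝ) 1, (1 / Real.sqrt (1 - t^2)) :=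
          integral_const_mul _ _
      _ = (a^k / (k.factorial:ℝ)) * π := by
          rw [← intervalIntegral.integral_of_le (by norm_num : (-1:ℝ) ≤ 1), my_integral_base]
  have hSsum : Summable (fun k => ∫ t in Ioc (-1:ℝ) 1, ‖F k t‖) := by
    refine Summable.of_nonneg_of_le (fun k => integral_nonneg fun t => norm_nonneg _) hS ?_
    exact (Real.summable_pow_div_factorial a).mul_right π
  have hswap := MeasureTheory.integral_tsum_of_summable_integral_norm hFint hSsum
  have hpt : ∀ t : ℝ, (∑' k, F k t) = Real.exp (-(a*t)) / Real.sqrt (1 - t^2) := by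
    intro t
    have h1 : ∀ k : ℕ, F k t = ((-(a*t))^k / (k.factorial : ℝ)) / Real.sqrt (1 - t^2) := by
      intro k
      simp only [hF, neg_mul, mul_pow]
      ring
    rw [tsum_congr h1, tsum_div_const]
    congr 1
    rw [Real.exp_eq_exp_ℝ, NormedSpace.exp_eq_tsum_div]
  have hswap' : ∑' k, (∫ t in Ioc (-1:ℝ) 1, F k t)
      = ∫ t in Ioc (-1:ℝ) 1, Real.exp (-(a*t)) / Real.sqrt (1 - t^2) := by
    rw [hswap]
    exact integral_congr_ae (Filter.Eventually.of_forall fun t => hpt t)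
  set c : ℕ → ℝ :=
    fun k => ((-a)^k / (k.factorial : ℝ)) * ∫ t in (-1:ℝ)..1, t^k / Real.sqrt (1 - t^2) with hc
  have hterm : ∀ k, (∫ t in Ioc (-1:ℝ) 1, F k t) = c k := by
    intro k
    simp only [hF, hc]
    rw [integral_const_mul, intervalIntegral.integral_of_le (by norm_num : (-1:ℝ) ≤ 1)]
  have hcsum : Summable c := by
    refine Summable.of_norm_bounded hSsum fun k => ?_
    rw [← hterm k]
    exact norm_integral_le_integral_norm _
  have hodd0 : ∀ m, c (2*m+1) = 0 := by
    intro m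
    simp only [hc]
    simp [my_integral_odd m]
  have hoddsum : Summable (fun m => c (2*m+1)) :=
    summable_zero.congr fun m => (hodd0 m).symm
  have hevensum : Summable (fun m => c (2*m)) :=
    hcsum.comp_injective fun p q h => by omega
  have hteo : ∑' m, c (2*m) = ∑' k, c k := by
    rw [← tsum_even_add_odd hevensum hoddsum, tsum_congr hodd0, tsum_zero, add_zero]
  have hval : (∫ t in (-1:ℝ)..1, Real.exp (-(a*t)) / Real.sqrt (1 - t^2)) = ∑' k, c k := by
    rw [intervalIntegral.integral_of_le (by norm_num : (-1:ℝ) ≤ 1), ← hswap']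
    exact tsum_congr fun k => hterm k
  have hfac2 : ∀ k : ℕ, ((Nat.factorial (2*k) : ℝ)) ≠ 0 :=
    fun k => Nat.cast_ne_zero.2 (Nat.factorial_ne_zero _)
  have hc2 : ∀ k : ℕ, c (2*k) = π * (a^(2*k) / (4^k * ((k.factorial:ℝ))^2)) := by
    intro k
    simp only [hc]
    rw [my_integral_even k, my_prod k, Even.neg_pow (even_two_mul k)]
    field_simp
  have hterm2 : ∀ k : ℕ,
      (Real.exp (-n * x) * (n * x) ^ k / (k.factorial : ℝ)) ^ 2
        = (Real.exp (-a)/π) * c (2*k) := by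
    intro k
    rw [hc2 k]
    have haa : a^(2*k) = 4^k * (n*x)^(2*k) := by
      rw [ha, show 2*n*x = 2*(n*x) by ring, mul_pow, pow_mul]
      norm_num
    rw [haa]
    have hexp2 : Real.exp (-n*x) * Real.exp (-n*x) = Real.exp (-a) := by
      rw [← Real.exp_add, ha]
      ring_nf
    have hfk : ((k.factorial:ℝ)) ≠ 0 := Nat.cast_ne_zero.2 (Nat.factorial_ne_zero _)
    have h4 : ((4:ℝ)^k) ≠ 0 := by positivity
    field_simp [Real.pi_ne_zero]
    rw [← hexp2]
    ring
  calc (∑' k : ℕ, (Real.exp (-n * x) * (n * x) ^ k / (k.factorial : ℝ)) ^ 2)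
      = ∑' k : ℕ, (Real.exp (-a)/π) * c (2*k) := tsum_congr hterm2
    _ = (Real.exp (-a)/π) * ∑' k : ℕ, c (2*k) := tsum_mul_left
    _ = (Real.exp (-a)/π) * ∑' k : ℕ, c k := by rw [hteo]
    _ = (1 / Real.pi) * ∫ t in (-1:ℝ)..1,
          Real.exp (-2 * n * x * (1 + t)) / Real.sqrt (1 - t ^ 2) := by
        have hint : (∫ t in (-1:ℝ)..1,
            Real.exp (-2 * n * x * (1 + t)) / Real.sqrt (1 - t ^ 2))
            = Real.exp (-a) * ∫ t in (-1:ℝ)..1,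
              Real.exp (-(a*t)) / Real.sqrt (1 - t^2) := by
          rw [← intervalIntegral.integral_const_mul]
          refine intervalIntegral.integral_congr fun t _ => ?_
          have harg : -2 * n * x * (1 + t) = (-a) + (-(a*t)) := by rw [ha]; ring
          rw [harg, Real.exp_add, mul_div_assoc]
        rw [hint, hval]
        ring
end

section
/- Let $c>0$ and $n>c$ be real numbers, and define $S(x)=\sum_{k=0}^{\infty}\left(\frac{(n/c)_k}{k!}(cx)^k(1+cx)^{-n/c-k}\right)^2$ for $x\ge0$, where $(a)_k$ is the ascending Pochhammer symbol. Then $S$ is twice differentiable on $(0,\infty)$ and for every $x>0$, $x(1+cx)(1+2cx)\,S''(x)+\big(4(n+c)x(1+cx)+1\big)S'(x)+2n(1+2cx)\,S(x)=0$. -/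
open scoped BigOperators


namespace Stmt5Aux

noncomputable def A (ν : ℝ) (k : ℕ) : ℝ :=
  ((ascPochhammer ℝ k).eval ν / (k.factorial : ℝ)) ^ 2
noncomputable def F (c ν : ℝ) (k : ℕ) (x : ℝ) : ℝ :=
  A ν k * ((c*x) ^ (2*(k:ℝ)) * (1+c*x) ^ (-2*ν-2*(k:ℝ)))
noncomputable def F1 (c ν : ℝ) (k : ℕ) (x : ℝ) : ℝ :=
  A ν k * (2*c) * ((c*x) ^ (2*(k:ℝ)-1) * (1+c*x) ^ (-2*ν-2*(k:ℝ)-1)) * ((k:ℝ) - ν*(c*x))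
noncomputable def F2 (c ν : ℝ) (k : ℕ) (x : ℝ) : ℝ :=
  A ν k * c^2 * ((c*x) ^ (2*(k:ℝ)-2) * (1+c*x) ^ (-2*ν-2*(k:ℝ)-2)) *
    ((4*(k:ℝ)^2-2*(k:ℝ)) - (8*(k:ℝ)*ν+4*(k:ℝ))*(c*x) + 2*ν*(2*ν+1)*(c*x)^2)
noncomputable def G (c ν : ℝ) (k : ℕ) (x : ℝ) : ℝ :=
  (k:ℝ)^2 * A ν k * ((c*x) ^ (2*(k:ℝ)-1) * (1+c*x) ^ (-2*ν-2*(k:ℝ)))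
noncomputable def CC (c ν a b : ℝ) (j i : ℝ) : ℝ :=
  (max ((c*a)^j) ((c*b)^j)) * (max ((1+c*a)^(-2*ν+i)) ((1+c*b)^(-2*ν+i)))
noncomputable def QQ (c b : ℝ) : ℝ := ((c*b)/(1+c*b))^2

lemma A_nonneg (ν : ℝ) (k : ℕ) : 0 ≤ A ν k := sq_nonneg _

lemma hasDerivAt_prod (c : ℝ) (hc : 0 < c) (p q : ℝ) {x : ℝ} (hx : 0 < x) :
    HasDerivAt (fun y => (c*y) ^ p * (1+c*y) ^ q)
      (p * (c*x)^(p-1) * c * (1+c*x)^q + (c*x)^p * (q * (1+c*x)^(q-1) * c)) x := by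
  have hm : HasDerivAt (fun y : ℝ => c*y) c x := by
    simpa using (hasDerivAt_id x).const_mul c
  have ha : HasDerivAt (fun y : ℝ => 1+c*y) c x := by
    simpa using hm.const_add 1
  have h1 : HasDerivAt (fun y : ℝ => (c*y) ^ p) (p * (c*x)^(p-1) * c) x := by
    have := (Real.hasDerivAt_rpow_const (x := c*x) (p := p)
      (Or.inl (by positivity))).comp x hm
    exact this
  have h2 : HasDerivAt (fun y : ℝ => (1+c*y) ^ q) (q * (1+c*x)^(q-1) * c) x := by
    have := (Real.hasDerivAt_rpow_const (x := 1+c*x) (p := q)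
      (Or.inl (by positivity))).comp x ha
    exact this
  exact h1.mul h2

lemma rpow_shift {t : ℝ} (ht : 0 < t) (a b : ℝ) : t ^ a = t ^ (a - b) * t ^ b := by
  rw [← Real.rpow_add ht]; ring_nf

lemma hasDerivAt_F (c ν : ℝ) (hc : 0 < c) (k : ℕ) {x : ℝ} (hx : 0 < x) :
    HasDerivAt (F c ν k) (F1 c ν k x) x := by
  have ht : 0 < c*x := by positivity
  have hs : 0 < 1+c*x := by positivity
  have h := (hasDerivAt_prod c hc (2*(k:ℝ)) (-2*ν-2*(k:ℝ)) hx).const_mul (A ν k)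
  refine h.congr_deriv ?_
  simp only [F1]
  rw [rpow_shift ht (2*(k:ℝ)) 1, rpow_shift hs (-2*ν-2*(k:ℝ)) 1, Real.rpow_one, Real.rpow_one]
  ring_nf

lemma hasDerivAt_F1 (c ν : ℝ) (hc : 0 < c) (k : ℕ) {x : ℝ} (hx : 0 < x) :
    HasDerivAt (F1 c ν k) (F2 c ν k x) x := by
  have ht : 0 < c*x := by positivity
  have hs : 0 < 1+c*x := by positivity
  have hm : HasDerivAt (fun y : ℝ => (k:ℝ) - ν*(c*y)) (-(ν*c)) x := by
    simpa [mul_assoc] using ((hasDerivAt_id x).const_mul (ν*c)).const_sub (k:ℝ)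
  have h := ((hasDerivAt_prod c hc (2*(k:ℝ)-1) (-2*ν-2*(k:ℝ)-1) hx).mul hm).const_mul
      (A ν k * (2*c))
  refine HasDerivAt.congr_deriv (h.congr_of_eventuallyEq (Filter.Eventually.of_forall fun y => by simp only [F1, Pi.mul_apply]; ring)) ?_
  simp only [F2]
  rw [rpow_shift ht (2*(k:ℝ)-1) 1, rpow_shift hs (-2*ν-2*(k:ℝ)-1) 1, Real.rpow_one, Real.rpow_one,
    show (2*(k:ℝ)-1)-1 = 2*(k:ℝ)-2 by ring, show (-2*ν-2*(k:ℝ)-1)-1 = -2*ν-2*(k:ℝ)-2 by ring]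
  ring_nf

lemma A_succ (ν : ℝ) (k : ℕ) :
    ((k:ℝ)+1)^2 * A ν (k+1) = (ν+(k:ℝ))^2 * A ν k := by
  simp only [A, ascPochhammer_succ_right, Polynomial.eval_mul, Polynomial.eval_add,
    Polynomial.eval_X, Polynomial.eval_natCast, Nat.factorial_succ, Nat.cast_mul,
    Nat.cast_add, Nat.cast_one]
  have hk : ((k:ℝ)+1) ≠ 0 := by positivity
  field_simp

lemma key (c ν : ℝ) (hc : 0 < c) (k : ℕ) {x : ℝ} (hx : 0 < x) :
    x * (1+c*x) * (1+2*c*x) * F2 c ν k x +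
      (4*(c*ν+c)*x*(1+c*x)+1) * F1 c ν k x +
      2*(c*ν)*(1+2*c*x) * F c ν k x
    = 4*c*(1+c*x) * (G c ν k x - G c ν (k+1) x) := by
  have ht : 0 < c*x := by positivity
  have hs : 0 < 1+c*x := by positivity
  have e1 : (c*x) ^ (2*(k:ℝ)-1) = (c*x) ^ (2*(k:ℝ)-2) * (c*x) := by
    rw [rpow_shift ht (2*(k:ℝ)-1) 1, Real.rpow_one,
      show (2*(k:ℝ)-1)-1 = 2*(k:ℝ)-2 by ring]
  have e2 : (c*x) ^ (2*(k:ℝ)) = (c*x) ^ (2*(k:ℝ)-2) * ((c*x)*(c*x)) := by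
    rw [rpow_shift ht (2*(k:ℝ)) 2, show (2*(k:ℝ))-2 = 2*(k:ℝ)-2 by ring,
      show ((2:ℝ)) = ((2:ℕ):ℝ) by norm_num, Real.rpow_natCast]
    ring
  have e3 : (c*x) ^ (2*((k:ℝ)+1)-1) = (c*x) ^ (2*(k:ℝ)-2) * ((c*x)*(c*x)*(c*x)) := by
    rw [rpow_shift ht (2*((k:ℝ)+1)-1) 3, show (2*((k:ℝ)+1)-1)-3 = 2*(k:ℝ)-2 by ring,
      show ((3:ℝ)) = ((3:ℕ):ℝ) by norm_num, Real.rpow_natCast]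
    ring
  have f1 : (1+c*x) ^ (-2*ν-2*(k:ℝ)-1) = (1+c*x) ^ (-2*ν-2*(k:ℝ)-2) * (1+c*x) := by
    rw [rpow_shift hs (-2*ν-2*(k:ℝ)-1) 1, Real.rpow_one,
      show (-2*ν-2*(k:ℝ)-1)-1 = -2*ν-2*(k:ℝ)-2 by ring]
  have f2 : (1+c*x) ^ (-2*ν-2*(k:ℝ)) = (1+c*x) ^ (-2*ν-2*(k:ℝ)-2) * ((1+c*x)*(1+c*x)) := by
    rw [rpow_shift hs (-2*ν-2*(k:ℝ)) 2, show (-2*ν-2*(k:ℝ))-2 = -2*ν-2*(k:ℝ)-2 by ring,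
      show ((2:ℝ)) = ((2:ℕ):ℝ) by norm_num, Real.rpow_natCast]
    ring
  have f3 : (-2*ν-2*((k:ℝ)+1)) = -2*ν-2*(k:ℝ)-2 := by ring
  have hG : G c ν (k+1) x = (ν+(k:ℝ))^2 * A ν k *
      ((c*x) ^ (2*(k:ℝ)-2) * ((c*x)*(c*x)*(c*x)) * (1+c*x) ^ (-2*ν-2*(k:ℝ)-2)) := by
    simp only [G]
    push_cast
    rw [e3, f3]
    linear_combination ((c*x) ^ (2*(k:ℝ)-2) * ((c*x)*(c*x)*(c*x)) *
      (1+c*x) ^ (-2*ν-2*(k:ℝ)-2)) * A_succ ν k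
  rw [hG]
  simp only [F, F1, F2, G]
  rw [e1, e2, f1, f2]
  ring

lemma poch_le (ν : ℝ) (hν : 0 < ν) (m : ℕ) (hm : ν ≤ m) (k : ℕ) :
    0 ≤ (ascPochhammer ℝ k).eval ν ∧
      (ascPochhammer ℝ k).eval ν / (k.factorial : ℝ) ≤ ((k:ℝ)+1)^m := by
  induction k with
  | zero => simp
  | succ k ih =>
    obtain ⟨h0, hb⟩ := ih
    have hk1 : (0:ℝ) < (k:ℝ)+1 := by positivity
    have heval : (ascPochhammer ℝ (k+1)).eval ν = (ascPochhammer ℝ k).eval ν * (ν + k) := by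
      simp [ascPochhammer_succ_right]
    constructor
    · rw [heval]; exact mul_nonneg h0 (by positivity)
    · rw [heval, Nat.factorial_succ]
      push_cast
      have key : ((k:ℝ)+1)^m * ((m:ℝ)+(k:ℝ)) ≤ ((k:ℝ)+1+1)^m * ((k:ℝ)+1) := by
        have hB : 1 + (m:ℝ) * (1/((k:ℝ)+1)) ≤ (1 + 1/((k:ℝ)+1))^m := by
          apply one_add_mul_le_pow
          have : (0:ℝ) < 1/((k:ℝ)+1) := by positivity
          linarith
        have hmul : ((k:ℝ)+1)^m * ((1 + 1/((k:ℝ)+1))^m) = ((k:ℝ)+1+1)^m := by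
          rw [← mul_pow]; congr 1; field_simp
        calc ((k:ℝ)+1)^m * ((m:ℝ)+(k:ℝ))
            ≤ ((k:ℝ)+1)^m * ((1 + (m:ℝ)*(1/((k:ℝ)+1))) * ((k:ℝ)+1)) := by
              apply mul_le_mul_of_nonneg_left _ (by positivity)
              rw [add_mul, one_mul, mul_assoc, one_div_mul_cancel (ne_of_gt hk1)]
              linarith
          _ ≤ ((k:ℝ)+1)^m * ((1 + 1/((k:ℝ)+1))^m * ((k:ℝ)+1)) := by
              apply mul_le_mul_of_nonneg_left _ (by positivity)
              exact mul_le_mul_of_nonneg_right hB (le_of_lt hk1)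
          _ = ((k:ℝ)+1+1)^m * ((k:ℝ)+1) := by rw [← mul_assoc, hmul]
      have hfac : (0:ℝ) < (k.factorial : ℝ) := by positivity
      rw [div_le_iff₀ (by positivity)]
      have h1 : (ascPochhammer ℝ k).eval ν * (ν + (k:ℝ)) ≤
          (((k:ℝ)+1)^m * (k.factorial:ℝ)) * ((m:ℝ)+(k:ℝ)) := by
        apply mul_le_mul
        · rw [← div_le_iff₀ hfac]; exact hb
        · linarith
        · positivity
        · positivity
      calc (ascPochhammer ℝ k).eval ν * (ν + (k:ℝ))
          ≤ (((k:ℝ)+1)^m * (k.factorial:ℝ)) * ((m:ℝ)+(k:ℝ)) := h1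
        _ = (((k:ℝ)+1)^m * ((m:ℝ)+(k:ℝ))) * (k.factorial:ℝ) := by ring
        _ ≤ (((k:ℝ)+1+1)^m * ((k:ℝ)+1)) * (k.factorial:ℝ) :=
            mul_le_mul_of_nonneg_right key (le_of_lt hfac)
        _ = ((k:ℝ)+1+1)^m * (((k:ℝ)+1) * (k.factorial:ℝ)) := by ring

lemma A_le (ν : ℝ) (hν : 0 < ν) (m : ℕ) (hm : ν ≤ m) (k : ℕ) :
    A ν k ≤ ((k:ℝ)+1)^(2*m) := by
  have h := poch_le ν hν m hm k
  have h2 : (((k:ℝ)+1)^m)^2 = ((k:ℝ)+1)^(2*m) := by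
    rw [← pow_mul]; ring_nf
  rw [A, ← h2]
  apply sq_le_sq'
  · have h3 : 0 ≤ (ascPochhammer ℝ k).eval ν / (k.factorial : ℝ) :=
      div_nonneg h.1 (by positivity)
    have h4 : (0:ℝ) ≤ ((k:ℝ)+1)^m := by positivity
    linarith
  · exact h.2

lemma summable_master (p : ℕ) (Q : ℝ) (h0 : 0 ≤ Q) (h : Q < 1) :
    Summable fun k : ℕ => ((k:ℝ)+1)^p * Q^k := by
  have h1 : Summable fun k : ℕ => ((k:ℝ))^p * Q^k :=
    summable_pow_mul_geometric_of_norm_lt_one p (by rwa [Real.norm_eq_abs, abs_of_nonneg h0])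
  rcases eq_or_lt_of_le h0 with rfl|hQ
  · apply summable_of_ne_finset_zero (s := {0})
    intro k hk
    simp only [Finset.mem_singleton] at hk
    rw [zero_pow hk, mul_zero]
  · have := ((summable_nat_add_iff 1).mpr h1).mul_right Q⁻¹
    apply Summable.congr this
    intro k
    push_cast
    rw [pow_succ]
    field_simp

lemma pow_pair_bound (c ν a b : ℝ) (hc : 0 < c) (ha : 0 < a) (j i : ℝ) (k : ℕ)
    {y : ℝ} (hy : y ∈ Set.Icc a b) :
    (c*y) ^ (2*(k:ℝ)+j) * (1+c*y) ^ (-2*ν-2*(k:ℝ)+i) ≤ CC c ν a b j i * (QQ c b)^k := by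
  obtain ⟨hya, hyb⟩ := hy
  have hy0 : 0 < y := lt_of_lt_of_le ha hya
  have ht : 0 < c*y := by positivity
  have hs : 0 < 1+c*y := by positivity
  have hta : c*a ≤ c*y := by nlinarith
  have htb : c*y ≤ c*b := by nlinarith
  have hsb : 1+c*y ≤ 1+c*b := by linarith
  have hsa : (0:ℝ) < 1+c*a := by positivity
  have hsa' : 1+c*a ≤ 1+c*y := by linarith
  have e1 : (c*y) ^ (2*(k:ℝ)+j) = (c*y)^(2*k) * (c*y)^j := by
    rw [Real.rpow_add ht]
    congr 1
    rw [show 2*(k:ℝ) = ((2*k:ℕ):ℝ) by push_cast; ring, Real.rpow_natCast]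
  have e2 : (1+c*y) ^ (-2*ν-2*(k:ℝ)+i) = (1+c*y)^(-2*ν+i) * ((1+c*y)^(2*k))⁻¹ := by
    rw [show -2*ν-2*(k:ℝ)+i = (-2*ν+i) + (-((2*k:ℕ):ℝ)) by push_cast; ring,
      Real.rpow_add hs, Real.rpow_neg (le_of_lt hs), Real.rpow_natCast]
  rw [e1, e2, CC, QQ]
  have hQ : ((c*y)/(1+c*y))^(2*k) ≤ (((c*b)/(1+c*b))^2)^k := by
    rw [← pow_mul]
    apply pow_le_pow_left₀ (by positivity)
    have hb0 : (0:ℝ) < 1+c*b := by nlinarith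
    rw [div_le_div_iff₀ hs hb0]
    nlinarith
  have hD : (c*y)^j ≤ max ((c*a)^j) ((c*b)^j) := by
    rcases le_total 0 j with hj | hj
    · exact le_max_of_le_right (Real.rpow_le_rpow (le_of_lt ht) htb hj)
    · exact le_max_of_le_left (Real.rpow_le_rpow_of_nonpos (by positivity) hta hj)
  have hE : (1+c*y)^(-2*ν+i) ≤ max ((1+c*a)^(-2*ν+i)) ((1+c*b)^(-2*ν+i)) := by
    rcases le_total 0 (-2*ν+i) with hj | hj
    · exact le_max_of_le_right (Real.rpow_le_rpow (le_of_lt hs) hsb hj)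
    · exact le_max_of_le_left (Real.rpow_le_rpow_of_nonpos hsa hsa' hj)
  have harr : (c*y)^(2*k) * (c*y)^j * ((1+c*y)^(-2*ν+i) * ((1+c*y)^(2*k))⁻¹)
      = ((c*y)/(1+c*y))^(2*k) * ((c*y)^j * (1+c*y)^(-2*ν+i)) := by
    rw [div_pow]; field_simp
  rw [harr]
  have h2 : (0:ℝ) ≤ (c*y)^j * (1+c*y)^(-2*ν+i) := by positivity
  calc ((c*y)/(1+c*y))^(2*k) * ((c*y)^j * (1+c*y)^(-2*ν+i))
      ≤ (((c*b)/(1+c*b))^2)^k * ((max ((c*a)^j) ((c*b)^j)) *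
          (max ((1+c*a)^(-2*ν+i)) ((1+c*b)^(-2*ν+i)))) := by
        apply mul_le_mul hQ _ h2 (by positivity)
        apply mul_le_mul hD hE (by positivity) (le_trans (Real.rpow_nonneg (le_of_lt ht) j) hD)
    _ = _ := by ring

lemma CC_pos (c ν a b : ℝ) (hc : 0 < c) (ha : 0 < a) (j i : ℝ) : 0 < CC c ν a b j i := by
  rw [CC]
  apply mul_pos
  · exact lt_of_lt_of_le (Real.rpow_pos_of_pos (by positivity) j) (le_max_left _ _)
  · exact lt_of_lt_of_le (Real.rpow_pos_of_pos (by positivity) (-2*ν+i)) (le_max_left _ _)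

lemma QQ_mem (c b : ℝ) (hc : 0 < c) (hb : 0 < b) : 0 ≤ QQ c b ∧ QQ c b < 1 := by
  have h1 : (0:ℝ) < 1+c*b := by positivity
  constructor
  · rw [QQ]; positivity
  · rw [QQ]
    have : (c*b)/(1+c*b) < 1 := by rw [div_lt_one h1]; linarith
    nlinarith [div_nonneg (le_of_lt (by positivity : (0:ℝ) < c*b)) (le_of_lt h1)]


section Bounds
variable {c ν a b : ℝ} {m : ℕ}

lemma bound_F (hc : 0 < c) (hν : 0 < ν) (hm : ν ≤ m) (ha : 0 < a) (k : ℕ)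
    {y : ℝ} (hy : y ∈ Set.Icc a b) :
    ‖F c ν k y‖ ≤ CC c ν a b 0 0 * (((k:ℝ)+1)^(2*m+2) * (QQ c b)^k) := by
  have hy0 : 0 < y := lt_of_lt_of_le ha hy.1
  have hpair := pow_pair_bound c ν a b hc ha 0 0 k hy
  rw [show 2*(k:ℝ)+0 = 2*(k:ℝ) by ring, show -2*ν-2*(k:ℝ)+0 = -2*ν-2*(k:ℝ) by ring] at hpair
  have hp0 : (0:ℝ) ≤ (c*y) ^ (2*(k:ℝ)) * (1+c*y) ^ (-2*ν-2*(k:ℝ)) := by positivity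
  have hQ0 : (0:ℝ) ≤ QQ c b := by rw [QQ]; positivity
  have hCC := le_of_lt (CC_pos c ν a b hc ha 0 0)
  rw [F, Real.norm_eq_abs, abs_mul, abs_of_nonneg (A_nonneg ν k), abs_of_nonneg hp0]
  calc A ν k * ((c*y) ^ (2*(k:ℝ)) * (1+c*y) ^ (-2*ν-2*(k:ℝ)))
      ≤ ((k:ℝ)+1)^(2*m) * (CC c ν a b 0 0 * (QQ c b)^k) :=
        mul_le_mul (A_le ν hν m hm k) hpair hp0 (by positivity)
    _ = CC c ν a b 0 0 * (((k:ℝ)+1)^(2*m) * (QQ c b)^k) := by ring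
    _ ≤ CC c ν a b 0 0 * (((k:ℝ)+1)^(2*m+2) * (QQ c b)^k) := by
        gcongr
        · linarith [Nat.cast_nonneg (α := ℝ) k]
        · omega

lemma bound_G (hc : 0 < c) (hν : 0 < ν) (hm : ν ≤ m) (ha : 0 < a) (k : ℕ)
    {y : ℝ} (hy : y ∈ Set.Icc a b) :
    ‖G c ν k y‖ ≤ CC c ν a b (-1) 0 * (((k:ℝ)+1)^(2*m+2) * (QQ c b)^k) := by
  have hy0 : 0 < y := lt_of_lt_of_le ha hy.1
  have hpair := pow_pair_bound c ν a b hc ha (-1) 0 k hy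
  rw [show 2*(k:ℝ)+(-1) = 2*(k:ℝ)-1 by ring,
    show -2*ν-2*(k:ℝ)+0 = -2*ν-2*(k:ℝ) by ring] at hpair
  have hp0 : (0:ℝ) ≤ (c*y) ^ (2*(k:ℝ)-1) * (1+c*y) ^ (-2*ν-2*(k:ℝ)) := by positivity
  have hQ0 : (0:ℝ) ≤ QQ c b := by rw [QQ]; positivity
  have hA2 : (k:ℝ)^2 * A ν k ≤ ((k:ℝ)+1)^2 * ((k:ℝ)+1)^(2*m) := by
    apply mul_le_mul _ (A_le ν hν m hm k) (A_nonneg ν k) (by positivity)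
    nlinarith [Nat.cast_nonneg (α := ℝ) k]
  rw [G, Real.norm_eq_abs, abs_mul, abs_of_nonneg hp0,
    abs_of_nonneg (mul_nonneg (sq_nonneg _) (A_nonneg ν k))]
  calc (k:ℝ)^2 * A ν k * ((c*y) ^ (2*(k:ℝ)-1) * (1+c*y) ^ (-2*ν-2*(k:ℝ)))
      ≤ (((k:ℝ)+1)^2 * ((k:ℝ)+1)^(2*m)) * (CC c ν a b (-1) 0 * (QQ c b)^k) :=
        mul_le_mul hA2 hpair hp0 (by positivity)
    _ = CC c ν a b (-1) 0 * (((k:ℝ)+1)^(2*m+2) * (QQ c b)^k) := by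
        rw [pow_add]; ring

lemma bound_F1 (hc : 0 < c) (hν : 0 < ν) (hm : ν ≤ m) (ha : 0 < a) (hb : 0 < b) (k : ℕ)
    {y : ℝ} (hy : y ∈ Set.Icc a b) :
    ‖F1 c ν k y‖ ≤ (2*c*CC c ν a b (-1) (-1)*(1+ν*(c*b))) *
      (((k:ℝ)+1)^(2*m+2) * (QQ c b)^k) := by
  have hy0 : 0 < y := lt_of_lt_of_le ha hy.1
  have hyb : y ≤ b := hy.2
  have hpair := pow_pair_bound c ν a b hc ha (-1) (-1) k hy
  rw [show 2*(k:ℝ)+(-1) = 2*(k:ℝ)-1 by ring,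
    show -2*ν-2*(k:ℝ)+(-1) = -2*ν-2*(k:ℝ)-1 by ring] at hpair
  have hp0 : (0:ℝ) ≤ (c*y) ^ (2*(k:ℝ)-1) * (1+c*y) ^ (-2*ν-2*(k:ℝ)-1) := by positivity
  have hQ0 : (0:ℝ) ≤ QQ c b := by rw [QQ]; positivity
  have hCC := le_of_lt (CC_pos c ν a b hc ha (-1) (-1))
  have hcy : 0 < c*y := by positivity
  have hcyb : c*y ≤ c*b := by nlinarith
  have hνcy : ν*(c*y) ≤ ν*(c*b) := by nlinarith
  have hlin : |(k:ℝ) - ν*(c*y)| ≤ ((k:ℝ)+1)*(1+ν*(c*b)) := by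
    have hk0 : (0:ℝ) ≤ (k:ℝ) := Nat.cast_nonneg k
    have hνb : 0 ≤ ν*(c*b) := by nlinarith
    rw [abs_le]
    constructor
    · nlinarith
    · nlinarith
  rw [F1, Real.norm_eq_abs, abs_mul, abs_mul, abs_mul,
    abs_of_nonneg (A_nonneg ν k), abs_of_nonneg hp0, abs_of_nonneg (by positivity : (0:ℝ) ≤ 2*c)]
  calc A ν k * (2*c) * ((c*y) ^ (2*(k:ℝ)-1) * (1+c*y) ^ (-2*ν-2*(k:ℝ)-1)) * |(k:ℝ) - ν*(c*y)|
      ≤ (((k:ℝ)+1)^(2*m) * (2*c)) * (CC c ν a b (-1) (-1) * (QQ c b)^k) *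
          (((k:ℝ)+1)*(1+ν*(c*b))) := by
        apply mul_le_mul _ hlin (abs_nonneg _) (by positivity)
        apply mul_le_mul _ hpair hp0 (by positivity)
        exact mul_le_mul_of_nonneg_right (A_le ν hν m hm k) (by positivity)
    _ = (2*c*CC c ν a b (-1) (-1)*(1+ν*(c*b))) *
          ((((k:ℝ)+1)^(2*m) * ((k:ℝ)+1)) * (QQ c b)^k) := by ring
    _ ≤ (2*c*CC c ν a b (-1) (-1)*(1+ν*(c*b))) *
          (((k:ℝ)+1)^(2*m+2) * (QQ c b)^k) := by
        have hk1 : (1:ℝ) ≤ (k:ℝ)+1 := by linarith [Nat.cast_nonneg (α := ℝ) k]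
        have : ((k:ℝ)+1)^(2*m) * ((k:ℝ)+1) ≤ ((k:ℝ)+1)^(2*m+2) := by
          calc ((k:ℝ)+1)^(2*m) * ((k:ℝ)+1) = ((k:ℝ)+1)^(2*m+1) := by rw [pow_succ]
            _ ≤ ((k:ℝ)+1)^(2*m+2) := pow_le_pow_right₀ hk1 (by omega)
        gcongr
    
lemma bound_F2 (hc : 0 < c) (hν : 0 < ν) (hm : ν ≤ m) (ha : 0 < a) (hb : 0 < b) (k : ℕ)
    {y : ℝ} (hy : y ∈ Set.Icc a b) :
    ‖F2 c ν k y‖ ≤ (c^2*CC c ν a b (-2) (-2)*(6+(8*ν+4)*(c*b)+2*ν*(2*ν+1)*(c*b)^2)) *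
      (((k:ℝ)+1)^(2*m+2) * (QQ c b)^k) := by
  have hy0 : 0 < y := lt_of_lt_of_le ha hy.1
  have hyb : y ≤ b := hy.2
  have hpair := pow_pair_bound c ν a b hc ha (-2) (-2) k hy
  rw [show 2*(k:ℝ)+(-2) = 2*(k:ℝ)-2 by ring,
    show -2*ν-2*(k:ℝ)+(-2) = -2*ν-2*(k:ℝ)-2 by ring] at hpair
  have hp0 : (0:ℝ) ≤ (c*y) ^ (2*(k:ℝ)-2) * (1+c*y) ^ (-2*ν-2*(k:ℝ)-2) := by positivity
  have hQ0 : (0:ℝ) ≤ QQ c b := by rw [QQ]; positivity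
  have hCC := le_of_lt (CC_pos c ν a b hc ha (-2) (-2))
  have hk0 : (0:ℝ) ≤ (k:ℝ) := Nat.cast_nonneg k
  have hcy : 0 < c*y := by positivity
  have hcyb : c*y ≤ c*b := by nlinarith
  have hlin : |(4*(k:ℝ)^2-2*(k:ℝ)) - (8*(k:ℝ)*ν+4*(k:ℝ))*(c*y) + 2*ν*(2*ν+1)*(c*y)^2| ≤
      ((k:ℝ)+1)^2*(6+(8*ν+4)*(c*b)+2*ν*(2*ν+1)*(c*b)^2) := by
    have h1 : (8*(k:ℝ)*ν+4*(k:ℝ))*(c*y) ≤ (8*(k:ℝ)*ν+4*(k:ℝ))*(c*b) :=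
      mul_le_mul_of_nonneg_left hcyb (by positivity)
    have h3 : (k:ℝ) ≤ ((k:ℝ)+1)^2 := by nlinarith
    have h4 : (k:ℝ)^2 ≤ ((k:ℝ)+1)^2 := by nlinarith
    have h5 : (0:ℝ) ≤ 2*ν*(2*ν+1) := by nlinarith
    have h6 : (8*(k:ℝ)*ν+4*(k:ℝ))*(c*b) ≤ ((k:ℝ)+1)^2*((8*ν+4)*(c*b)) := by
      have := mul_le_mul_of_nonneg_right h3 (by positivity : (0:ℝ) ≤ (8*ν+4)*(c*b))
      nlinarith
    have h7 : (0:ℝ) ≤ 2*ν*(2*ν+1)*(c*y)^2 := by positivity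
    have h8 : 2*ν*(2*ν+1)*(c*y)^2 ≤ 2*ν*(2*ν+1)*(c*b)^2 :=
      mul_le_mul_of_nonneg_left (pow_le_pow_left₀ hcy.le hcyb 2) h5
    have h9 : 2*ν*(2*ν+1)*(c*b)^2 ≤ ((k:ℝ)+1)^2*(2*ν*(2*ν+1)*(c*b)^2) := by
      nlinarith [mul_le_mul_of_nonneg_right (show (1:ℝ) ≤ ((k:ℝ)+1)^2 by nlinarith)
        (show (0:ℝ) ≤ 2*ν*(2*ν+1)*(c*b)^2 by positivity)]
    have h16 := h1.trans h6
    have h89 := h8.trans h9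
    have h10 : (0:ℝ) ≤ ((k:ℝ)+1)^2*(2*ν*(2*ν+1)*(c*b)^2) := by positivity
    have h11 : (0:ℝ) ≤ ((k:ℝ)+1)^2*((8*ν+4)*(c*b)) := by positivity
    have h0W : (0:ℝ) ≤ (8*(k:ℝ)*ν+4*(k:ℝ))*(c*y) := by positivity
    rw [abs_le]
    constructor
    · linarith [sq_nonneg (k:ℝ), h16, h7, h10]
    · linarith [sq_nonneg (k:ℝ), h89, h0W, h11]
  rw [F2, Real.norm_eq_abs, abs_mul, abs_mul, abs_mul,
    abs_of_nonneg (A_nonneg ν k), abs_of_nonneg hp0, abs_of_nonneg (by positivity : (0:ℝ) ≤ c^2)]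
  calc A ν k * c^2 * ((c*y) ^ (2*(k:ℝ)-2) * (1+c*y) ^ (-2*ν-2*(k:ℝ)-2)) *
        |(4*(k:ℝ)^2-2*(k:ℝ)) - (8*(k:ℝ)*ν+4*(k:ℝ))*(c*y) + 2*ν*(2*ν+1)*(c*y)^2|
      ≤ (((k:ℝ)+1)^(2*m) * c^2) * (CC c ν a b (-2) (-2) * (QQ c b)^k) *
          (((k:ℝ)+1)^2*(6+(8*ν+4)*(c*b)+2*ν*(2*ν+1)*(c*b)^2)) := by
        apply mul_le_mul _ hlin (abs_nonneg _) (by positivity)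
        apply mul_le_mul _ hpair hp0 (by positivity)
        exact mul_le_mul_of_nonneg_right (A_le ν hν m hm k) (by positivity)
    _ = (c^2*CC c ν a b (-2) (-2)*(6+(8*ν+4)*(c*b)+2*ν*(2*ν+1)*(c*b)^2)) *
          (((k:ℝ)+1)^(2*m+2) * (QQ c b)^k) := by
        rw [pow_add]; ring

end Bounds

end Stmt5Aux


open Stmt5Aux in
/-- For `c > 0`, `n > c`, the function `S = S_{n,c}` is twice differentiable on
`(0,∞)` and satisfies `x(1+cx)(1+2cx)S'' + (4(n+c)x(1+cx)+1)S' + 2n(1+2cx)S = 0` there. -/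
theorem stmt_5 (c n : ℝ) (hc : 0 < c) (hn : c < n)
    (S : ℝ → ℝ)
    (hS : ∀ x : ℝ, S x = ∑' k : ℕ,
      ((ascPochhammer ℝ k).eval (n / c) / (k.factorial : ℝ) * (c * x) ^ k *
          (1 + c * x) ^ (-(n / c) - (k : ℝ))) ^ 2) :
    (∀ x : ℝ, 0 < x → DifferentiableAt ℝ S x ∧ DifferentiableAt ℝ (deriv S) x) ∧
    (∀ x : ℝ, 0 < x →
      x * (1 + c * x) * (1 + 2 * c * x) * deriv (deriv S) x +
        (4 * (n + c) * x * (1 + c * x) + 1) * deriv S x +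
        2 * n * (1 + 2 * c * x) * S x = 0) := by
  have hc' : c ≠ 0 := ne_of_gt hc
  have hν1 : 1 < n/c := (one_lt_div hc).mpr hn
  have hν0 : 0 < n/c := by linarith
  have hn_eq : c*(n/c) = n := by field_simp
  set m : ℕ := ⌈n/c⌉₊ with hm_def
  have hm : n/c ≤ (m:ℝ) := Nat.le_ceil _
  -- term equality
  have F_eq_term : ∀ (k : ℕ) {y : ℝ}, 0 < y →
      ((ascPochhammer ℝ k).eval (n/c) / (k.factorial : ℝ) * (c * y) ^ k *
        (1 + c*y) ^ (-(n/c) - (k:ℝ))) ^ 2 = F c (n/c) k y := by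
    intro k y hy
    have hs : 0 < 1+c*y := by positivity
    have h1 : (((c*y):ℝ)^k)^2 = (c*y)^(2*(k:ℝ)) := by
      rw [← pow_mul, ← Real.rpow_natCast (c*y) (k*2)]
      congr 1
      push_cast; ring
    have h2 : ((1+c*y) ^ (-(n/c)-(k:ℝ)))^2 = (1+c*y)^(-2*(n/c)-2*(k:ℝ)) := by
      rw [sq, ← Real.rpow_add hs]
      congr 1; ring
    rw [F, A, mul_pow, mul_pow, h1, h2]
    ring
  have main : ∀ x : ℝ, 0 < x → HasDerivAt S (∑' k, F1 c (n/c) k x) x ∧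
      HasDerivAt (deriv S) (∑' k, F2 c (n/c) k x) x ∧
      S x = ∑' k, F c (n/c) k x := by
    intro x hx
    set a : ℝ := x/2 with ha_def
    set b : ℝ := 2*x with hb_def
    have ha : 0 < a := by rw [ha_def]; linarith
    have hb : 0 < b := by rw [hb_def]; linarith
    have hxI : x ∈ Set.Ioo a b := ⟨by rw [ha_def]; linarith, by rw [hb_def]; linarith⟩
    have hsub : Set.Ioo a b ⊆ Set.Icc a b := Set.Ioo_subset_Icc_self
    have hxIcc : x ∈ Set.Icc a b := hsub hxI
    obtain ⟨hQ0, hQ1⟩ := QQ_mem c b hc hb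
    have hsum : ∀ C : ℝ, Summable (fun k : ℕ => C * (((k:ℝ)+1)^(2*m+2) * (QQ c b)^k)) :=
      fun C => (summable_master (2*m+2) _ hQ0 hQ1).mul_left C
    have hpos : ∀ y ∈ Set.Ioo a b, 0 < y := fun y hy => lt_trans ha hy.1
    -- summability at x
    have sF : Summable (fun k => F c (n/c) k x) :=
      Summable.of_norm_bounded (hsum (CC c (n/c) a b 0 0))
        (fun k => bound_F hc hν0 hm ha k hxIcc)
    have sF1 : Summable (fun k => F1 c (n/c) k x) :=
      Summable.of_norm_bounded (hsum (2*c*CC c (n/c) a b (-1) (-1)*(1+(n/c)*(c*b))))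
        (fun k => bound_F1 hc hν0 hm ha hb k hxIcc)
    have hST : Set.EqOn S (fun z => ∑' k, F c (n/c) k z) (Set.Ioo a b) := by
      intro y hy
      rw [hS y]
      exact tsum_congr fun k => F_eq_term k (hpos y hy)
    have hd1 : ∀ y ∈ Set.Ioo a b,
        HasDerivAt (fun z => ∑' k, F c (n/c) k z) (∑' k, F1 c (n/c) k y) y := by
      intro y hy
      exact hasDerivAt_tsum_of_isPreconnected
        (hsum (2*c*CC c (n/c) a b (-1) (-1)*(1+(n/c)*(c*b)))) isOpen_Ioo isPreconnected_Ioo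
        (fun k z hz => hasDerivAt_F c (n/c) hc k (hpos z hz))
        (fun k z hz => bound_F1 hc hν0 hm ha hb k (hsub hz))
        hxI sF hy
    have hSd : ∀ y ∈ Set.Ioo a b, HasDerivAt S (∑' k, F1 c (n/c) k y) y := fun y hy =>
      (hd1 y hy).congr_of_eventuallyEq
        (Filter.eventuallyEq_of_mem (isOpen_Ioo.mem_nhds hy) hST)
    have hderivS_eq : Set.EqOn (deriv S) (fun z => ∑' k, F1 c (n/c) k z) (Set.Ioo a b) :=
      fun y hy => (hSd y hy).deriv
    have hd2 : HasDerivAt (fun z => ∑' k, F1 c (n/c) k z) (∑' k, F2 c (n/c) k x) x :=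
      hasDerivAt_tsum_of_isPreconnected
        (hsum (c^2*CC c (n/c) a b (-2) (-2)*(6+(8*(n/c)+4)*(c*b)+2*(n/c)*(2*(n/c)+1)*(c*b)^2)))
        isOpen_Ioo isPreconnected_Ioo
        (fun k z hz => hasDerivAt_F1 c (n/c) hc k (hpos z hz))
        (fun k z hz => bound_F2 hc hν0 hm ha hb k (hsub hz))
        hxI sF1 hxI
    have hSdd : HasDerivAt (deriv S) (∑' k, F2 c (n/c) k x) x :=
      hd2.congr_of_eventuallyEq
        (Filter.eventuallyEq_of_mem (isOpen_Ioo.mem_nhds hxI) hderivS_eq)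
    exact ⟨hSd x hxI, hSdd, hST hxI⟩
  constructor
  · exact fun x hx => ⟨((main x hx).1).differentiableAt, ((main x hx).2.1).differentiableAt⟩
  intro x hx
  obtain ⟨h1, h2, hSx⟩ := main x hx
  -- summabilities at x (recreate)
  have ha : (0:ℝ) < x/2 := by linarith
  have hb : (0:ℝ) < 2*x := by linarith
  have hxIcc : x ∈ Set.Icc (x/2) (2*x) := ⟨by linarith, by linarith⟩
  obtain ⟨hQ0, hQ1⟩ := QQ_mem c (2*x) hc hb
  have hsum : ∀ C : ℝ, Summable (fun k : ℕ => C * (((k:ℝ)+1)^(2*m+2) * (QQ c (2*x))^k)) :=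
    fun C => (summable_master (2*m+2) _ hQ0 hQ1).mul_left C
  have sF : Summable (fun k => F c (n/c) k x) :=
    Summable.of_norm_bounded (hsum _) (fun k => bound_F hc hν0 hm ha k hxIcc)
  have sF1 : Summable (fun k => F1 c (n/c) k x) :=
    Summable.of_norm_bounded (hsum _) (fun k => bound_F1 hc hν0 hm ha hb k hxIcc)
  have sF2 : Summable (fun k => F2 c (n/c) k x) :=
    Summable.of_norm_bounded (hsum _) (fun k => bound_F2 hc hν0 hm ha hb k hxIcc)
  have sG : Summable (fun k => G c (n/c) k x) :=
    Summable.of_norm_bounded (hsum _) (fun k => bound_G hc hν0 hm ha k hxIcc)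
  have sG' : Summable (fun k => G c (n/c) (k+1) x) := (summable_nat_add_iff 1).mpr sG
  have key' : ∀ k : ℕ,
      x * (1+c*x) * (1+2*c*x) * F2 c (n/c) k x +
        (4*(n+c)*x*(1+c*x)+1) * F1 c (n/c) k x +
        2*n*(1+2*c*x) * F c (n/c) k x
      = 4*c*(1+c*x) * (G c (n/c) k x - G c (n/c) (k+1) x) := by
    intro k
    have hk := key c (n/c) hc k hx
    rw [hn_eq] at hk
    convert hk using 3 <;> ring
  rw [h2.deriv, h1.deriv, hSx]
  rw [← tsum_mul_left, ← tsum_mul_left, ← tsum_mul_left,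
    ← Summable.tsum_add (sF2.mul_left _) (sF1.mul_left _),
    ← Summable.tsum_add ((sF2.mul_left _).add (sF1.mul_left _)) (sF.mul_left _)]
  rw [tsum_congr key', tsum_mul_left]
  have htel : ∑' k : ℕ, (G c (n/c) k x - G c (n/c) (k+1) x) = 0 := by
    rw [Summable.tsum_sub sG sG']
    have h0 := Summable.tsum_eq_zero_add sG
    have hG0 : G c (n/c) 0 x = 0 := by simp [G]
    rw [hG0, zero_add] at h0
    rw [← h0, sub_self]
  rw [htel, mul_zero]
end

section
/- Let $c>0$ and $n>c$ be real numbers, and define $H(x)=\sum_{k=0}^{\infty}\left(\frac{(n/c)_k}{k!}(-x)^k(1-x)^{-n/c-k}\right)^2$ for $x\le0$ (that is, $H(x)=S_{n,c}(-x/c)$ where $S_{n,c}$ is the sum of squared Baskakov-type fundamental functions). Then $H$ is twice differentiable on $(-\infty,0)$ and for every $x<0$, $H''(x)+\left(\frac{1}{x}+\frac{1}{x-1}+\frac{2n/c}{x-1/2}\right)H'(x)+\frac{(2n/c)x-n/c}{x(x-1)(x-1/2)}\,H(x)=0$; that is, $H$ satisfies the Heun equation with parameters $\alpha=1$, $\beta=2n/c$,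 $\gamma=1$, $\delta=1$, $\epsilon=2n/c$ and accessory parameter $q=n/c$. -/
open scoped BigOperators

set_option maxHeartbeats 16000000

lemma aux_summable_succ_pow_mul_geometric (M : ℕ) {r : ℝ} (hr : |r| < 1) :
    Summable fun k : ℕ => ((k : ℝ) + 1) ^ M * |r| ^ k := by
  have h1 : Summable fun k : ℕ => (2:ℝ)^M * ((k:ℝ)^M * |r|^k) + (2:ℝ)^M * |r|^k := by
    apply Summable.add
    · exact (summable_pow_mul_geometric_of_norm_lt_one M
        (by rwa [Real.norm_eq_abs, abs_abs])).mul_left _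
    · exact (summable_geometric_of_lt_one (abs_nonneg r) hr).mul_left _
  apply h1.of_nonneg_of_le (fun k => by positivity)
  intro k
  have hb : ((k:ℝ)+1)^M ≤ 2^M * (k:ℝ)^M + 2^M := by
    rcases Nat.eq_zero_or_pos k with h | h
    · subst h
      have : (1:ℝ) ≤ 2^M := one_le_pow₀ (by norm_num : (1:ℝ) ≤ 2)
      simp only [Nat.cast_zero, zero_add, one_pow]
      nlinarith [pow_nonneg (le_refl (0:ℝ)) M]
    · have hk1 : (1:ℝ) ≤ (k:ℝ) := by exact_mod_cast h
      have : ((k:ℝ)+1) ≤ 2*(k:ℝ) := by linarith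
      calc ((k:ℝ)+1)^M ≤ (2*(k:ℝ))^M := pow_le_pow_left₀ (by positivity) this M
        _ = 2^M*(k:ℝ)^M := mul_pow 2 _ M
        _ ≤ _ := le_add_of_nonneg_right (by positivity)
  calc ((k:ℝ)+1)^M * |r|^k ≤ (2^M*(k:ℝ)^M + 2^M) * |r|^k :=
        mul_le_mul_of_nonneg_right hb (by positivity)
    _ = _ := by ring

lemma aux_summable_polybound {b : ℕ → ℝ} {C : ℝ} {M : ℕ}
    (hb : ∀ k, |b k| ≤ C * ((k:ℝ)+1)^M) {t : ℝ} (ht : |t| < 1) :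
    Summable fun k => b k * t ^ k := by
  apply Summable.of_norm_bounded
    ((aux_summable_succ_pow_mul_geometric M ht).mul_left C)
  intro k
  rw [Real.norm_eq_abs, abs_mul, abs_pow]
  calc |b k| * |t|^k ≤ (C * ((k:ℝ)+1)^M) * |t|^k :=
        mul_le_mul_of_nonneg_right (hb k) (by positivity)
    _ = _ := by ring

lemma aux_hasDerivAt_powser {b : ℕ → ℝ} {C : ℝ} {M : ℕ}
    (hb : ∀ k, |b k| ≤ C * ((k:ℝ)+1)^M) {t : ℝ} (ht : |t| < 1) :
    HasDerivAt (fun y : ℝ => ∑' k : ℕ, b k * y ^ k)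
      (∑' k : ℕ, (((k:ℕ):ℝ)+1) * b (k+1) * t ^ k) t := by
  have hC : 0 ≤ C := by
    have h0 := hb 0
    have := abs_nonneg (b 0)
    simp only [Nat.cast_zero, zero_add, one_pow, mul_one] at h0
    linarith
  set r : ℝ := (|t| + 1) / 2 with hr_def
  have hrpos : 0 < r := by positivity
  have htr : |t| < r := by rw [hr_def]; linarith [abs_nonneg t]
  have hr1 : r < 1 := by rw [hr_def]; linarith
  have hrabs : |r| < 1 := by rwa [abs_of_pos hrpos]
  -- the bounding sequence
  set u : ℕ → ℝ := fun k => (C/r) * (((k:ℝ)+1)^(M+1) * r^k) with hu_def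
  have hu : Summable u := by
    have h := aux_summable_succ_pow_mul_geometric (M+1) hrabs
    rw [abs_of_pos hrpos] at h
    exact h.mul_left _
  -- bound on derivatives
  have hbound : ∀ (k : ℕ) (y : ℝ), y ∈ Set.Ioo (-r) r →
      ‖b k * ((k:ℝ) * y ^ (k-1))‖ ≤ u k := by
    intro k y hy
    have hyr : |y| ≤ r := by
      rw [abs_le]; exact ⟨hy.1.le, hy.2.le⟩
    rcases k with _ | j
    · simp [hu_def]; positivity
    · have h1 : ‖b (j+1) * (((j+1:ℕ):ℝ) * y ^ j)‖
          = |b (j+1)| * (((j:ℝ)+1) * |y| ^ j) := by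
        rw [norm_mul, Real.norm_eq_abs, Real.norm_eq_abs, abs_mul, abs_pow]
        push_cast
        rw [abs_of_nonneg (by positivity : (0:ℝ) ≤ (j:ℝ)+1)]
      simp only [Nat.add_sub_cancel]
      rw [h1]
      have h2 : |b (j+1)| ≤ C * ((j:ℝ)+2)^M := by
        have h := hb (j+1)
        push_cast at h
        have e : ((j:ℝ)+1+1) = (j:ℝ)+2 := by ring
        rwa [e] at h
      have h3 : |y| ^ j ≤ r ^ j := pow_le_pow_left₀ (abs_nonneg y) hyr j
      have h4 : |b (j+1)| * (((j:ℝ)+1) * |y| ^ j)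
          ≤ (C * ((j:ℝ)+2)^M) * (((j:ℝ)+1) * r ^ j) := by
        apply mul_le_mul h2 (by
          apply mul_le_mul_of_nonneg_left h3 (by positivity)) (by positivity) (by positivity)
      have e2 : u (j+1) = C * ((((j:ℝ)+2)^(M+1)) * r^j) := by
        rw [hu_def]
        push_cast
        have e : ((j:ℝ)+1+1) = (j:ℝ)+2 := by ring
        rw [e, pow_succ r j]
        field_simp
      have h5 : (C * ((j:ℝ)+2)^M) * (((j:ℝ)+1) * r ^ j) ≤ u (j+1) := by
        rw [e2, pow_succ ((j:ℝ)+2) M]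
        have hp : (0:ℝ) ≤ ((j:ℝ)+2)^M := by positivity
        have hrj : (0:ℝ) ≤ r^j := by positivity
        nlinarith [mul_nonneg (mul_nonneg hC hp) hrj]
      linarith
  have htmem : t ∈ Set.Ioo (-r) r := by
    rw [Set.mem_Ioo]
    constructor
    · linarith [neg_abs_le t]
    · linarith [le_abs_self t]
  have key := hasDerivAt_tsum_of_isPreconnected hu isOpen_Ioo isPreconnected_Ioo
    (g := fun (k : ℕ) (y : ℝ) => b k * y ^ k)
    (g' := fun (k : ℕ) (y : ℝ) => b k * ((k:ℝ) * y ^ (k-1)))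
    (fun k y _ => (hasDerivAt_pow k y).const_mul (b k))
    hbound htmem (aux_summable_polybound hb ht) htmem
  -- convert the sum
  have hsum' : Summable (fun k : ℕ => b k * ((k:ℝ) * t ^ (k-1))) :=
    Summable.of_norm_bounded hu (fun k => hbound k t htmem)
  have heq : (∑' k : ℕ, b k * ((k:ℝ) * t ^ (k-1)))
      = ∑' k : ℕ, (((k:ℕ):ℝ)+1) * b (k+1) * t ^ k := by
    rw [Summable.tsum_eq_zero_add hsum']
    simp only [Nat.cast_zero, zero_mul, mul_zero, zero_add, Nat.add_sub_cancel]
    apply tsum_congr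
    intro k
    push_cast
    ring
  rw [heq] at key
  exact key

lemma aux_shift_tsum {t : ℝ} {d : ℕ → ℝ} (h0 : d 0 = 0) (hs : Summable fun k => d k * t^k) :
    ∑' k : ℕ, d k * t^k = t * ∑' k : ℕ, d (k+1) * t^k := by
  rw [Summable.tsum_eq_zero_add hs, h0, zero_mul, zero_add]
  calc ∑' k : ℕ, d (k+1) * t^(k+1) = ∑' k : ℕ, t * (d (k+1) * t^k) := by
        apply tsum_congr; intro k; rw [pow_succ]; ring
    _ = t * ∑' k : ℕ, d (k+1)*t^k := tsum_mul_left

noncomputable def bcf (a : ℝ) (k : ℕ) : ℝ :=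
  ((ascPochhammer ℝ k).eval a / (k.factorial : ℝ))^2

lemma aux_poch_div_le {a : ℝ} (ha : 0 < a) {m : ℕ} (ham : a ≤ m) (k : ℕ) :
    (ascPochhammer ℝ k).eval a / (k.factorial : ℝ) ≤ ((k:ℝ)+1)^m := by
  induction k with
  | zero => simp
  | succ j ih =>
    have hP : 0 < (ascPochhammer ℝ j).eval a := ascPochhammer_pos j a ha
    have hf : (0:ℝ) < (j.factorial : ℝ) := by exact_mod_cast j.factorial_pos
    have hf' : (0:ℝ) < ((j+1).factorial : ℝ) := by exact_mod_cast (j+1).factorial_pos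
    have ih' : (ascPochhammer ℝ j).eval a ≤ ((j:ℝ)+1)^m * (j.factorial:ℝ) :=
      (div_le_iff₀ hf).mp ih
    rw [div_le_iff₀ hf']
    rw [ascPochhammer_succ_eval]
    have hfac : (((j+1).factorial : ℕ) : ℝ) = ((j:ℝ)+1) * (j.factorial : ℝ) := by
      rw [Nat.factorial_succ]; push_cast; ring
    -- Bernoulli: (j+1)^m * (j+1+m) ≤ (j+1) * (j+2)^m
    have hB : ((j:ℝ)+1)^m * ((j:ℝ)+1+m) ≤ ((j:ℝ)+1) * ((j:ℝ)+2)^m := by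
      have hb1 : (1:ℝ) + m * (1/((j:ℝ)+1)) ≤ (1 + 1/((j:ℝ)+1))^m := by
        apply one_add_mul_le_pow
        have : (0:ℝ) < 1/((j:ℝ)+1) := by positivity
        linarith
      have he : ((j:ℝ)+2) = ((j:ℝ)+1) * (1 + 1/((j:ℝ)+1)) := by
        field_simp
        ring
      rw [he, mul_pow]
      have h1 : ((j:ℝ)+1+m) = ((j:ℝ)+1) * (1 + m * (1/((j:ℝ)+1))) := by
        field_simp
      rw [h1]
      have hp : (0:ℝ) ≤ ((j:ℝ)+1)^m := by positivity
      calc ((j:ℝ)+1)^m * (((j:ℝ)+1) * (1 + m * (1/((j:ℝ)+1))))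
          ≤ ((j:ℝ)+1)^m * (((j:ℝ)+1) * (1 + 1/((j:ℝ)+1))^m) := by
            apply mul_le_mul_of_nonneg_left _ hp
            exact mul_le_mul_of_nonneg_left hb1 (by positivity)
        _ = ((j:ℝ)+1) * (((j:ℝ)+1)^m * (1 + 1/((j:ℝ)+1))^m) := by ring
    have hcast : ((j+1 : ℕ):ℝ) + 1 = (j:ℝ) + 2 := by push_cast; ring
    rw [hcast, hfac]
    have ham' : a + (j:ℝ) ≤ (j:ℝ)+1+m := by push_cast; linarith
    have h2 : (ascPochhammer ℝ j).eval a * (a + j) ≤ (((j:ℝ)+1)^m * (j.factorial:ℝ)) * ((j:ℝ)+1+m) := by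
      apply mul_le_mul ih' ham' (by positivity) (by positivity)
    calc (ascPochhammer ℝ j).eval a * (a + j)
        ≤ (((j:ℝ)+1)^m * (j.factorial:ℝ)) * ((j:ℝ)+1+m) := h2
      _ = (((j:ℝ)+1)^m * ((j:ℝ)+1+m)) * (j.factorial:ℝ) := by ring
      _ ≤ (((j:ℝ)+1) * ((j:ℝ)+2)^m) * (j.factorial:ℝ) :=
          mul_le_mul_of_nonneg_right hB hf.le
      _ = ((j:ℝ)+2)^m * (((j:ℝ)+1) * (j.factorial:ℝ)) := by ring

lemma aux_bcf_bound {a : ℝ} (ha : 0 < a) {m : ℕ} (ham : a ≤ m) (k : ℕ) :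
    |bcf a k| ≤ 1 * ((k:ℝ)+1)^(2*m) := by
  have hP : 0 < (ascPochhammer ℝ k).eval a := ascPochhammer_pos k a ha
  have hf : (0:ℝ) < (k.factorial : ℝ) := by exact_mod_cast k.factorial_pos
  have h0 : 0 ≤ (ascPochhammer ℝ k).eval a / (k.factorial : ℝ) := by positivity
  rw [one_mul, bcf, abs_of_nonneg (sq_nonneg _), sq]
  have h := aux_poch_div_le ha ham k
  calc (ascPochhammer ℝ k).eval a / (k.factorial:ℝ) * ((ascPochhammer ℝ k).eval a / (k.factorial:ℝ))
      ≤ ((k:ℝ)+1)^m * ((k:ℝ)+1)^m := mul_le_mul h h h0 (by positivity)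
    _ = ((k:ℝ)+1)^(2*m) := by rw [← pow_add]; ring_nf

lemma aux_bcf_rec (a : ℝ) (k : ℕ) :
    (((k:ℕ):ℝ)+1)^2 * bcf a (k+1) = (a+(k:ℝ))^2 * bcf a k := by
  have hf : ((k.factorial : ℕ) : ℝ) ≠ 0 := by
    exact_mod_cast k.factorial_pos.ne'
  have hf1 : (((k+1).factorial : ℕ) : ℝ) = ((k:ℝ)+1) * (k.factorial : ℝ) := by
    rw [Nat.factorial_succ]; push_cast; ring
  rw [bcf, bcf, ascPochhammer_succ_eval, hf1]
  have hk1 : ((k:ℝ)+1) ≠ 0 := by positivity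
  field_simp

noncomputable def gf0 (a t : ℝ) : ℝ := ∑' k : ℕ, bcf a k * t^k

noncomputable def b1f (a : ℝ) (k : ℕ) : ℝ := ((k:ℝ)+1) * bcf a (k+1)

noncomputable def gf1 (a t : ℝ) : ℝ := ∑' k : ℕ, b1f a k * t^k

noncomputable def b2f (a : ℝ) (k : ℕ) : ℝ := ((k:ℝ)+1) * b1f a (k+1)

noncomputable def gf2 (a t : ℝ) : ℝ := ∑' k : ℕ, b2f a k * t^k

lemma aux_lift {b : ℕ → ℝ} {C : ℝ} {M : ℕ} (hC : 0 ≤ C)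
    (hb : ∀ k, |b k| ≤ C*((k:ℝ)+1)^M) (k : ℕ) :
    |((k:ℝ)+1) * b (k+1)| ≤ (2^M*C)*((k:ℝ)+1)^(M+1) := by
  rw [abs_mul, abs_of_nonneg (by positivity : (0:ℝ) ≤ (k:ℝ)+1)]
  have h1 : |b (k+1)| ≤ C * ((k:ℝ)+2)^M := by
    have h := hb (k+1); push_cast at h
    have e : ((k:ℝ)+1+1) = (k:ℝ)+2 := by ring
    rwa [e] at h
  have h2 : ((k:ℝ)+2)^M ≤ (2*((k:ℝ)+1))^M :=
    pow_le_pow_left₀ (by positivity) (by linarith) M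
  calc ((k:ℝ)+1) * |b (k+1)| ≤ ((k:ℝ)+1) * (C * (2*((k:ℝ)+1))^M) := by
        apply mul_le_mul_of_nonneg_left _ (by positivity)
        exact h1.trans (mul_le_mul_of_nonneg_left h2 hC)
    _ = (2^M*C)*((k:ℝ)+1)^(M+1) := by rw [mul_pow, pow_succ]; ring

lemma b1f_bound {a : ℝ} (ha : 0 < a) (k : ℕ) :
    |b1f a k| ≤ (2^(2*⌈a⌉₊)*1)*((k:ℝ)+1)^(2*⌈a⌉₊+1) :=
  aux_lift (by norm_num) (aux_bcf_bound ha (Nat.le_ceil a)) k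

lemma b2f_bound {a : ℝ} (ha : 0 < a) (k : ℕ) :
    |b2f a k| ≤ (2^(2*⌈a⌉₊+1)*(2^(2*⌈a⌉₊)*1))*((k:ℝ)+1)^(2*⌈a⌉₊+1+1) :=
  aux_lift (by positivity) (b1f_bound ha) k

lemma hasDerivAt_gf0 {a : ℝ} (ha : 0 < a) {t : ℝ} (ht : |t| < 1) :
    HasDerivAt (gf0 a) (gf1 a t) t := by
  have h := aux_hasDerivAt_powser (aux_bcf_bound ha (Nat.le_ceil a)) ht
  have e : (∑' k : ℕ, (((k:ℕ):ℝ)+1) * bcf a (k+1) * t ^ k) = gf1 a t := by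
    rw [gf1]; apply tsum_congr; intro k; rw [b1f]
  rw [e] at h
  exact h

lemma hasDerivAt_gf1 {a : ℝ} (ha : 0 < a) {t : ℝ} (ht : |t| < 1) :
    HasDerivAt (gf1 a) (gf2 a t) t := by
  have h := aux_hasDerivAt_powser (b1f_bound ha) ht
  have e : (∑' k : ℕ, (((k:ℕ):ℝ)+1) * b1f a (k+1) * t ^ k) = gf2 a t := by
    rw [gf2]; apply tsum_congr; intro k; rw [b2f]
  rw [e] at h
  exact h

lemma aux_ode {a : ℝ} (ha : 0 < a) {t : ℝ} (ht : |t| < 1) :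
    t*(1-t)*gf2 a t + (1-(2*a+1)*t)*gf1 a t - a^2*gf0 a t = 0 := by
  set m := 2*⌈a⌉₊ with hm
  -- coefficient sequences
  set d2 : ℕ → ℝ := fun k => (k:ℝ)*((k:ℝ)+1)*bcf a (k+1) with hd2
  set d3 : ℕ → ℝ := fun k => ((k:ℝ)-1)*(k:ℝ)*bcf a k with hd3
  set d4 : ℕ → ℝ := fun k => (k:ℝ)*bcf a k with hd4
  have hbc := aux_bcf_bound ha (Nat.le_ceil a)
  have hb1 := b1f_bound ha
  have hb2 := b2f_bound ha
  -- summability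
  have S0 : Summable (fun k : ℕ => bcf a k * t^k) := aux_summable_polybound hbc ht
  have S1 : Summable (fun k : ℕ => b1f a k * t^k) := aux_summable_polybound hb1 ht
  have S2 : Summable (fun k : ℕ => b2f a k * t^k) := aux_summable_polybound hb2 ht
  have hd2b : ∀ k, |d2 k| ≤ (2^m*1)*((k:ℝ)+1)^(m+1+1) := by
    intro k
    simp only [hd2]
    have : (k:ℝ)*((k:ℝ)+1)*bcf a (k+1) = (k:ℝ) * b1f a k := by rw [b1f]; ring
    rw [this, abs_mul]
    calc |(k:ℝ)| * |b1f a k| ≤ ((k:ℝ)+1) * ((2^m*1)*((k:ℝ)+1)^(m+1)) := by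
          apply mul_le_mul _ (hb1 k) (abs_nonneg _) (by positivity)
          rw [abs_of_nonneg (Nat.cast_nonneg k)]; linarith
      _ = (2^m*1)*((k:ℝ)+1)^(m+1+1) := by rw [pow_succ]; ring
  have Sd2 : Summable (fun k : ℕ => d2 k * t^k) := aux_summable_polybound hd2b ht
  have hd3b : ∀ k, |d3 k| ≤ (1:ℝ)*((k:ℝ)+1)^(m+2) := by
    intro k
    simp only [hd3]
    rw [abs_mul, abs_mul]
    have h1 : |(k:ℝ)-1| ≤ (k:ℝ)+1 := by
      rw [abs_le]; constructor <;> [linarith [Nat.cast_nonneg (α := ℝ) k]; linarith [Nat.cast_nonneg (α := ℝ) k]]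
    have h2 : |(k:ℝ)| ≤ (k:ℝ)+1 := by rw [abs_of_nonneg (Nat.cast_nonneg k)]; linarith
    calc |(k:ℝ)-1| * |(k:ℝ)| * |bcf a k|
        ≤ (((k:ℝ)+1) * ((k:ℝ)+1)) * (1*((k:ℝ)+1)^m) := by
          apply mul_le_mul _ (hbc k) (abs_nonneg _) (by positivity)
          exact mul_le_mul h1 h2 (abs_nonneg _) (by positivity)
      _ = (1:ℝ)*((k:ℝ)+1)^(m+2) := by rw [pow_add]; ring
  have Sd3 : Summable (fun k : ℕ => d3 k * t^k) := aux_summable_polybound hd3b ht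
  have hd4b : ∀ k, |d4 k| ≤ (1:ℝ)*((k:ℝ)+1)^(m+1) := by
    intro k
    simp only [hd4]
    rw [abs_mul]
    have h2 : |(k:ℝ)| ≤ (k:ℝ)+1 := by rw [abs_of_nonneg (Nat.cast_nonneg k)]; linarith
    calc |(k:ℝ)| * |bcf a k| ≤ ((k:ℝ)+1) * (1*((k:ℝ)+1)^m) :=
          mul_le_mul h2 (hbc k) (abs_nonneg _) (by positivity)
      _ = (1:ℝ)*((k:ℝ)+1)^(m+1) := by rw [pow_succ]; ring
  have Sd4 : Summable (fun k : ℕ => d4 k * t^k) := aux_summable_polybound hd4b ht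
  -- shift identities
  have e2 : ∑' k : ℕ, d2 k * t^k = t * gf2 a t := by
    rw [aux_shift_tsum (by simp [hd2]) Sd2, gf2]
    congr 1
    apply tsum_congr; intro k
    simp only [hd2, b2f, b1f]; push_cast; ring
  have e3 : ∑' k : ℕ, d3 k * t^k = t * (∑' k : ℕ, d2 k * t^k) := by
    rw [aux_shift_tsum (by simp [hd3]) Sd3]
    congr 1
    apply tsum_congr; intro k
    simp only [hd3, hd2]; push_cast; ring
  have e4 : ∑' k : ℕ, d4 k * t^k = t * gf1 a t := by
    rw [aux_shift_tsum (by simp [hd4]) Sd4, gf1]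
    congr 1
    apply tsum_congr; intro k
    simp only [hd4, b1f]; push_cast; ring
  -- the key combination
  have ecomb : ∑' k : ℕ, (d2 k * t^k + b1f a k * t^k)
      = ∑' k : ℕ, (d3 k * t^k + ((2*a+1)*(d4 k * t^k) + a^2*(bcf a k * t^k))) := by
    apply tsum_congr; intro k
    have h := aux_bcf_rec a k
    simp only [hd2, hd3, hd4, b1f]
    push_cast at h ⊢
    linear_combination t^k * h
  rw [Summable.tsum_add Sd2 S1, Summable.tsum_add Sd3 ((Sd4.mul_left _).add (S0.mul_left _)),
    Summable.tsum_add (Sd4.mul_left _) (S0.mul_left _), tsum_mul_left, tsum_mul_left] at ecomb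
  rw [e2, e3, e4] at ecomb
  rw [e2] at ecomb
  have hg0 : ∑' k : ℕ, bcf a k * t^k = gf0 a t := rfl
  have hg1 : ∑' k : ℕ, b1f a k * t^k = gf1 a t := rfl
  rw [hg0, hg1] at ecomb
  linear_combination ecomb

lemma aux_H_eq (a : ℝ) (y : ℝ) (hy : y < 1) :
    (∑' k : ℕ, ((ascPochhammer ℝ k).eval a / (k.factorial : ℝ) * (-y) ^ k *
          (1 - y) ^ (-a - (k : ℝ))) ^ 2)
      = (1-y)^(-(2*a)) * gf0 a (y^2/(1-y)^2) := by
  have hz : (0:ℝ) < 1 - y := by linarith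
  rw [gf0, ← tsum_mul_left]
  apply tsum_congr
  intro k
  have e1 : ((ascPochhammer ℝ k).eval a / (k.factorial : ℝ) * (-y) ^ k *
          (1 - y) ^ (-a - (k : ℝ))) ^ 2
      = bcf a k * ((-y)^k)^2 * ((1-y) ^ (-a-(k:ℝ)))^2 := by rw [bcf]; ring
  rw [e1]
  have e2 : ((-y)^k)^2 = (y^2)^k := by
    rw [← pow_mul, mul_comm k 2, pow_mul, neg_sq]
  have e3 : ((1-y) ^ (-a-(k:ℝ)))^2 = (1-y)^(-(2*a)) * (((1-y)^2)^k)⁻¹ := by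
    rw [sq, ← Real.rpow_add hz]
    have h4 : (-a-(k:ℝ)) + (-a-(k:ℝ)) = (-(2*a)) + (-(2*(k:ℝ))) := by ring
    rw [h4, Real.rpow_add hz]
    congr 1
    rw [Real.rpow_neg hz.le]
    congr 1
    rw [show (2*(k:ℝ)) = ((2*k : ℕ):ℝ) by push_cast; ring, Real.rpow_natCast, pow_mul]
  rw [e2, e3, div_pow]
  have hnz : (((1-y)^2)^k : ℝ) ≠ 0 := by positivity
  field_simp

lemma aux_T_abs {x : ℝ} (hx : x < 0) : |x^2/(1-x)^2| < 1 := by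
  have hz : (0:ℝ) < 1 - x := by linarith
  rw [abs_of_nonneg (by positivity)]
  rw [div_lt_one (by positivity)]
  nlinarith

noncomputable def Gfun (a : ℝ) : ℝ → ℝ :=
  fun x => (1-x)^(-(2*a)) * gf0 a (x^2/(1-x)^2)

noncomputable def Gfun1 (a : ℝ) : ℝ → ℝ :=
  fun x => 2*a*((1-x)^(-(2*a))/(1-x)) * gf0 a (x^2/(1-x)^2)
    + (1-x)^(-(2*a)) * gf1 a (x^2/(1-x)^2) * (2*x/(1-x)^3)

noncomputable def Gfun2 (a : ℝ) : ℝ → ℝ :=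
  fun x => 2*a*(2*a+1)*((1-x)^(-(2*a))/(1-x)^2) * gf0 a (x^2/(1-x)^2)
    + 4*a*((1-x)^(-(2*a))/(1-x)) * gf1 a (x^2/(1-x)^2) * (2*x/(1-x)^3)
    + (1-x)^(-(2*a)) * gf2 a (x^2/(1-x)^2) * (2*x/(1-x)^3)^2
    + (1-x)^(-(2*a)) * gf1 a (x^2/(1-x)^2) * ((2+4*x)/(1-x)^4)

section

variable {a x : ℝ} (ha : 0 < a) (hx : x < 0)

lemma hz' : x < 0 → (0:ℝ) < 1 - x := by intro h; linarith

lemma hasDerivAt_E (hx : x < 0) :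
    HasDerivAt (fun x : ℝ => (1-x)^(-(2*a))) (2*a*((1-x)^(-(2*a))/(1-x))) x := by
  have hz : (0:ℝ) < 1 - x := by linarith
  have h := (HasDerivAt.const_sub 1 (hasDerivAt_id x)).rpow_const
    (p := -(2*a)) (Or.inl hz.ne')
  simp only [id_eq] at h
  convert h using 1
  rw [Real.rpow_sub hz, Real.rpow_one]
  field_simp

lemma hasDerivAt_Ediv (hx : x < 0) :
    HasDerivAt (fun x : ℝ => (1-x)^(-(2*a))/(1-x))
      ((2*a+1)*((1-x)^(-(2*a))/(1-x)^2)) x := by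
  have hz : (0:ℝ) < 1 - x := by linarith
  have h := (hasDerivAt_E (a := a) hx).fun_div
    (HasDerivAt.const_sub 1 (hasDerivAt_id x)) hz.ne'
  refine h.congr_deriv ?_
  simp only [id_eq]
  field_simp
  ring

lemma hasDerivAt_T (hx : x < 0) :
    HasDerivAt (fun x : ℝ => x^2/(1-x)^2) (2*x/(1-x)^3) x := by
  have hz : (0:ℝ) < 1 - x := by linarith
  have h := (hasDerivAt_pow 2 x).fun_div
    ((HasDerivAt.const_sub 1 (hasDerivAt_id x)).fun_pow 2) (by positivity)
  refine h.congr_deriv ?_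
  simp only [id_eq]
  field_simp
  ring

lemma hasDerivAt_Q (hx : x < 0) :
    HasDerivAt (fun x : ℝ => 2*x/(1-x)^3) ((2+4*x)/(1-x)^4) x := by
  have hz : (0:ℝ) < 1 - x := by linarith
  have h := ((hasDerivAt_id x).const_mul 2).fun_div
    ((HasDerivAt.const_sub 1 (hasDerivAt_id x)).fun_pow 3) (by positivity)
  refine h.congr_deriv ?_
  simp only [id_eq]
  field_simp
  ring

lemma hasDerivAt_gf0T (ha : 0 < a) (hx : x < 0) :
    HasDerivAt (fun x : ℝ => gf0 a (x^2/(1-x)^2))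
      (gf1 a (x^2/(1-x)^2) * (2*x/(1-x)^3)) x :=
  HasDerivAt.comp (h₂ := gf0 a) x (hasDerivAt_gf0 ha (aux_T_abs hx)) (hasDerivAt_T hx)

lemma hasDerivAt_gf1T (ha : 0 < a) (hx : x < 0) :
    HasDerivAt (fun x : ℝ => gf1 a (x^2/(1-x)^2))
      (gf2 a (x^2/(1-x)^2) * (2*x/(1-x)^3)) x :=
  HasDerivAt.comp (h₂ := gf1 a) x (hasDerivAt_gf1 ha (aux_T_abs hx)) (hasDerivAt_T hx)

lemma hasDerivAt_G (ha : 0 < a) (hx : x < 0) :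
    HasDerivAt (Gfun a) (Gfun1 a x) x := by
  have h := (hasDerivAt_E (a := a) hx).mul (hasDerivAt_gf0T ha hx)
  have hfn : Gfun a = fun x : ℝ => (1-x)^(-(2*a)) * gf0 a (x^2/(1-x)^2) := rfl
  rw [hfn]
  refine h.congr_deriv ?_
  rw [Gfun1]
  ring

lemma hasDerivAt_G1 (ha : 0 < a) (hx : x < 0) :
    HasDerivAt (Gfun1 a) (Gfun2 a x) x := by
  have h1 := ((hasDerivAt_Ediv (a := a) hx).const_mul (2*a)).fun_mul (hasDerivAt_gf0T ha hx)
  have h2 := ((hasDerivAt_E (a := a) hx).fun_mul (hasDerivAt_gf1T ha hx)).fun_mul (hasDerivAt_Q hx)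
  have h := h1.fun_add h2
  have hfn : Gfun1 a = fun x : ℝ => (2*a*((1-x)^(-(2*a))/(1-x))) * gf0 a (x^2/(1-x)^2)
      + ((1-x)^(-(2*a)) * gf1 a (x^2/(1-x)^2)) * (2*x/(1-x)^3) := by
    funext y; rw [Gfun1]
  rw [hfn]
  refine h.congr_deriv ?_
  rw [Gfun2]
  ring

end

lemma aux_heun {a x : ℝ} (ha : 0 < a) (hx : x < 0) :
    Gfun2 a x + (1/x + 1/(x-1) + (2*a)/(x-1/2)) * Gfun1 a x
      + ((2*a)*x - a)/(x*(x-1)*(x-1/2)) * Gfun a x = 0 := by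
  have hz : (0:ℝ) < 1 - x := by linarith
  have hz' : (1:ℝ) - x ≠ 0 := hz.ne'
  have hx0 : x ≠ 0 := hx.ne
  have hx1 : x - 1 ≠ 0 := by intro h; nlinarith
  have hx2 : x - 1/2 ≠ 0 := by intro h; nlinarith
  have hE : (0:ℝ) < (1-x)^(-(2*a)) := Real.rpow_pos_of_pos hz _
  have hyp := aux_ode ha (aux_T_abs hx)
  rw [Gfun, Gfun1, Gfun2]
  set E := (1-x)^(-(2*a)) with hE_def
  set A := gf0 a (x^2/(1-x)^2) with hA_def
  set B := gf1 a (x^2/(1-x)^2) with hB_def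
  set C := gf2 a (x^2/(1-x)^2) with hC_def
  clear_value E A B C
  clear hE_def hA_def hB_def hC_def
  field_simp at hyp
  have hyp3 : x^2*(1-2*x)*C + ((1-x)^2-(2*a+1)*x^2)*(1-x)^2*B - (1-x)^4*(a^2*A) = 0 := by
    apply mul_left_cancel₀ (pow_ne_zero 2 hz')
    rw [mul_zero]
    linear_combination (1-x)^2 * hyp
  have hEne : E ≠ 0 := hE.ne'
  have hx2' : 2*x-1 ≠ 0 := by intro h; nlinarith
  have hx2'' : -1+x*2 ≠ 0 := by intro h; nlinarith
  have hx2''' : x*2-1 ≠ 0 := by intro h; nlinarith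
  calc 2 * a * (2 * a + 1) * (E / (1 - x) ^ 2) * A + 4 * a * (E / (1 - x)) * B * (2 * x / (1 - x) ^ 3) +
            E * C * (2 * x / (1 - x) ^ 3) ^ 2 +
          E * B * ((2 + 4 * x) / (1 - x) ^ 4) +
        (1 / x + 1 / (x - 1) + 2 * a / (x - 1 / 2)) * (2 * a * (E / (1 - x)) * A + E * B * (2 * x / (1 - x) ^ 3)) +
      (2 * a * x - a) / (x * (x - 1) * (x - 1 / 2)) * (E * A)
      = (2*E/((x-1)*(x-1/2)*(1-x)^5)) *
        (x^2*(1-2*x)*C + ((1-x)^2-(2*a+1)*x^2)*(1-x)^2*B - (1-x)^4*(a^2*A)) := by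
        field_simp
        ring
    _ = 0 := by rw [hyp3, mul_zero]

/-- For `c > 0`, `n > c`, the function `H(x) = S_{n,c}(-x/c)` is twice
differentiable on `(-∞,0)` and satisfies there the Heun equation
`H'' + (1/x + 1/(x-1) + (2n/c)/(x-1/2)) H' + ((2n/c)x - n/c)/(x(x-1)(x-1/2)) H = 0`. -/
theorem stmt_6 (c n : ℝ) (hc : 0 < c) (hn : c < n)
    (H : ℝ → ℝ)
    (hH : ∀ x : ℝ, H x = ∑' k : ℕ,
      ((ascPochhammer ℝ k).eval (n / c) / (k.factorial : ℝ) * (-x) ^ k *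
          (1 - x) ^ (-(n / c) - (k : ℝ))) ^ 2) :
    (∀ x : ℝ, x < 0 → DifferentiableAt ℝ H x ∧ DifferentiableAt ℝ (deriv H) x) ∧
    (∀ x : ℝ, x < 0 →
      deriv (deriv H) x +
        (1 / x + 1 / (x - 1) + (2 * n / c) / (x - 1 / 2)) * deriv H x +
        ((2 * n / c) * x - n / c) / (x * (x - 1) * (x - 1 / 2)) * H x = 0) := by
  set a := n / c with ha_def
  have ha : 0 < a := div_pos (hc.trans hn) hc
  have hHG : ∀ y : ℝ, y < 1 → H y = Gfun a y := by
    intro y hy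
    rw [hH y, Gfun]
    exact aux_H_eq a y hy
  have hderivH : ∀ x : ℝ, x < 0 → HasDerivAt H (Gfun1 a x) x := by
    intro x hx
    have hev : H =ᶠ[nhds x] Gfun a := by
      filter_upwards [Iio_mem_nhds (show x < (1:ℝ) by linarith)] with y hy
      exact hHG y hy
    exact (hasDerivAt_G ha hx).congr_of_eventuallyEq hev
  have hderivH_eq : ∀ x : ℝ, x < 0 → deriv H x = Gfun1 a x := fun x hx =>
    (hderivH x hx).deriv
  have hderiv2 : ∀ x : ℝ, x < 0 → HasDerivAt (deriv H) (Gfun2 a x) x := by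
    intro x hx
    have hev : deriv H =ᶠ[nhds x] Gfun1 a := by
      filter_upwards [Iio_mem_nhds hx] with y hy
      exact hderivH_eq y hy
    exact (hasDerivAt_G1 ha hx).congr_of_eventuallyEq hev
  constructor
  · intro x hx
    exact ⟨(hderivH x hx).differentiableAt, (hderiv2 x hx).differentiableAt⟩
  · intro x hx
    rw [(hderiv2 x hx).deriv, hderivH_eq x hx, hHG x (by linarith)]
    have h2a : 2 * n / c = 2 * a := by rw [ha_def]; ring
    rw [h2a]
    exact aux_heun ha hx
end

section
/- Let $n\in\mathbb{N}$, $n\ge1$, and define $F_n(x)=\sum_{k=0}^{n}\binom{n}{k}^2 x^{2k}(1-x)^{2(n-k)}$ and $P_n(t)=2^{-n}\sum_{k=0}^{n}\binom{n}{k}^2(t+1)^k(t-1)^{n-k}$ (the $n$-th Legendre polynomial). Then for every $x\in[0,1/2)$, setting $t=\frac{2x^2-2x+1}{1-2x}$, one has $t\ge1$ and $F_n(x)=\big(t-\sqrt{t^2-1}\big)^n\,P_n(t)$. -/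
open scoped BigOperators

/-- For `n ≥ 1` and `x ∈ [0,1/2)`, with `t = (2x²-2x+1)/(1-2x)`, one has
`t ≥ 1` and `F_n(x) = (t-√(t²-1))ⁿ Pₙ(t)` where `Pₙ` is the `n`-th Legendre polynomial. -/
theorem stmt_7 (n : ℕ) (hn : 1 ≤ n) (x : ℝ) (hx : x ∈ Set.Ico (0:ℝ) (1/2)) :
    1 ≤ (2 * x ^ 2 - 2 * x + 1) / (1 - 2 * x) ∧
    (∑ k ∈ Finset.range (n + 1), (n.choose k : ℝ) ^ 2 * x ^ (2 * k) * (1 - x) ^ (2 * (n - k))) =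
      ((2 * x ^ 2 - 2 * x + 1) / (1 - 2 * x) -
          Real.sqrt (((2 * x ^ 2 - 2 * x + 1) / (1 - 2 * x)) ^ 2 - 1)) ^ n *
        ((2 : ℝ) ^ n)⁻¹ *
        (∑ k ∈ Finset.range (n + 1), (n.choose k : ℝ) ^ 2 *
          ((2 * x ^ 2 - 2 * x + 1) / (1 - 2 * x) + 1) ^ k *
          ((2 * x ^ 2 - 2 * x + 1) / (1 - 2 * x) - 1) ^ (n - k)) := by
  obtain ⟨hx0, hx2⟩ := hx
  have hu : (0:ℝ) < 1 - 2 * x := by linarith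
  have hu' : (1:ℝ) - 2 * x ≠ 0 := ne_of_gt hu
  have ht1 : 1 ≤ (2 * x ^ 2 - 2 * x + 1) / (1 - 2 * x) := by
    rw [le_div_iff₀ hu]; nlinarith
  refine ⟨ht1, ?_⟩
  have hsq : ((2 * x ^ 2 - 2 * x + 1) / (1 - 2 * x)) ^ 2 - 1
      = (2 * x * (1 - x) / (1 - 2 * x)) ^ 2 := by
    field_simp; ring
  have hsqrt : Real.sqrt (((2 * x ^ 2 - 2 * x + 1) / (1 - 2 * x)) ^ 2 - 1)
      = 2 * x * (1 - x) / (1 - 2 * x) := by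
    rw [hsq, Real.sqrt_sq (div_nonneg (by nlinarith) hu.le)]
  have hts : (2 * x ^ 2 - 2 * x + 1) / (1 - 2 * x)
      - Real.sqrt (((2 * x ^ 2 - 2 * x + 1) / (1 - 2 * x)) ^ 2 - 1) = 1 - 2 * x := by
    rw [hsqrt]; field_simp; ring
  have htp : (2 * x ^ 2 - 2 * x + 1) / (1 - 2 * x) + 1 = 2 * (1 - x) ^ 2 / (1 - 2 * x) := by
    field_simp; ring
  have htm : (2 * x ^ 2 - 2 * x + 1) / (1 - 2 * x) - 1 = 2 * x ^ 2 / (1 - 2 * x) := by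
    field_simp; ring
  rw [hts, htp, htm, Finset.mul_sum]
  have key : ∀ k ∈ Finset.range (n + 1),
      (1 - 2 * x) ^ n * ((2:ℝ) ^ n)⁻¹ *
        ((n.choose k : ℝ) ^ 2 * (2 * (1 - x) ^ 2 / (1 - 2 * x)) ^ k
          * (2 * x ^ 2 / (1 - 2 * x)) ^ (n - k))
      = (n.choose k : ℝ) ^ 2 * (1 - x) ^ (2 * k) * x ^ (2 * (n - k)) := by
    intro k hk
    have hk' : k ≤ n := Nat.lt_succ_iff.mp (Finset.mem_range.mp hk)
    obtain ⟨m, rfl⟩ : ∃ m, n = k + m := ⟨n - k, by omega⟩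
    have hm : k + m - k = m := by omega
    rw [hm, div_pow, div_pow, mul_pow, mul_pow, ← pow_mul, ← pow_mul]
    field_simp
    ring
  rw [Finset.sum_congr rfl key, ← Finset.sum_range_reflect]
  refine Finset.sum_congr rfl ?_
  intro k hk
  have hk' : k ≤ n := Nat.lt_succ_iff.mp (Finset.mem_range.mp hk)
  have h1 : n + 1 - 1 - k = n - k := by omega
  have h2 : n - (n - k) = k := by omega
  rw [h1, h2, Nat.choose_symm hk']
  ring
end

section
/- Let $n\in\mathbb{N}$, $n\ge1$, and define $F_n(x)=\sum_{k=0}^{n}\binom{n}{k}^2 x^{2k}(1-x)^{2(n-k)}$. Then $F_n$ is monotonically decreasing on $[0,1/2]$ and monotonically increasing on $[1/2,1]$. -/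
open scoped BigOperators

noncomputable def Fb (n : ℕ) (x : ℝ) : ℝ :=
  ∑ k ∈ Finset.range (n + 1), (n.choose k : ℝ) ^ 2 * x ^ (2 * k) * (1 - x) ^ (2 * (n - k))

noncomputable def Sb (m : ℕ) (x : ℝ) : ℝ :=
  ∑ j ∈ Finset.range m,
    (m.choose j : ℝ) * (m.choose (j+1) : ℝ) * x ^ (2*j+1) * (1 - x) ^ (2*(m-1-j)+1)

lemma term_deriv (n k : ℕ) (x : ℝ) :
    HasDerivAt (fun x : ℝ => (n.choose k : ℝ) ^ 2 * x ^ (2 * k) * (1 - x) ^ (2 * (n - k)))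
      ((n.choose k : ℝ) ^ 2 *
        (((2*k : ℕ) : ℝ) * x ^ (2*k-1) * (1-x) ^ (2*(n-k))
          - x ^ (2*k) * (((2*(n-k) : ℕ) : ℝ) * (1-x) ^ (2*(n-k)-1)))) x := by
  have h0 : HasDerivAt (fun x : ℝ => 1 - x) (-1) x := by
    simpa using (hasDerivAt_id x).const_sub 1
  have h2 : HasDerivAt (fun x : ℝ => (1 - x) ^ (2*(n-k)))
      ((((2*(n-k) : ℕ)) : ℝ) * (1-x) ^ (2*(n-k)-1) * (-1)) x := by
    simpa [Function.comp_def] using (hasDerivAt_pow (2*(n-k)) (1-x)).comp x h0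
  have h1 : HasDerivAt (fun x : ℝ => (n.choose k : ℝ)^2 * x ^ (2*k))
      ((n.choose k : ℝ)^2 * (((2*k : ℕ):ℝ) * x ^ (2*k-1))) x :=
    (hasDerivAt_pow (2*k) x).const_mul _
  have h := h1.fun_mul h2
  refine h.congr_deriv ?_
  ring

lemma lemA (m : ℕ) (x : ℝ) :
    ∑ k ∈ Finset.range (m+2), ((m+1).choose k : ℝ)^2 *
        (((2*k : ℕ) : ℝ) * x ^ (2*k-1) * (1-x) ^ (2*(m+1-k)))
      = 2*(m+1) * (x * Fb m x + (1-x) * Sb m x) := by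
  rw [Finset.sum_range_succ']
  simp only [Nat.mul_zero, Nat.cast_zero, zero_mul, mul_zero, add_zero]
  have key : ∀ j ∈ Finset.range (m+1),
      ((m+1).choose (j+1) : ℝ)^2 *
        (((2*(j+1) : ℕ) : ℝ) * x ^ (2*(j+1)-1) * (1-x) ^ (2*(m+1-(j+1))))
      = 2*(m+1) * ((m.choose j : ℝ)^2 * (x * (x^(2*j) * (1-x)^(2*(m-j)))))
        + 2*(m+1) * ((m.choose j : ℝ) * (m.choose (j+1) : ℝ) * (x^(2*j+1) * (1-x)^(2*(m-j)))) := by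
    intro j hj
    have e1 : 2*(j+1)-1 = 2*j+1 := by omega
    have e2 : m+1-(j+1) = m-j := by omega
    have hc : ((m+1).choose (j+1) : ℝ) * ((j:ℝ)+1) = ((m:ℝ)+1) * (m.choose j : ℝ) := by
      have h := (Nat.add_one_mul_choose_eq m j).symm
      exact_mod_cast h
    have hp : ((m+1).choose (j+1) : ℝ) = (m.choose j : ℝ) + (m.choose (j+1) : ℝ) := by
      exact_mod_cast Nat.choose_succ_succ m j
    rw [e1, e2]
    have expand : ((m+1).choose (j+1) : ℝ)^2 * (((2*(j+1) : ℕ) : ℝ) * x ^ (2*j+1) * (1-x) ^ (2*(m-j)))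
        = (((m+1).choose (j+1) : ℝ) * ((j:ℝ)+1)) * ((m+1).choose (j+1) : ℝ)
          * (2 * x ^ (2*j+1) * (1-x) ^ (2*(m-j))) := by
      push_cast
      ring
    rw [expand, hc, hp]
    have hx : x ^ (2*j+1) = x * x^(2*j) := by ring
    rw [hx]
    ring
  rw [Finset.sum_congr rfl key, Finset.sum_add_distrib]
  have s1 : ∑ j ∈ Finset.range (m+1),
      2*((m:ℝ)+1) * ((m.choose j : ℝ)^2 * (x * (x^(2*j) * (1-x)^(2*(m-j)))))
      = 2*(m+1) * (x * Fb m x) := by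
    rw [Fb, Finset.mul_sum, Finset.mul_sum]
    refine Finset.sum_congr rfl fun j hj => by ring
  have s2 : ∑ j ∈ Finset.range (m+1),
      2*((m:ℝ)+1) * ((m.choose j : ℝ) * (m.choose (j+1) : ℝ) * (x^(2*j+1) * (1-x)^(2*(m-j))))
      = 2*(m+1) * ((1-x) * Sb m x) := by
    rw [Finset.sum_range_succ]
    simp only [Nat.choose_succ_self, Nat.cast_zero, mul_zero, zero_mul, add_zero]
    rw [Sb, Finset.mul_sum, Finset.mul_sum]
    refine Finset.sum_congr rfl fun j hj => ?_
    have hjm : j < m := Finset.mem_range.mp hj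
    have e3 : 2*(m-j) = (2*(m-1-j)+1)+1 := by omega
    rw [e3, pow_succ]
    ring
  rw [s1, s2]
  ring

lemma lemB (m : ℕ) (x : ℝ) :
    ∑ k ∈ Finset.range (m+2), ((m+1).choose k : ℝ)^2 *
        (x ^ (2*k) * (((2*(m+1-k) : ℕ) : ℝ) * (1-x) ^ (2*(m+1-k)-1)))
      = 2*(m+1) * ((1-x) * Fb m x + x * Sb m x) := by
  rw [Finset.sum_range_succ]
  have hz : ((2*(m+1-(m+1)) : ℕ) : ℝ) = 0 := by simp
  rw [hz]
  simp only [zero_mul, mul_zero, add_zero]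
  have key : ∀ k ∈ Finset.range (m+1),
      ((m+1).choose k : ℝ)^2 * (x ^ (2*k) * (((2*(m+1-k) : ℕ) : ℝ) * (1-x) ^ (2*(m+1-k)-1)))
      = 2*((m:ℝ)+1) * ((m.choose k : ℝ) * ((m+1).choose k : ℝ) * (x^(2*k) * (1-x)^(2*(m-k)+1))) := by
    intro k hk
    have hkm : k ≤ m := Nat.lt_succ_iff.mp (Finset.mem_range.mp hk)
    have e1 : 2*(m+1-k)-1 = 2*(m-k)+1 := by omega
    have hc : ((m+1).choose k : ℝ) * ((m+1-k : ℕ) : ℝ) = ((m:ℝ)+1) * (m.choose k : ℝ) := by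
      rw [mul_comm ((m:ℝ)+1)]
      exact_mod_cast (Nat.choose_mul_succ_eq m k).symm
    have e0 : ((2*(m+1-k) : ℕ) : ℝ) = 2 * ((m+1-k : ℕ) : ℝ) := by push_cast; ring
    rw [e1, e0]
    calc ((m+1).choose k : ℝ)^2 * (x ^ (2*k) * (2 * ((m+1-k : ℕ) : ℝ) * (1-x) ^ (2*(m-k)+1)))
        = (((m+1).choose k : ℝ) * ((m+1-k : ℕ) : ℝ)) * ((m+1).choose k : ℝ)
            * (2 * (x^(2*k) * (1-x)^(2*(m-k)+1))) := by ring
      _ = _ := by rw [hc]; ring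
  rw [Finset.sum_congr rfl key, Finset.sum_range_succ']
  have hp : ∀ j : ℕ, ((m+1).choose (j+1) : ℝ) = (m.choose j : ℝ) + (m.choose (j+1) : ℝ) := by
    intro j; exact_mod_cast Nat.choose_succ_succ m j
  have splitL : ∀ j ∈ Finset.range m,
      2*((m:ℝ)+1) * ((m.choose (j+1) : ℝ) * ((m+1).choose (j+1) : ℝ)
          * (x^(2*(j+1)) * (1-x)^(2*(m-(j+1))+1)))
      = 2*((m:ℝ)+1) * ((m.choose j : ℝ) * (m.choose (j+1) : ℝ)
          * (x^(2*(j+1)) * (1-x)^(2*(m-(j+1))+1)))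
        + 2*((m:ℝ)+1) * ((m.choose (j+1) : ℝ)^2
          * (x^(2*(j+1)) * (1-x)^(2*(m-(j+1))+1))) := by
    intro j hj
    rw [hp j]; ring
  rw [Finset.sum_congr rfl splitL, Finset.sum_add_distrib]
  have hF : (1-x) * Fb m x
      = (∑ j ∈ Finset.range m,
          (m.choose (j+1) : ℝ)^2 * (x^(2*(j+1)) * (1-x)^(2*(m-(j+1))+1)))
        + (1-x)^(2*m+1) := by
    rw [Fb, Finset.sum_range_succ', mul_add]
    congr 1
    · rw [Finset.mul_sum]
      refine Finset.sum_congr rfl fun j hj => by ring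
    · simp
      ring
  have hS : x * Sb m x
      = ∑ j ∈ Finset.range m,
          (m.choose j : ℝ) * (m.choose (j+1) : ℝ) * (x^(2*(j+1)) * (1-x)^(2*(m-(j+1))+1)) := by
    rw [Sb, Finset.mul_sum]
    refine Finset.sum_congr rfl fun j hj => ?_
    have hjm : j < m := Finset.mem_range.mp hj
    have e2 : 2*(m-1-j) = 2*(m-(j+1)) := by omega
    rw [e2]; ring
  rw [hF, hS]
  simp only [mul_add, Finset.mul_sum]
  simp only [Nat.choose_zero_right, Nat.cast_one, Nat.sub_zero, Nat.mul_zero, pow_zero,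
    one_mul, mul_one]
  ring

lemma lemAB (m : ℕ) (x : ℝ) :
    ∑ k ∈ Finset.range (m+2), ((m+1).choose k : ℝ)^2 *
        (((2*k : ℕ) : ℝ) * x ^ (2*k-1) * (1-x) ^ (2*(m+1-k))
          - x ^ (2*k) * (((2*(m+1-k) : ℕ) : ℝ) * (1-x) ^ (2*(m+1-k)-1)))
      = 2*(m+1)*(2*x-1)*(Fb m x - Sb m x) := by
  have split : ∀ k ∈ Finset.range (m+2),
      ((m+1).choose k : ℝ)^2 *
        (((2*k : ℕ) : ℝ) * x ^ (2*k-1) * (1-x) ^ (2*(m+1-k))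
          - x ^ (2*k) * (((2*(m+1-k) : ℕ) : ℝ) * (1-x) ^ (2*(m+1-k)-1)))
      = ((m+1).choose k : ℝ)^2 * (((2*k : ℕ) : ℝ) * x ^ (2*k-1) * (1-x) ^ (2*(m+1-k)))
        - ((m+1).choose k : ℝ)^2 * (x ^ (2*k) * (((2*(m+1-k) : ℕ) : ℝ) * (1-x) ^ (2*(m+1-k)-1))) := by
    intro k hk; ring
  rw [Finset.sum_congr rfl split, Finset.sum_sub_distrib, lemA, lemB]
  ring

lemma Fb_hasDeriv (m : ℕ) (x : ℝ) :
    HasDerivAt (fun x => Fb (m+1) x) (2*((m:ℝ)+1)*(2*x-1)*(Fb m x - Sb m x)) x := by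
  have h : HasDerivAt (fun x => Fb (m+1) x)
      (∑ k ∈ Finset.range (m+2), ((m+1).choose k : ℝ)^2 *
        (((2*k : ℕ) : ℝ) * x ^ (2*k-1) * (1-x) ^ (2*(m+1-k))
          - x ^ (2*k) * (((2*(m+1-k) : ℕ) : ℝ) * (1-x) ^ (2*(m+1-k)-1)))) x := by
    have := HasDerivAt.fun_sum (fun k (hk : k ∈ Finset.range (m+2)) => term_deriv (m+1) k x)
    simpa [Fb] using this
  have hid := lemAB m x
  rw [hid] at h
  have e : (2*((m:ℕ)+1 : ℕ) : ℝ) = 2*((m:ℝ)+1) := by push_cast; ring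
  exact h

lemma Sb_le_Fb (m : ℕ) (x : ℝ) : Sb m x ≤ Fb m x := by
  set q : ℕ → ℝ := fun j => (m.choose j : ℝ) * x^j * (1-x)^(m-j) with hq
  have hF : Fb m x = ∑ j ∈ Finset.range (m+1), (q j)^2 := by
    rw [Fb]
    refine Finset.sum_congr rfl fun j hj => ?_
    simp only [hq]
    ring
  have hS : Sb m x = ∑ j ∈ Finset.range m, q j * q (j+1) := by
    rw [Sb]
    refine Finset.sum_congr rfl fun j hj => ?_
    have hjm : j < m := Finset.mem_range.mp hj
    simp only [hq]
    have e1 : m - j = (m - (j+1)) + 1 := by omega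
    have e2 : 2*(m-1-j)+1 = (m-(j+1)) + ((m-(j+1))+1) := by omega
    rw [e1, e2, pow_add, pow_succ]
    ring
  rw [hF, hS]
  have h1 : ∑ j ∈ Finset.range m, q j * q (j+1)
      ≤ ∑ j ∈ Finset.range m, ((q j)^2 + (q (j+1))^2)/2 := by
    refine Finset.sum_le_sum fun j hj => ?_
    nlinarith [sq_nonneg (q j - q (j+1))]
  have h2 : ∑ j ∈ Finset.range m, (q j)^2 ≤ ∑ j ∈ Finset.range (m+1), (q j)^2 :=
    Finset.sum_le_sum_of_subset_of_nonneg (Finset.range_subset_range.mpr (Nat.le_succ m))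
      (fun i _ _ => sq_nonneg _)
  have h3 : ∑ j ∈ Finset.range m, (q (j+1))^2 ≤ ∑ j ∈ Finset.range (m+1), (q j)^2 := by
    rw [Finset.sum_range_succ']
    nlinarith [sq_nonneg (q 0)]
  have h4 : ∑ j ∈ Finset.range m, ((q j)^2 + (q (j+1))^2)/2
      = ((∑ j ∈ Finset.range m, (q j)^2) + ∑ j ∈ Finset.range m, (q (j+1))^2)/2 := by
    rw [← Finset.sum_add_distrib, Finset.sum_div]
  linarith

/-- For `n ≥ 1`, `F_n` is decreasing on `[0,1/2]` and increasing on `[1/2,1]`. -/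
theorem stmt_8 (n : ℕ) (hn : 1 ≤ n) :
    AntitoneOn
      (fun x : ℝ => ∑ k ∈ Finset.range (n + 1),
        (n.choose k : ℝ) ^ 2 * x ^ (2 * k) * (1 - x) ^ (2 * (n - k)))
      (Set.Icc (0:ℝ) (1/2)) ∧
    MonotoneOn
      (fun x : ℝ => ∑ k ∈ Finset.range (n + 1),
        (n.choose k : ℝ) ^ 2 * x ^ (2 * k) * (1 - x) ^ (2 * (n - k)))
      (Set.Icc (1/2 : ℝ) 1) := by
  obtain ⟨m, rfl⟩ : ∃ m, n = m + 1 := ⟨n - 1, by omega⟩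
  have hd : ∀ y : ℝ, HasDerivAt (fun x => Fb (m+1) x)
      (2*((m:ℝ)+1)*(2*y-1)*(Fb m y - Sb m y)) y := Fb_hasDeriv m
  have hdiff : Differentiable ℝ (fun x => Fb (m+1) x) := fun y => (hd y).differentiableAt
  have hgoal :
      AntitoneOn (fun x => Fb (m+1) x) (Set.Icc (0:ℝ) (1/2)) ∧
      MonotoneOn (fun x => Fb (m+1) x) (Set.Icc (1/2 : ℝ) 1) := by
    constructor
    · apply antitoneOn_of_deriv_nonpos (convex_Icc _ _) hdiff.continuous.continuousOn
        hdiff.differentiableOn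
      intro y hy
      rw [interior_Icc] at hy
      rw [(hd y).deriv]
      have hy2 : y < 1/2 := hy.2
      have hFS := Sb_le_Fb m y
      have hm : (0:ℝ) ≤ (m:ℝ) := Nat.cast_nonneg m
      have hP : 0 ≤ (1 - 2*y) * (Fb m y - Sb m y) :=
        mul_nonneg (by linarith) (by linarith)
      nlinarith [mul_nonneg hm hP]
    · apply monotoneOn_of_deriv_nonneg (convex_Icc _ _) hdiff.continuous.continuousOn
        hdiff.differentiableOn
      intro y hy
      rw [interior_Icc] at hy
      rw [(hd y).deriv]
      have hy1 : 1/2 < y := hy.1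
      have hFS := Sb_le_Fb m y
      have hm : (0:ℝ) ≤ (m:ℝ) := Nat.cast_nonneg m
      have hP : 0 ≤ (2*y - 1) * (Fb m y - Sb m y) :=
        mul_nonneg (by linarith) (by linarith)
      nlinarith [mul_nonneg hm hP]
  exact hgoal
end

section
/- Let $n\in\mathbb{N}$, $n\ge1$, and define $F_n(x)=\sum_{k=0}^{n}\binom{n}{k}^2 x^{2k}(1-x)^{2(n-k)}$. Then $F_n$ is a convex function on $[0,1]$. -/
open Finset

lemma convexOn_finset_sum {ι : Type*} (t : Finset ι) {s : Set ℝ} (hs : Convex ℝ s)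
    (f : ι → ℝ → ℝ) (hf : ∀ i ∈ t, ConvexOn ℝ s (f i)) :
    ConvexOn ℝ s (fun x => ∑ i ∈ t, f i x) := by
  classical
  induction t using Finset.induction_on with
  | empty => simpa using convexOn_const 0 hs
  | @insert a t' hx ih =>
      simp only [Finset.sum_insert hx]
      exact (hf a (mem_insert_self a t')).add (ih fun i hi => hf i (mem_insert_of_mem hi))

lemma base_convex {c : ℝ} (hc : 0 ≤ c) :
    ConvexOn ℝ (Set.Icc (0:ℝ) 1) (fun x => 1 - c * (x * (1 - x))) := by
  refine ⟨convex_Icc 0 1, ?_⟩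
  intro x hx y hy a b ha hb hab
  simp only [smul_eq_mul]
  have hb' : b = 1 - a := by linarith
  subst hb'
  have key : a * (x * (1 - x)) + (1 - a) * (y * (1 - y))
      - (a * x + (1 - a) * y) * (1 - (a * x + (1 - a) * y))
      = -(a * (1 - a) * (x - y) ^ 2) := by ring
  nlinarith [mul_nonneg hc (mul_nonneg (mul_nonneg ha hb) (sq_nonneg (x - y)))]

lemma term_convex {c : ℝ} (hc : 0 ≤ c) (hc4 : c ≤ 4) (n : ℕ) :
    ConvexOn ℝ (Set.Icc (0:ℝ) 1) (fun x => (1 - c * (x * (1 - x))) ^ n) := by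
  have h := (base_convex hc).pow (f := fun x => 1 - c * (x * (1 - x))) ?_ n
  · exact h
  · intro x hx
    obtain ⟨h0, h1⟩ := hx
    show (0:ℝ) ≤ 1 - c * (x * (1 - x))
    nlinarith [sq_nonneg (2 * x - 1), mul_nonneg h0 (sub_nonneg.2 h1)]

lemma expand_aux (n j : ℕ) (x ζ : ℂ) :
    (x * ζ ^ j + (1 - x)) ^ n * (x * (ζ ^ j)⁻¹ + (1 - x)) ^ n
      = ∑ k ∈ range (n + 1), ∑ l ∈ range (n + 1),
          ((n.choose k : ℂ) * x ^ k * (1 - x) ^ (n - k)) *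
            ((n.choose l : ℂ) * x ^ l * (1 - x) ^ (n - l)) * (ζ ^ k * (ζ ^ l)⁻¹) ^ j := by
  rw [add_pow, add_pow, Finset.sum_mul_sum]
  refine Finset.sum_congr rfl fun k hk => Finset.sum_congr rfl fun l hl => ?_
  have h1 : (x * ζ ^ j) ^ k = x ^ k * (ζ ^ k) ^ j := by
    rw [mul_pow, ← pow_mul, mul_comm j k, pow_mul]
  have h2 : (x * (ζ ^ j)⁻¹) ^ l = x ^ l * ((ζ ^ l)⁻¹) ^ j := by
    rw [mul_pow, inv_pow, inv_pow, ← pow_mul, mul_comm j l, pow_mul]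
  rw [h1, h2, mul_pow (ζ ^ k)]
  ring

lemma geom_delta (N : ℕ) (hN : 0 < N) (ζ : ℂ) (hprim : IsPrimitiveRoot ζ N)
    (k l : ℕ) (hk : k < N) (hl : l < N) :
    ∑ j ∈ range N, (ζ ^ k * (ζ ^ l)⁻¹) ^ j = if k = l then (N : ℂ) else 0 := by
  have hζ0 : ζ ≠ 0 := hprim.ne_zero hN.ne'
  by_cases h : k = l
  · subst h
    simp [mul_inv_cancel₀ (pow_ne_zero k hζ0)]
  · rw [if_neg h]
    set w : ℂ := ζ ^ k * (ζ ^ l)⁻¹ with hw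
    have hw1 : w ≠ 1 := by
      intro hcon
      apply h
      apply hprim.pow_inj hk hl
      field_simp [hw] at hcon
      exact (mul_inv_eq_one₀ (pow_ne_zero l hζ0)).mp hcon
    have hwN : w ^ N = 1 := by
      have h1 : ζ ^ N = 1 := hprim.pow_eq_one
      rw [hw, mul_pow, inv_pow, ← pow_mul, ← pow_mul, mul_comm k N, mul_comm l N,
        pow_mul, pow_mul, h1, one_pow, one_pow]
      simp
    rw [geom_sum_eq hw1, hwN]
    simp

lemma sum_expand (n : ℕ) (x ζ : ℂ) (hprim : IsPrimitiveRoot ζ (n + 1)) :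
    ∑ j ∈ range (n + 1), ((x * ζ ^ j + (1 - x)) * (x * (ζ ^ j)⁻¹ + (1 - x))) ^ n
      = (n + 1 : ℂ) * ∑ k ∈ range (n + 1), ((n.choose k : ℂ) * x ^ k * (1 - x) ^ (n - k)) ^ 2 := by
  have step1 : ∀ j ∈ range (n + 1),
      ((x * ζ ^ j + (1 - x)) * (x * (ζ ^ j)⁻¹ + (1 - x))) ^ n
        = ∑ k ∈ range (n + 1), ∑ l ∈ range (n + 1),
            ((n.choose k : ℂ) * x ^ k * (1 - x) ^ (n - k)) *
              ((n.choose l : ℂ) * x ^ l * (1 - x) ^ (n - l)) * (ζ ^ k * (ζ ^ l)⁻¹) ^ j :=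
    fun j _ => by rw [mul_pow]; exact expand_aux n j x ζ
  rw [Finset.sum_congr rfl step1, Finset.sum_comm]
  have step2 : ∀ k ∈ range (n + 1),
      ∑ j ∈ range (n + 1), ∑ l ∈ range (n + 1),
          ((n.choose k : ℂ) * x ^ k * (1 - x) ^ (n - k)) *
            ((n.choose l : ℂ) * x ^ l * (1 - x) ^ (n - l)) * (ζ ^ k * (ζ ^ l)⁻¹) ^ j
        = (n + 1 : ℂ) * ((n.choose k : ℂ) * x ^ k * (1 - x) ^ (n - k)) ^ 2 := by
    intro k hk
    rw [Finset.sum_comm]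
    have inner : ∀ l ∈ range (n + 1),
        ∑ j ∈ range (n + 1),
            ((n.choose k : ℂ) * x ^ k * (1 - x) ^ (n - k)) *
              ((n.choose l : ℂ) * x ^ l * (1 - x) ^ (n - l)) * (ζ ^ k * (ζ ^ l)⁻¹) ^ j
          = ((n.choose k : ℂ) * x ^ k * (1 - x) ^ (n - k)) *
              ((n.choose l : ℂ) * x ^ l * (1 - x) ^ (n - l)) *
                (if k = l then ((n:ℂ) + 1) else 0) := by
      intro l hl
      rw [← Finset.mul_sum, geom_delta (n + 1) (Nat.succ_pos n) ζ hprim k l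
        (Finset.mem_range.mp hk) (Finset.mem_range.mp hl)]
      push_cast
      ring_nf
    rw [Finset.sum_congr rfl inner, Finset.sum_eq_single k]
    · rw [if_pos rfl]; ring
    · intro l _ hne
      rw [if_neg (fun hc => hne hc.symm), mul_zero]
    · intro hc
      exact absurd hk hc
  rw [Finset.sum_congr rfl step2, ← Finset.mul_sum]

lemma real_identity (n : ℕ) (x : ℝ) :
    ((n : ℝ) + 1) * ∑ k ∈ range (n + 1), ((n.choose k : ℝ) * x ^ k * (1 - x) ^ (n - k)) ^ 2
      = ∑ j ∈ range (n + 1),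
          (1 - (2 - 2 * Real.cos (2 * Real.pi * (j : ℝ) / ((n : ℝ) + 1))) * (x * (1 - x))) ^ n := by
  have hN : (n + 1 : ℕ) ≠ 0 := Nat.succ_ne_zero n
  set ζ : ℂ := Complex.exp (2 * Real.pi * Complex.I / (n + 1 : ℕ)) with hζ
  have hprim : IsPrimitiveRoot ζ (n + 1) := Complex.isPrimitiveRoot_exp _ hN
  have hAB : ∀ j : ℕ,
      ((x : ℂ) * ζ ^ j + (1 - (x : ℂ))) * ((x : ℂ) * (ζ ^ j)⁻¹ + (1 - (x : ℂ)))
        = ((1 - (2 - 2 * Real.cos (2 * Real.pi * (j : ℝ) / ((n : ℝ) + 1))) * (x * (1 - x)) : ℝ) : ℂ) := by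
    intro j
    have hu : ζ ^ j * (ζ ^ j)⁻¹ = 1 := mul_inv_cancel₀ (pow_ne_zero _ (hprim.ne_zero hN))
    have hζj : ζ ^ j = Complex.exp (((2 * Real.pi * (j : ℝ) / ((n : ℝ) + 1) : ℝ) : ℂ) * Complex.I) := by
      rw [hζ, ← Complex.exp_nat_mul]
      congr 1
      push_cast
      ring
    have hcos : ζ ^ j + (ζ ^ j)⁻¹
        = ((2 * Real.cos (2 * Real.pi * (j : ℝ) / ((n : ℝ) + 1)) : ℝ) : ℂ) := by
      rw [hζj, ← Complex.exp_neg, Complex.exp_mul_I, ← neg_mul, Complex.exp_mul_I]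
      push_cast [Complex.cos_neg, Complex.sin_neg, Complex.ofReal_cos]
      ring
    push_cast at hcos ⊢
    linear_combination (x : ℂ) ^ 2 * hu + (x : ℂ) * (1 - (x : ℂ)) * hcos
  have h2 : ∑ j ∈ range (n + 1),
        (((1 - (2 - 2 * Real.cos (2 * Real.pi * (j : ℝ) / ((n : ℝ) + 1))) * (x * (1 - x)) : ℝ) : ℂ)) ^ n
      = (n + 1 : ℂ) * ∑ k ∈ range (n + 1),
          ((n.choose k : ℂ) * (x : ℂ) ^ k * (1 - (x : ℂ)) ^ (n - k)) ^ 2 := by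
    rw [← sum_expand n (x : ℂ) ζ hprim]
    exact Finset.sum_congr rfl fun j _ => by rw [← hAB j]
  apply Complex.ofReal_injective
  push_cast
  push_cast at h2
  rw [h2]

open scoped BigOperators

/-- For `n ≥ 1`, `F_n` is convex on `[0,1]`. -/
theorem stmt_9 (n : ℕ) (hn : 1 ≤ n) :
    ConvexOn ℝ (Set.Icc (0:ℝ) 1)
      (fun x : ℝ => ∑ k ∈ Finset.range (n + 1),
        (n.choose k : ℝ) ^ 2 * x ^ (2 * k) * (1 - x) ^ (2 * (n - k))) := by
  have hident : (fun x : ℝ => ∑ k ∈ Finset.range (n + 1),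
        (n.choose k : ℝ) ^ 2 * x ^ (2 * k) * (1 - x) ^ (2 * (n - k)))
      = fun x : ℝ => (1 / ((n : ℝ) + 1)) * ∑ j ∈ Finset.range (n + 1),
          (1 - (2 - 2 * Real.cos (2 * Real.pi * (j : ℝ) / ((n : ℝ) + 1))) * (x * (1 - x))) ^ n := by
    funext x
    have hpos : (0:ℝ) < (n : ℝ) + 1 := by positivity
    rw [← real_identity n x, one_div, inv_mul_cancel_left₀ hpos.ne']
    refine Finset.sum_congr rfl fun k _ => ?_
    rw [mul_pow, mul_pow, ← pow_mul, ← pow_mul, mul_comm k 2, mul_comm (n - k) 2]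
  rw [hident]
  have hconv := convexOn_finset_sum (Finset.range (n + 1)) (convex_Icc (0:ℝ) 1)
      (fun j x => (1 - (2 - 2 * Real.cos (2 * Real.pi * (j : ℝ) / ((n : ℝ) + 1))) * (x * (1 - x))) ^ n)
      (fun j _ => term_convex
        (by nlinarith [Real.cos_le_one (2 * Real.pi * (j : ℝ) / ((n : ℝ) + 1))])
        (by nlinarith [Real.neg_one_le_cos (2 * Real.pi * (j : ℝ) / ((n : ℝ) + 1))]) n)
  have hsmul := hconv.smul (c := 1 / ((n : ℝ) + 1)) (by positivity)
  simpa using hsmul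
end

section
/- Let $n\in\mathbb{N}$, $n\ge1$. Then for every real $x$, $\sum_{k=0}^{n}\binom{n}{k}^2 x^{2k}(1-x)^{2(n-k)} \;=\; 4^{-n}\binom{2n}{n}\sum_{k=0}^{n} 4^k\binom{n}{k}^2\binom{2n}{2k}^{-1}\left(x-\tfrac{1}{2}\right)^{2k}$. -/
open scoped BigOperators

namespace Stmt10

open Finset


noncomputable def cc (m k : ℕ) : ℝ := (m.choose k : ℝ)^2
noncomputable def dd (j : ℕ) : ℝ := ((2*j).choose j : ℝ)

noncomputable def L (m : ℕ) (A B : ℝ) : ℝ := ∑ k ∈ range (m+1), cc m k * (A^k * B^(m-k))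
noncomputable def R (m : ℕ) (w : ℝ) : ℝ := ∑ j ∈ range (m+1), dd j * dd (m-j) * w^j

lemma align2 (m s N : ℕ) (h : m+1+s ≤ N) (f p : ℕ → ℝ) :
    ∑ k ∈ range (m+1), f k * p (k+s) =
    ∑ j ∈ range N, (if s ≤ j ∧ j ≤ m+s then f (j-s) else 0) * p j := by
  have hsub : Finset.Ico s (m+1+s) ⊆ range N := by
    intro j hj
    simp only [Finset.mem_Ico] at hj
    exact Finset.mem_range.2 (by omega)
  have hzero : ∀ j ∈ range N, j ∉ Finset.Ico s (m+1+s) →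
      (if s ≤ j ∧ j ≤ m+s then f (j-s) else 0) * p j = 0 := by
    intro j _ hj
    have hno : ¬ (s ≤ j ∧ j ≤ m + s) := by
      simp only [Finset.mem_Ico, not_and, not_lt] at hj
      omega
    simp [hno]
  rw [← Finset.sum_subset hsub hzero]
  rw [Finset.sum_Ico_eq_sum_range]
  rw [show m+1+s-s = m+1 from by omega]
  apply Finset.sum_congr rfl
  intro k hk
  simp only [Finset.mem_range] at hk
  have h1 : s ≤ s + k ∧ s + k ≤ m + s := ⟨by omega, by omega⟩
  rw [if_pos h1]
  congr 2 <;> omega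

lemma ite_cc (m s j : ℕ) (hs : s ≤ j) :
    (if s ≤ j ∧ j ≤ m+s then cc m (j-s) else 0) = cc m (j-s) := by
  split_ifs with h
  · rfl
  · have : m < j - s := by omega
    simp [cc, Nat.choose_eq_zero_of_lt this]

lemma core1 (n j : ℕ) :
    (n:ℝ) * (n.choose (j+1) : ℝ)^2 =
      (n.choose j : ℝ) * (n.choose (j+1) : ℝ) + (n.choose (j+1) : ℝ) * (n.choose (j+2) : ℝ)
        + ((n:ℝ)+2) * (n.choose j : ℝ) * (n.choose (j+2) : ℝ) := by
  rcases Nat.lt_or_ge n (j+1) with h | h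
  · simp [Nat.choose_eq_zero_of_lt h, Nat.choose_eq_zero_of_lt (by omega : n < j+2)]
  rcases Nat.lt_or_ge n (j+2) with h2 | h2
  · -- n = j+1
    have hn : n = j + 1 := by omega
    subst hn
    simp [Nat.choose_succ_self_right, Nat.choose_self,
      Nat.choose_eq_zero_of_lt (by omega : j+1 < j+2)]
  · -- j+2 ≤ n
    have e1 : (n.choose (j+1) : ℝ) * ((j:ℝ)+1) = (n.choose j : ℝ) * ((n:ℝ) - (j:ℝ)) := by
      have hc := congrArg (fun t : ℕ => (t : ℝ)) (Nat.choose_succ_right_eq n j)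
      push_cast [Nat.cast_sub (by omega : j ≤ n)] at hc
      linarith
    have e2 : (n.choose (j+2) : ℝ) * ((j:ℝ)+2) = (n.choose (j+1) : ℝ) * ((n:ℝ) - (j:ℝ) - 1) := by
      have hc := congrArg (fun t : ℕ => (t : ℝ)) (Nat.choose_succ_right_eq n (j+1))
      push_cast [Nat.cast_sub (by omega : j+1 ≤ n)] at hc
      linarith
    have hnj : ((n:ℝ) - (j:ℝ)) ≠ 0 := by
      have : (j:ℝ) + 2 ≤ (n:ℝ) := by exact_mod_cast h2
      intro hcon; linarith
    have hj2 : ((j:ℝ)+2) ≠ 0 := by positivity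
    have ha : (n.choose j : ℝ) = (n.choose (j+1) : ℝ) * ((j:ℝ)+1) / ((n:ℝ) - (j:ℝ)) := by
      field_simp
      linarith [e1]
    have hc : (n.choose (j+2) : ℝ) = (n.choose (j+1) : ℝ) * ((n:ℝ) - (j:ℝ) - 1) / ((j:ℝ)+2) := by
      field_simp
      linarith [e2]
    rw [ha, hc]
    field_simp
    ring


lemma keyL (n k : ℕ) :
    ((n:ℝ)+2) * cc (n+2) (k+2) =
      (2*(n:ℝ)+3) * cc (n+1) (k+1) + (2*(n:ℝ)+3) * cc (n+1) (k+2)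
        - (((n:ℝ)+1) * cc n k - 2*((n:ℝ)+1) * cc n (k+1) + ((n:ℝ)+1) * cc n (k+2)) := by
  simp only [cc]
  rw [show (n+2).choose (k+2) = (n+1).choose (k+1) + (n+1).choose (k+2) from Nat.choose_succ_succ _ _,
      show (n+1).choose (k+1) = n.choose k + n.choose (k+1) from Nat.choose_succ_succ _ _,
      show (n+1).choose (k+2) = n.choose (k+1) + n.choose (k+2) from Nat.choose_succ_succ _ _]
  push_cast
  linear_combination (-2 : ℝ) * core1 n k


lemma ddrec (m : ℕ) : ((m:ℝ)+1) * dd (m+1) = 2*(2*(m:ℝ)+1) * dd m := by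
  have h := Nat.succ_mul_centralBinom_succ m
  have hc := congrArg (fun t : ℕ => (t : ℝ)) h
  simp only [Nat.centralBinom] at hc
  push_cast at hc
  simp only [dd]
  rw [show 2*(m+1) = 2*m+2 from by ring] at hc ⊢
  push_cast at hc ⊢
  linarith


lemma keyR (i M : ℕ) :
    ((i:ℝ)+(M:ℝ)+2) * (dd (i+1) * dd (M+1)) =
      2*(2*((i:ℝ)+(M:ℝ))+3) * (dd (i+1) * dd M + dd i * dd (M+1))
        - 16*((i:ℝ)+(M:ℝ)+1) * (dd i * dd M) := by
  have h1 : dd (i+1) = 2*(2*(i:ℝ)+1) * dd i / ((i:ℝ)+1) := by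
    have := ddrec i
    field_simp
    linarith
  have h2 : dd (M+1) = 2*(2*(M:ℝ)+1) * dd M / ((M:ℝ)+1) := by
    have := ddrec M
    field_simp
    linarith
  rw [h1, h2]
  have hi : ((i:ℝ)+1) ≠ 0 := by positivity
  have hM : ((M:ℝ)+1) ≠ 0 := by positivity
  field_simp
  ring


lemma Lrec (n : ℕ) (A B : ℝ) :
    ((n:ℝ)+2) * L (n+2) A B =
      (2*(n:ℝ)+3)*(A+B) * L (n+1) A B - ((n:ℝ)+1)*(A-B)^2 * L n A B := by
  set p : ℕ → ℝ := fun j => A^j * B^(n+2-j) with hp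
  have eL2 : L (n+2) A B = ∑ j ∈ range (n+3), cc (n+2) j * p j := by
    apply Finset.sum_congr rfl
    intro k _
    rfl
  have eA : A * L (n+1) A B = ∑ j ∈ range (n+3),
      (if 1 ≤ j ∧ j ≤ (n+1)+1 then cc (n+1) (j-1) else 0) * p j := by
    rw [L, Finset.mul_sum, ← align2 (n+1) 1 (n+3) (by omega) (cc (n+1)) p]
    apply Finset.sum_congr rfl
    intro k hk
    simp only [hp]
    rw [show n+2-(k+1) = n+1-k from by omega]
    ring
  have eB : B * L (n+1) A B = ∑ j ∈ range (n+3),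
      (if 0 ≤ j ∧ j ≤ (n+1)+0 then cc (n+1) (j-0) else 0) * p j := by
    rw [L, Finset.mul_sum, ← align2 (n+1) 0 (n+3) (by omega) (cc (n+1)) p]
    apply Finset.sum_congr rfl
    intro k hk
    simp only [Finset.mem_range] at hk
    simp only [hp]
    rw [show n+2-(k+0) = (n+1-k)+1 from by omega]
    ring
  have eA2 : A^2 * L n A B = ∑ j ∈ range (n+3),
      (if 2 ≤ j ∧ j ≤ n+2 then cc n (j-2) else 0) * p j := by
    rw [L, Finset.mul_sum, ← align2 n 2 (n+3) (by omega) (cc n) p]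
    apply Finset.sum_congr rfl
    intro k hk
    simp only [hp]
    rw [show n+2-(k+2) = n-k from by omega]
    ring
  have eAB : A*B * L n A B = ∑ j ∈ range (n+3),
      (if 1 ≤ j ∧ j ≤ n+1 then cc n (j-1) else 0) * p j := by
    rw [L, Finset.mul_sum, ← align2 n 1 (n+3) (by omega) (cc n) p]
    apply Finset.sum_congr rfl
    intro k hk
    simp only [Finset.mem_range] at hk
    simp only [hp]
    rw [show n+2-(k+1) = (n-k)+1 from by omega]
    ring
  have eB2 : B^2 * L n A B = ∑ j ∈ range (n+3),
      (if 0 ≤ j ∧ j ≤ n+0 then cc n (j-0) else 0) * p j := by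
    rw [L, Finset.mul_sum, ← align2 n 0 (n+3) (by omega) (cc n) p]
    apply Finset.sum_congr rfl
    intro k hk
    simp only [Finset.mem_range] at hk
    simp only [hp]
    rw [show n+2-(k+0) = (n-k)+2 from by omega]
    ring
  have expand : (2*(n:ℝ)+3)*(A+B) * L (n+1) A B - ((n:ℝ)+1)*(A-B)^2 * L n A B =
      (2*(n:ℝ)+3) * (A * L (n+1) A B) + (2*(n:ℝ)+3) * (B * L (n+1) A B)
        - (((n:ℝ)+1) * (A^2 * L n A B) - 2*((n:ℝ)+1) * (A*B * L n A B)
            + ((n:ℝ)+1) * (B^2 * L n A B)) := by ring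
  rw [expand, eA, eB, eA2, eAB, eB2, eL2, Finset.mul_sum, Finset.mul_sum, Finset.mul_sum,
    Finset.mul_sum, Finset.mul_sum, Finset.mul_sum, ← Finset.sum_add_distrib,
    ← Finset.sum_sub_distrib, ← Finset.sum_add_distrib, ← Finset.sum_sub_distrib]
  apply Finset.sum_congr rfl
  intro j hj
  simp only [Finset.mem_range] at hj
  match j with
  | 0 =>
    rw [ite_cc (n+1) 0 0 (by omega), ite_cc n 0 0 (by omega)]
    norm_num
    simp only [cc, Nat.choose_zero_right]
    push_cast
    ring
  | 1 =>
    rw [ite_cc (n+1) 1 1 (by omega), ite_cc (n+1) 0 1 (by omega),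
        ite_cc n 1 1 (by omega), ite_cc n 0 1 (by omega)]
    norm_num
    simp only [cc, Nat.choose_zero_right, Nat.choose_one_right]
    push_cast
    ring
  | (k+2) =>
    rw [ite_cc (n+1) 1 (k+2) (by omega), ite_cc (n+1) 0 (k+2) (by omega),
        ite_cc n 2 (k+2) (by omega), ite_cc n 1 (k+2) (by omega),
        ite_cc n 0 (k+2) (by omega)]
    simp only [show k+2-1 = k+1 from rfl, show k+2-2 = k from rfl, show k+2-0 = k+2 from rfl]
    linear_combination (p (k+2)) * keyL n k


lemma Rrec (n : ℕ) (w : ℝ) :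
    ((n:ℝ)+2) * R (n+2) w = (2*(n:ℝ)+3)*(2+2*w) * R (n+1) w - 16*((n:ℝ)+1)*w * R n w := by
  set q : ℕ → ℝ := fun j => w^j with hq
  have eT2 : R (n+1) w = ∑ j ∈ range (n+3),
      (if 0 ≤ j ∧ j ≤ (n+1)+0 then dd (j-0) * dd (n+1-(j-0)) else 0) * q j := by
    rw [R, ← align2 (n+1) 0 (n+3) (by omega) (fun k => dd k * dd (n+1-k)) q]
    apply Finset.sum_congr rfl
    intro k hk
    rfl
  have eT3 : w * R (n+1) w = ∑ j ∈ range (n+3),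
      (if 1 ≤ j ∧ j ≤ (n+1)+1 then dd (j-1) * dd (n+1-(j-1)) else 0) * q j := by
    rw [R, Finset.mul_sum, ← align2 (n+1) 1 (n+3) (by omega) (fun k => dd k * dd (n+1-k)) q]
    apply Finset.sum_congr rfl
    intro k hk
    simp only [hq]
    ring
  have eT4 : w * R n w = ∑ j ∈ range (n+3),
      (if 1 ≤ j ∧ j ≤ n+1 then dd (j-1) * dd (n-(j-1)) else 0) * q j := by
    rw [R, Finset.mul_sum, ← align2 n 1 (n+3) (by omega) (fun k => dd k * dd (n-k)) q]
    apply Finset.sum_congr rfl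
    intro k hk
    simp only [hq]
    ring
  have expand : (2*(n:ℝ)+3)*(2+2*w) * R (n+1) w - 16*((n:ℝ)+1)*w * R n w =
      (2*(2*(n:ℝ)+3)) * (R (n+1) w) + (2*(2*(n:ℝ)+3)) * (w * R (n+1) w)
        - 16*((n:ℝ)+1) * (w * R n w) := by ring
  have eT1 : R (n+2) w = ∑ j ∈ range (n+3), dd j * dd (n+2-j) * q j := by rfl
  rw [expand, eT3, eT4, eT2, eT1, Finset.mul_sum, Finset.mul_sum, Finset.mul_sum,
    Finset.mul_sum, ← Finset.sum_add_distrib, ← Finset.sum_sub_distrib]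
  apply Finset.sum_congr rfl
  intro j hj
  simp only [Finset.mem_range] at hj
  match j with
  | 0 =>
    have h2 : (0 ≤ 0 ∧ 0 ≤ (n+1)+0) := by omega
    rw [if_pos h2, if_neg (by omega), if_neg (by omega)]
    simp only [Nat.sub_zero, Nat.sub_self]
    have := ddrec (n+1)
    push_cast at this
    rw [show n+1+1 = n+2 from rfl] at this
    have hd0 : dd 0 = 1 := by simp [dd]
    simp only [hq, hd0]
    linear_combination (w^(0:ℕ) : ℝ) * this
  | (i+1) =>
    rcases Nat.lt_or_ge i (n+1) with hi | hi
    · -- i ≤ n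
      obtain ⟨M, hM⟩ := Nat.le.dest (show i ≤ n from by omega)
      subst hM
      rw [if_pos (by omega), if_pos (by omega), if_pos (by omega)]
      simp only [show i+1-1 = i from rfl, show i+1-0 = i+1 from rfl]
      rw [show i+M+2-(i+1) = M+1 from by omega, show i+M+1-(i+1) = M from by omega,
          show i+M+1-i = M+1 from by omega, show i+M-i = M from by omega]
      have := keyR i M
      push_cast
      linear_combination (q (i+1)) * this
    · -- i = n+1, j = n+2
      have hin : i = n+1 := by omega
      subst hin
      rw [if_neg (by omega), if_pos (by omega), if_neg (by omega)]
      simp only [show n+1+1-1 = n+1 from rfl]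
      rw [show n+2-(n+1+1) = 0 from by omega, show n+1-(n+1) = 0 from by omega]
      have := ddrec (n+1)
      push_cast at this
      have hd0 : dd 0 = 1 := by simp [dd]
      rw [show n+1+1 = (n+1)+1 from rfl]
      simp only [hd0]
      linear_combination (q (n+2)) * this


lemma mainL (n : ℕ) (v : ℝ) : L n ((1+v)^2) ((1-v)^2) = R n (v^2) := by
  have key : ∀ m : ℕ, L m ((1+v)^2) ((1-v)^2) = R m (v^2) ∧
      L (m+1) ((1+v)^2) ((1-v)^2) = R (m+1) (v^2) := by
    intro m
    induction m with
    | zero =>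
      constructor
      · simp [L, R, cc, dd]
      · rw [L, R]
        simp [Finset.sum_range_succ, cc, dd]
        ring
    | succ m ih =>
      refine ⟨ih.2, ?_⟩
      have hcancel : ((m:ℝ)+2) * L (m+2) ((1+v)^2) ((1-v)^2) = ((m:ℝ)+2) * R (m+2) (v^2) := by
        calc ((m:ℝ)+2) * L (m+2) ((1+v)^2) ((1-v)^2)
            = (2*(m:ℝ)+3)*(((1+v)^2)+((1-v)^2)) * L (m+1) ((1+v)^2) ((1-v)^2)
              - ((m:ℝ)+1)*(((1+v)^2)-((1-v)^2))^2 * L m ((1+v)^2) ((1-v)^2) := Lrec m _ _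
          _ = (2*(m:ℝ)+3)*(2+2*(v^2)) * R (m+1) (v^2) - 16*((m:ℝ)+1)*(v^2) * R m (v^2) := by
              rw [ih.1, ih.2]; ring
          _ = ((m:ℝ)+2) * R (m+2) (v^2) := (Rrec m (v^2)).symm
      have hne : ((m:ℝ)+2) ≠ 0 := by positivity
      exact mul_left_cancel₀ hne hcancel
  exact (key n).1


lemma lemB (n k : ℕ) (hk : k ≤ n) :
    (((2*n).choose n : ℝ)) * ((n.choose k : ℝ))^2 =
      ((2*n).choose (2*k) : ℝ) * ((2*k).choose k : ℝ) * ((2*(n-k)).choose (n-k) : ℝ) := by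
  obtain ⟨j, hj⟩ := Nat.le.dest hk
  subst hj
  rw [show k + j - k = j from by omega]
  rw [Nat.cast_choose ℝ (show k + j ≤ 2*(k+j) from by omega),
      Nat.cast_choose ℝ (show k ≤ k + j from by omega),
      Nat.cast_choose ℝ (show 2*k ≤ 2*(k+j) from by omega),
      Nat.cast_choose ℝ (show k ≤ 2*k from by omega),
      Nat.cast_choose ℝ (show j ≤ 2*j from by omega)]
  rw [show 2*(k+j) - (k+j) = k+j from by omega, show k+j-k = j from by omega,
      show 2*(k+j) - 2*k = 2*j from by omega, show 2*k-k = k from by omega,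
      show 2*j-j = j from by omega]
  have f1 : ((k+j).factorial : ℝ) ≠ 0 := Nat.cast_ne_zero.2 (Nat.factorial_ne_zero _)
  have f2 : (k.factorial : ℝ) ≠ 0 := Nat.cast_ne_zero.2 (Nat.factorial_ne_zero _)
  have f3 : (j.factorial : ℝ) ≠ 0 := Nat.cast_ne_zero.2 (Nat.factorial_ne_zero _)
  have f4 : ((2*k).factorial : ℝ) ≠ 0 := Nat.cast_ne_zero.2 (Nat.factorial_ne_zero _)
  have f5 : ((2*j).factorial : ℝ) ≠ 0 := Nat.cast_ne_zero.2 (Nat.factorial_ne_zero _)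
  field_simp


end Stmt10

section
open Stmt10 Finset

/-- For `n ≥ 1` and all real `x`,
`F_n(x) = 4^{-n} C(2n,n) ∑ₖ 4ᵏ C(n,k)² C(2n,2k)⁻¹ (x-1/2)^{2k}`. -/
theorem stmt_10 (n : ℕ) (hn : 1 ≤ n) (x : ℝ) :
    (∑ k ∈ Finset.range (n + 1), (n.choose k : ℝ) ^ 2 * x ^ (2 * k) * (1 - x) ^ (2 * (n - k))) =
      ((4 : ℝ) ^ n)⁻¹ * ((2 * n).choose n : ℝ) *
        ∑ k ∈ Finset.range (n + 1),
          (4 : ℝ) ^ k * (n.choose k : ℝ) ^ 2 * (((2 * n).choose (2 * k) : ℝ))⁻¹ *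
            (x - 1 / 2) ^ (2 * k) := by
  set v : ℝ := 2*x - 1 with hv
  have h1 : (∑ k ∈ Finset.range (n + 1),
      (n.choose k : ℝ) ^ 2 * x ^ (2 * k) * (1 - x) ^ (2 * (n - k)))
      = ((4 : ℝ) ^ n)⁻¹ * L n ((1+v)^2) ((1-v)^2) := by
    rw [L, Finset.mul_sum]
    apply Finset.sum_congr rfl
    intro k hk
    simp only [Finset.mem_range] at hk
    have hk' : k ≤ n := by omega
    have hA : (1+v)^2 = 4*x^2 := by rw [hv]; ring
    have hB : (1-v)^2 = 4*(1-x)^2 := by rw [hv]; ring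
    rw [hA, hB, mul_pow, mul_pow, ← pow_mul, ← pow_mul]
    have h4 : ((4:ℝ)^n)⁻¹ * ((4:ℝ)^k * (4:ℝ)^(n-k)) = 1 := by
      rw [← pow_add, show k+(n-k) = n from by omega]
      simp
    simp only [cc]
    linear_combination (-(((n.choose k : ℝ))^2 * x^(2*k) * (1-x)^(2*(n-k)))) * h4
  have hR : ((2 * n).choose n : ℝ) *
      (∑ k ∈ Finset.range (n + 1),
        (4 : ℝ) ^ k * (n.choose k : ℝ) ^ 2 * (((2 * n).choose (2 * k) : ℝ))⁻¹ *
          (x - 1 / 2) ^ (2 * k)) = R n (v^2) := by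
    rw [R, Finset.mul_sum]
    apply Finset.sum_congr rfl
    intro k hk
    simp only [Finset.mem_range] at hk
    have hk' : k ≤ n := by omega
    have hx : x - 1/2 = v/2 := by rw [hv]; ring
    have hC : ((2*n).choose (2*k) : ℝ) ≠ 0 := by
      have : 0 < (2*n).choose (2*k) := Nat.choose_pos (by omega)
      exact_mod_cast this.ne'
    have hBk := lemB n k hk'
    have hpow : (x - 1/2)^(2*k) = ((v^2)^k) / (4:ℝ)^k := by
      rw [hx, div_pow, show ((2:ℝ))^(2*k) = 4^k from by rw [pow_mul]; norm_num, pow_mul]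
    rw [hpow]
    simp only [dd]
    have h4k : ((4:ℝ)^k) ≠ 0 := by positivity
    field_simp
    linear_combination ((v^2)^k) * hBk
  rw [h1, mul_assoc, hR, mainL]

end
end

section
/- Let $c<0$ be real and $l\in\mathbb{N}$, $l\ge1$, and set $n=-cl$. Define $S_{n,c}(x)=\sum_{k=0}^{l}\binom{l}{k}^2 (-cx)^{2k}(1+cx)^{2(l-k)}$ for $x\in[0,-1/c]$. Then $S_{n,c}$ is a convex function on $[0,-1/c]$. -/
open scoped BigOperators
open Finset Complex

/-- Orthogonality of roots of unity. -/
lemma stmt11_orth {N : ℕ} (hN : N ≠ 0) {z : ℂ} (hz : IsPrimitiveRoot z N)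
    {k m : ℕ} (hk : k < N) (hm : m < N) :
    ∑ j ∈ Finset.range N, (z ^ k * (z⁻¹) ^ m) ^ j = if k = m then (N : ℂ) else 0 := by
  have hz0 : z ≠ 0 := hz.ne_zero hN
  rcases eq_or_ne k m with rfl | hkm
  · have h1 : z ^ k * (z⁻¹) ^ k = 1 := by
      rw [inv_pow, mul_inv_cancel₀ (pow_ne_zero _ hz0)]
    rw [if_pos rfl]
    simp only [h1, one_pow]
    simp
  · have hq1 : z ^ k * (z⁻¹) ^ m ≠ 1 := by
      intro h
      rw [inv_pow, ← div_eq_mul_inv, div_eq_one_iff_eq (pow_ne_zero _ hz0)] at h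
      exact hkm (hz.pow_inj hk hm h)
    have hqN : (z ^ k * (z⁻¹) ^ m) ^ N = 1 := by
      have h1 : z ^ N = 1 := hz.pow_eq_one
      rw [mul_pow, ← pow_mul, ← pow_mul, mul_comm k N, mul_comm m N, pow_mul, pow_mul, h1]
      simp [inv_pow, h1]
    rw [if_neg hkm, geom_sum_eq hq1, hqN, sub_self, zero_div]

/-- Parseval-type identity expressing the sum of squared Bernstein terms as an
average of `normSq` powers over roots of unity. -/
lemma stmt11_key (l : ℕ) (t : ℝ) :
    ∑ k ∈ Finset.range (l + 1), (l.choose k : ℝ) ^ 2 * t ^ (2 * k) * (1 - t) ^ (2 * (l - k))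
      = (((l + 1 : ℕ) : ℝ))⁻¹ * ∑ j ∈ Finset.range (l + 1),
          (Complex.normSq ((t : ℂ) * Complex.exp (2 * Real.pi * Complex.I / (l + 1 : ℕ)) ^ j
            + (1 - (t : ℂ)))) ^ l := by
  set N := l + 1 with hNdef
  have hN : N ≠ 0 := Nat.succ_ne_zero l
  set ζ : ℂ := Complex.exp (2 * Real.pi * Complex.I / N) with hζdef
  have hζ : IsPrimitiveRoot ζ N := Complex.isPrimitiveRoot_exp N hN
  have hζ0 : ζ ≠ 0 := hζ.ne_zero hN
  have hconj : (starRingEnd ℂ) ζ = ζ⁻¹ := by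
    rw [hζdef, ← Complex.exp_conj, ← Complex.exp_neg]
    congr 1
    simp [map_div₀, Complex.conj_I, map_ofNat]
    ring
  set a : ℕ → ℂ := fun k => (l.choose k : ℂ) * (t : ℂ) ^ k * (1 - (t : ℂ)) ^ (l - k) with hadef
  set w : ℕ → ℂ := fun j => (t : ℂ) * ζ ^ j + (1 - (t : ℂ)) with hwdef
  have expand : ∀ (u : ℂ), ((t : ℂ) * u + (1 - (t : ℂ))) ^ l
      = ∑ k ∈ Finset.range N, a k * u ^ k := by
    intro u
    rw [add_pow]
    refine Finset.sum_congr rfl fun k _ => ?_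
    rw [hadef]
    ring
  have hconjw : ∀ j, (starRingEnd ℂ) (w j) = (t : ℂ) * (ζ⁻¹) ^ j + (1 - (t : ℂ)) := by
    intro j
    simp [hwdef, map_add, map_mul, map_pow, hconj, Complex.conj_ofReal]
  have step3 : ∑ j ∈ Finset.range N, (w j * (starRingEnd ℂ) (w j)) ^ l
      = (N : ℂ) * ∑ k ∈ Finset.range N, a k ^ 2 := by
    have e1 : ∀ j, (w j * (starRingEnd ℂ) (w j)) ^ l
        = (∑ k ∈ Finset.range N, a k * (ζ ^ j) ^ k)
          * (∑ m ∈ Finset.range N, a m * ((ζ⁻¹) ^ j) ^ m) := by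
      intro j
      rw [mul_pow, hwdef]
      simp only
      rw [expand (ζ ^ j), hconjw j, expand ((ζ⁻¹) ^ j)]
    calc ∑ j ∈ Finset.range N, (w j * (starRingEnd ℂ) (w j)) ^ l
        = ∑ j ∈ Finset.range N, ∑ k ∈ Finset.range N, ∑ m ∈ Finset.range N,
            (a k * (ζ ^ j) ^ k) * (a m * ((ζ⁻¹) ^ j) ^ m) := by
          refine Finset.sum_congr rfl fun j _ => ?_
          rw [e1 j, Finset.sum_mul_sum]
      _ = ∑ k ∈ Finset.range N, ∑ m ∈ Finset.range N, ∑ j ∈ Finset.range N,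
            (a k * (ζ ^ j) ^ k) * (a m * ((ζ⁻¹) ^ j) ^ m) := by
          rw [Finset.sum_comm]
          exact Finset.sum_congr rfl fun k _ => Finset.sum_comm
      _ = ∑ k ∈ Finset.range N, ∑ m ∈ Finset.range N,
            a k * a m * ∑ j ∈ Finset.range N, (ζ ^ k * (ζ⁻¹) ^ m) ^ j := by
          refine Finset.sum_congr rfl fun k _ => Finset.sum_congr rfl fun m _ => ?_
          rw [Finset.mul_sum]
          refine Finset.sum_congr rfl fun j _ => ?_
          rw [mul_pow, ← pow_mul, ← pow_mul, mul_comm j k, mul_comm j m,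
            pow_mul, pow_mul]
          ring
      _ = ∑ k ∈ Finset.range N, a k * a k * (N : ℂ) := by
          refine Finset.sum_congr rfl fun k hk => ?_
          rw [Finset.mem_range] at hk
          rw [Finset.sum_congr rfl fun m hm =>
            by rw [stmt11_orth hN hζ hk (Finset.mem_range.mp hm)]]
          simp [Finset.sum_ite_eq, hk, mul_ite]
      _ = (N : ℂ) * ∑ k ∈ Finset.range N, a k ^ 2 := by
          rw [Finset.mul_sum]
          exact Finset.sum_congr rfl fun k _ => by ring
  have step4 : ∑ j ∈ Finset.range N, ((Complex.normSq (w j) : ℝ) : ℂ) ^ l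
      = (N : ℂ) * ∑ k ∈ Finset.range N, a k ^ 2 := by
    rw [← step3]
    exact Finset.sum_congr rfl fun j _ => by rw [Complex.mul_conj]
  have real_eq : ∑ j ∈ Finset.range N, (Complex.normSq (w j)) ^ l
      = (N : ℝ) * ∑ k ∈ Finset.range N,
          ((l.choose k : ℝ) * t ^ k * (1 - t) ^ (l - k)) ^ 2 := by
    have := step4
    apply Complex.ofReal_injective
    push_cast
    rw [this]
  have hNR : ((N : ℝ)) ≠ 0 := Nat.cast_ne_zero.mpr hN
  have sq_eq : ∀ k, ((l.choose k : ℝ) * t ^ k * (1 - t) ^ (l - k)) ^ 2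
      = (l.choose k : ℝ) ^ 2 * t ^ (2 * k) * (1 - t) ^ (2 * (l - k)) := by
    intro k
    rw [mul_pow, mul_pow, ← pow_mul, ← pow_mul, mul_comm k 2, mul_comm (l - k) 2]
  calc ∑ k ∈ Finset.range (l + 1), (l.choose k : ℝ) ^ 2 * t ^ (2 * k) * (1 - t) ^ (2 * (l - k))
      = ∑ k ∈ Finset.range N, ((l.choose k : ℝ) * t ^ k * (1 - t) ^ (l - k)) ^ 2 := by
        exact (Finset.sum_congr rfl fun k _ => (sq_eq k)).symm
    _ = ((N : ℝ))⁻¹ * ∑ j ∈ Finset.range N, (Complex.normSq (w j)) ^ l := by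
        rw [real_eq, ← mul_assoc, inv_mul_cancel₀ hNR, one_mul]
    _ = (((l + 1 : ℕ) : ℝ))⁻¹ * ∑ j ∈ Finset.range (l + 1),
          (Complex.normSq ((t : ℂ) * Complex.exp (2 * Real.pi * Complex.I / (l + 1 : ℕ)) ^ j
            + (1 - (t : ℂ)))) ^ l := rfl

lemma stmt11_sum_convex {s : Set ℝ} (hs : Convex ℝ s) (t : Finset ℕ) (g : ℕ → ℝ → ℝ)
    (h : ∀ j ∈ t, ConvexOn ℝ s (g j)) : ConvexOn ℝ s (fun x => ∑ j ∈ t, g j x) := by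
  induction t using Finset.induction_on with
  | empty => simpa using convexOn_const 0 hs
  | @insert i t hit ih =>
    simp only [Finset.sum_insert hit]
    exact (h i (Finset.mem_insert_self i t)).add
      (ih fun j hj => h j (Finset.mem_insert_of_mem hj))

lemma stmt11_quadratic (A B C : ℝ) (hA : 0 ≤ A) :
    ConvexOn ℝ Set.univ (fun x : ℝ => A * x ^ 2 + B * x + C) := by
  refine ⟨convex_univ, ?_⟩
  intro x _ y _ a b ha hb hab
  simp only [smul_eq_mul]
  have hb' : b = 1 - a := by linarith
  subst hb'
  nlinarith [mul_nonneg (mul_nonneg (mul_nonneg hA ha) hb) (sq_nonneg (x - y))]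

/-- For `c < 0`, `n = -cl` with `l ≥ 1`, the sum of squared fundamental functions
`S_{n,c}(x) = ∑ₖ C(l,k)² (-cx)^{2k} (1+cx)^{2(l-k)}` is convex on `[0,-1/c]`. -/
theorem stmt_11 (c : ℝ) (hc : c < 0) (l : ℕ) (hl : 1 ≤ l) (n : ℝ) (hn : n = -c * l) :
    ConvexOn ℝ (Set.Icc (0:ℝ) (-1/c))
      (fun x : ℝ => ∑ k ∈ Finset.range (l + 1),
        (l.choose k : ℝ) ^ 2 * (-c * x) ^ (2 * k) * (1 + c * x) ^ (2 * (l - k))) := by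
  set ζ : ℂ := Complex.exp (2 * Real.pi * Complex.I / (l + 1 : ℕ)) with hζdef
  set g : ℕ → ℝ → ℝ := fun j x =>
    (((l + 1 : ℕ) : ℝ))⁻¹ *
      (Complex.normSq (((-c * x : ℝ) : ℂ) * ζ ^ j + (1 - ((-c * x : ℝ) : ℂ)))) ^ l with hgdef
  have hfun : (fun x : ℝ => ∑ k ∈ Finset.range (l + 1),
        (l.choose k : ℝ) ^ 2 * (-c * x) ^ (2 * k) * (1 + c * x) ^ (2 * (l - k)))
      = fun x => ∑ j ∈ Finset.range (l + 1), g j x := by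
    funext x
    have h1 := stmt11_key l (-c * x)
    have h2 : (1 : ℝ) + c * x = 1 - (-c * x) := by ring
    rw [h2]
    rw [h1, Finset.mul_sum]
  rw [hfun]
  have hconv : ∀ j ∈ Finset.range (l + 1), ConvexOn ℝ (Set.Icc (0:ℝ) (-1/c)) (g j) := by
    intro j _
    set r : ℝ := (ζ ^ j).re
    set s : ℝ := (ζ ^ j).im
    have hquad : (fun x : ℝ =>
        Complex.normSq (((-c * x : ℝ) : ℂ) * ζ ^ j + (1 - ((-c * x : ℝ) : ℂ))))
        = fun x => (c ^ 2 * ((r - 1) ^ 2 + s ^ 2)) * x ^ 2 + (-(2 * c * (r - 1))) * x + 1 := by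
      funext x
      simp only [Complex.normSq_apply, Complex.add_re, Complex.add_im, Complex.sub_re,
        Complex.sub_im, Complex.mul_re, Complex.mul_im, Complex.one_re, Complex.one_im,
        Complex.ofReal_re, Complex.ofReal_im]
      ring
    have hA : 0 ≤ c ^ 2 * ((r - 1) ^ 2 + s ^ 2) :=
      mul_nonneg (sq_nonneg _) (add_nonneg (sq_nonneg _) (sq_nonneg _))
    have hbase : ConvexOn ℝ Set.univ (fun x : ℝ =>
        Complex.normSq (((-c * x : ℝ) : ℂ) * ζ ^ j + (1 - ((-c * x : ℝ) : ℂ)))) := by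
      rw [hquad]
      exact stmt11_quadratic _ _ _ hA
    have hnn : ∀ ⦃x : ℝ⦄, x ∈ Set.univ → 0 ≤
        Complex.normSq (((-c * x : ℝ) : ℂ) * ζ ^ j + (1 - ((-c * x : ℝ) : ℂ))) :=
      fun x _ => Complex.normSq_nonneg _
    have hpow := hbase.pow hnn l
    have hpow' : ConvexOn ℝ Set.univ (fun x : ℝ =>
        (Complex.normSq (((-c * x : ℝ) : ℂ) * ζ ^ j + (1 - ((-c * x : ℝ) : ℂ)))) ^ l) := by
      exact hpow
    have hsmul := hpow'.smul (c := (((l + 1 : ℕ) : ℝ))⁻¹) (inv_nonneg.mpr (Nat.cast_nonneg _))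
    have := hsmul.subset (Set.subset_univ (Set.Icc (0:ℝ) (-1/c))) (convex_Icc (0:ℝ) (-1/c))
    simpa [hgdef, smul_eq_mul] using this
  exact stmt11_sum_convex (convex_Icc _ _) _ _ hconv
end

section
/- Let $n\in\mathbb{N}$, $n\ge1$, and define $F_n(x)=\sum_{k=0}^{n}\binom{n}{k}^2 x^{2k}(1-x)^{2(n-k)}$. Then for every $x\in[0,1]$, $F_n(x)=\frac{1}{\pi}\int_0^1\big(t+(1-t)(1-2x)^2\big)^{n}\,\frac{dt}{\sqrt{t(1-t)}}$. -/
open scoped BigOperators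
open Real Set Finset MeasureTheory

lemma fourier_exp (n : ℕ) (x θ : ℝ) :
    (((1-x)^2 + x^2 - 2*x*(1-x)*Real.cos θ)^n : ℝ) =
    ∑ k ∈ Finset.range (n+1), ∑ l ∈ Finset.range (n+1),
      (((n.choose k : ℝ) * (-x)^k * (1-x)^(n-k)) * ((n.choose l : ℝ) * (-x)^l * (1-x)^(n-l))) *
        Real.cos (((k:ℝ) - (l:ℝ)) * θ) := by
  set E : ℂ := Complex.exp (θ * Complex.I) with hEdef
  set E' : ℂ := Complex.exp (-(θ * Complex.I)) with hE'def
  have hEE' : E * E' = 1 := by rw [hEdef, hE'def, ← Complex.exp_add]; simp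
  have hcos : E + E' = 2 * Complex.cos θ := by
    rw [hEdef, hE'def, Complex.exp_mul_I, ← neg_mul, Complex.exp_mul_I, Complex.sin_neg,
      Complex.cos_neg]
    ring
  have hz : ((-x : ℂ) * E + ((1:ℂ) - x)) * ((-x : ℂ) * E' + ((1:ℂ) - x)) =
      (((1-x)^2 + x^2 - 2*x*(1-x)*Real.cos θ : ℝ) : ℂ) := by
    push_cast
    have h1 : ((-x : ℂ) * E + ((1:ℂ) - x)) * ((-x : ℂ) * E' + ((1:ℂ) - x))
        = (1-(x:ℂ))^2 + x^2 * (E * E') - x * (1 - x) * (E + E') := by ring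
    rw [h1, hEE', hcos]; ring
  have key : ((((1-x)^2 + x^2 - 2*x*(1-x)*Real.cos θ)^n : ℝ) : ℂ) =
      ∑ k ∈ Finset.range (n+1), ∑ l ∈ Finset.range (n+1),
        ((((n.choose k : ℝ) * (-x)^k * (1-x)^(n-k)) * ((n.choose l : ℝ) * (-x)^l * (1-x)^(n-l)) : ℝ) : ℂ)
          * Complex.exp ((((k:ℝ) - (l:ℝ)) * θ : ℝ) * Complex.I) := by
    rw [Complex.ofReal_pow, ← hz, mul_pow, add_pow, add_pow, Finset.sum_mul_sum]
    refine Finset.sum_congr rfl fun k hk => Finset.sum_congr rfl fun l hl => ?_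
    have hEk : E ^ k * E' ^ l = Complex.exp ((((k:ℝ) - (l:ℝ)) * θ : ℝ) * Complex.I) := by
      rw [hEdef, hE'def, ← Complex.exp_nat_mul, ← Complex.exp_nat_mul, ← Complex.exp_add]
      congr 1
      push_cast
      ring
    rw [← hEk]
    push_cast
    ring
  calc (((1-x)^2 + x^2 - 2*x*(1-x)*Real.cos θ)^n : ℝ)
      = ((((1-x)^2 + x^2 - 2*x*(1-x)*Real.cos θ)^n : ℝ) : ℂ).re := (Complex.ofReal_re _).symm
    _ = _ := by
        rw [key, Complex.re_sum]
        refine Finset.sum_congr rfl fun k hk => ?_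
        rw [Complex.re_sum]
        refine Finset.sum_congr rfl fun l hl => ?_
        rw [Complex.re_ofReal_mul, Complex.exp_ofReal_mul_I_re]


lemma cos_orth (m : ℤ) (hm : m ≠ 0) : ∫ θ in (0:ℝ)..π, Real.cos (m * θ) = 0 := by
  have hc : (m:ℝ) ≠ 0 := Int.cast_ne_zero.mpr hm
  have := intervalIntegral.integral_comp_mul_left (a := (0:ℝ)) (b := π) (fun y => Real.cos y) hc
  rw [this]
  simp [integral_cos, Real.sin_int_mul_pi]

set_option maxHeartbeats 1000000 in
lemma my_integral_pow (n : ℕ) (x : ℝ) :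
    ∫ θ in (0:ℝ)..π, ((1-x)^2 + x^2 - 2*x*(1-x)*Real.cos θ)^n
      = π * ∑ k ∈ Finset.range (n+1), ((n.choose k : ℝ) * (-x)^k * (1-x)^(n-k))^2 := by
  have hint : ∀ (c m : ℝ), IntervalIntegrable (fun θ => c * Real.cos (m*θ))
      MeasureTheory.volume 0 π := fun c m =>
    (continuous_const.mul (Real.continuous_cos.comp (continuous_const.mul continuous_id))).intervalIntegrable _ _
  simp_rw [fourier_exp n x]
  have hswap : (∫ θ in (0:ℝ)..π, ∑ k ∈ Finset.range (n+1), ∑ l ∈ Finset.range (n+1),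
      (((n.choose k : ℝ) * (-x)^k * (1-x)^(n-k)) * ((n.choose l : ℝ) * (-x)^l * (1-x)^(n-l))) *
        Real.cos (((k:ℝ) - (l:ℝ)) * θ))
      = ∑ k ∈ Finset.range (n+1), ∫ θ in (0:ℝ)..π, ∑ l ∈ Finset.range (n+1),
      (((n.choose k : ℝ) * (-x)^k * (1-x)^(n-k)) * ((n.choose l : ℝ) * (-x)^l * (1-x)^(n-l))) *
        Real.cos (((k:ℝ) - (l:ℝ)) * θ) :=
    intervalIntegral.integral_finset_sum (fun k _ =>
      ((continuous_finset_sum _ (fun l _ => continuous_const.mul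
        (Real.continuous_cos.comp (continuous_const.mul continuous_id)))).intervalIntegrable _ _))
  rw [hswap]
  have hterm : ∀ k ∈ Finset.range (n+1), ∀ l ∈ Finset.range (n+1),
      (∫ θ in (0:ℝ)..π,
        (((n.choose k : ℝ) * (-x)^k * (1-x)^(n-k)) * ((n.choose l : ℝ) * (-x)^l * (1-x)^(n-l))) *
        Real.cos (((k:ℝ) - (l:ℝ)) * θ))
      = if l = k then ((n.choose k : ℝ) * (-x)^k * (1-x)^(n-k))^2 * π else 0 := by
    intro k _ l _
    rw [intervalIntegral.integral_const_mul]
    by_cases h : l = k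
    · subst h
      simp [intervalIntegral.integral_const, sq]
    · have hm : ((k:ℤ) - (l:ℤ)) ≠ 0 := sub_ne_zero.mpr (fun hh => h (by exact_mod_cast hh.symm))
      have : ((k:ℝ) - (l:ℝ)) = (((k:ℤ) - (l:ℤ) : ℤ) : ℝ) := by push_cast; ring
      rw [this, cos_orth _ hm, mul_zero]
      simp [h]
  calc (∑ k ∈ Finset.range (n+1), ∫ θ in (0:ℝ)..π, ∑ l ∈ Finset.range (n+1),
        (((n.choose k : ℝ) * (-x)^k * (1-x)^(n-k)) * ((n.choose l : ℝ) * (-x)^l * (1-x)^(n-l))) *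
        Real.cos (((k:ℝ) - (l:ℝ)) * θ))
      = ∑ k ∈ Finset.range (n+1), ∑ l ∈ Finset.range (n+1),
          if l = k then ((n.choose k : ℝ) * (-x)^k * (1-x)^(n-k))^2 * π else 0 := by
        refine Finset.sum_congr rfl fun k hk => ?_
        rw [intervalIntegral.integral_finset_sum (fun l _ => hint _ _)]
        exact Finset.sum_congr rfl fun l hl => hterm k hk l hl
    _ = π * ∑ k ∈ Finset.range (n+1), ((n.choose k : ℝ) * (-x)^k * (1-x)^(n-k))^2 := by
        rw [Finset.mul_sum]
        refine Finset.sum_congr rfl fun k hk => ?_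
        rw [Finset.sum_ite_eq' (Finset.range (n+1)) k]
        simp [Finset.mem_range.mp hk, mul_comm]


lemma subst_lemma (g : ℝ → ℝ) :
    ∫ t in (0:ℝ)..1, g t = ∫ θ in Ioo (0:ℝ) π, |Real.sin (θ/2) * Real.cos (θ/2)| • g (Real.sin (θ/2)^2) := by
  have himg : (fun θ : ℝ => Real.sin (θ/2)^2) '' Ioo 0 π = Ioo (0:ℝ) 1 := by
    ext t
    constructor
    · rintro ⟨θ, ⟨h0, hπ⟩, rfl⟩
      have h1 : 0 < Real.sin (θ/2) := Real.sin_pos_of_pos_of_lt_pi (by linarith) (by linarith [Real.pi_pos])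
      have h2 : 0 < Real.cos (θ/2) := Real.cos_pos_of_mem_Ioo ⟨by linarith [Real.pi_pos], by linarith⟩
      constructor
      · positivity
      · nlinarith [Real.sin_sq_add_cos_sq (θ/2)]
    · rintro ⟨h0, h1⟩
      refine ⟨2 * Real.arcsin (Real.sqrt t), ⟨?_, ?_⟩, ?_⟩
      · have := Real.arcsin_pos.mpr (Real.sqrt_pos.mpr h0)
        linarith
      · have hlt : Real.sqrt t < 1 := by
          nlinarith [Real.sq_sqrt h0.le, Real.sqrt_nonneg t]
        have := Real.arcsin_lt_pi_div_two.mpr hlt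
        linarith
      · show Real.sin ((2 * Real.arcsin (Real.sqrt t))/2)^2 = t
        have : (2 * Real.arcsin (Real.sqrt t)) / 2 = Real.arcsin (Real.sqrt t) := by ring
        rw [this, Real.sin_arcsin (by linarith [Real.sqrt_nonneg t]) (by
          nlinarith [Real.sq_sqrt h0.le, Real.sqrt_nonneg t]), Real.sq_sqrt h0.le]
  have hderiv : ∀ θ ∈ Ioo (0:ℝ) π, HasDerivWithinAt (fun θ : ℝ => Real.sin (θ/2)^2)
      (Real.sin (θ/2) * Real.cos (θ/2)) (Ioo 0 π) θ := by
    intro θ _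
    have h1 : HasDerivAt (fun θ : ℝ => θ/2) (1/2) θ := (hasDerivAt_id θ).div_const 2
    have h2 : HasDerivAt (fun θ : ℝ => Real.sin (θ/2)) (Real.cos (θ/2) * (1/2)) θ :=
      by have := (Real.hasDerivAt_sin (θ/2)).comp θ h1; exact this
    have h3 := (h2.fun_pow 2).hasDerivWithinAt (s := Ioo (0:ℝ) π)
    convert h3 using 1
    · rfl
    · rfl
    push_cast
    ring
  have hinj : InjOn (fun θ : ℝ => Real.sin (θ/2)^2) (Ioo 0 π) := by
    intro a ha b hb hab
    have ha1 : 0 ≤ Real.sin (a/2) := Real.sin_nonneg_of_nonneg_of_le_pi (by linarith [ha.1]) (by linarith [ha.2, Real.pi_pos])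
    have hb1 : 0 ≤ Real.sin (b/2) := Real.sin_nonneg_of_nonneg_of_le_pi (by linarith [hb.1]) (by linarith [hb.2, Real.pi_pos])
    have hs : Real.sin (a/2) = Real.sin (b/2) := by
      nlinarith [hab]
    have := Real.injOn_sin ⟨by linarith [ha.1, Real.pi_pos], by linarith [ha.2]⟩
      ⟨by linarith [hb.1, Real.pi_pos], by linarith [hb.2]⟩ hs
    linarith
  rw [intervalIntegral.integral_of_le zero_le_one, MeasureTheory.integral_Ioc_eq_integral_Ioo,
    ← himg, integral_image_eq_integral_abs_deriv_smul measurableSet_Ioo hderiv hinj]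


/-- For `n ≥ 1` and `x ∈ [0,1]`,
`F_n(x) = (1/π) ∫_0^1 (t+(1-t)(1-2x)²)ⁿ dt/√(t(1-t))`. -/
theorem stmt_12 (n : ℕ) (hn : 1 ≤ n) (x : ℝ) (hx : x ∈ Set.Icc (0:ℝ) 1) :
    (∑ k ∈ Finset.range (n + 1), (n.choose k : ℝ) ^ 2 * x ^ (2 * k) * (1 - x) ^ (2 * (n - k))) =
      (1 / Real.pi) * ∫ t in (0:ℝ)..1,
        (t + (1 - t) * (1 - 2 * x) ^ 2) ^ n / Real.sqrt (t * (1 - t)) := by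
  have hI : (∫ t in (0:ℝ)..1, (t + (1 - t) * (1 - 2 * x) ^ 2) ^ n / Real.sqrt (t * (1 - t)))
      = π * ∑ k ∈ Finset.range (n+1), ((n.choose k : ℝ) * (-x)^k * (1-x)^(n-k))^2 := by
    rw [subst_lemma (fun t => (t + (1 - t) * (1 - 2 * x) ^ 2) ^ n / Real.sqrt (t * (1 - t)))]
    have hcongr : ∫ θ in Ioo (0:ℝ) π,
        |Real.sin (θ/2) * Real.cos (θ/2)| •
          ((Real.sin (θ/2)^2 + (1 - Real.sin (θ/2)^2) * (1 - 2 * x) ^ 2) ^ n /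
            Real.sqrt (Real.sin (θ/2)^2 * (1 - Real.sin (θ/2)^2)))
        = ∫ θ in Ioo (0:ℝ) π, ((1-x)^2 + x^2 - 2*x*(1-x)*Real.cos θ)^n := by
      refine MeasureTheory.setIntegral_congr_fun measurableSet_Ioo ?_
      intro θ hθ
      obtain ⟨h0, hπ⟩ := hθ
      have hs : 0 < Real.sin (θ/2) :=
        Real.sin_pos_of_pos_of_lt_pi (by linarith) (by linarith [Real.pi_pos])
      have hc : 0 < Real.cos (θ/2) :=
        Real.cos_pos_of_mem_Ioo ⟨by linarith [Real.pi_pos], by linarith⟩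
      have hsq : Real.sin (θ/2)^2 * (1 - Real.sin (θ/2)^2)
          = (Real.sin (θ/2) * Real.cos (θ/2))^2 := by
        nlinarith [Real.sin_sq_add_cos_sq (θ/2)]
      have hsqrt : Real.sqrt (Real.sin (θ/2)^2 * (1 - Real.sin (θ/2)^2))
          = Real.sin (θ/2) * Real.cos (θ/2) := by
        rw [hsq, Real.sqrt_sq (by positivity)]
      have hcosθ : Real.cos θ = 1 - 2 * Real.sin (θ/2)^2 := by
        have h2 := Real.cos_two_mul (θ/2)
        rw [show (2:ℝ)*(θ/2) = θ by ring] at h2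
        nlinarith [Real.sin_sq_add_cos_sq (θ/2)]
      have hbase : Real.sin (θ/2)^2 + (1 - Real.sin (θ/2)^2) * (1 - 2 * x) ^ 2
          = (1-x)^2 + x^2 - 2*x*(1-x)*Real.cos θ := by
        rw [hcosθ]; ring
      show |Real.sin (θ/2) * Real.cos (θ/2)| •
          ((Real.sin (θ/2)^2 + (1 - Real.sin (θ/2)^2) * (1 - 2 * x) ^ 2) ^ n /
            Real.sqrt (Real.sin (θ/2)^2 * (1 - Real.sin (θ/2)^2))) = _
      rw [hsqrt, hbase, abs_of_pos (by positivity), smul_eq_mul]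
      field_simp
    rw [hcongr, ← MeasureTheory.integral_Ioc_eq_integral_Ioo,
      ← intervalIntegral.integral_of_le Real.pi_pos.le, my_integral_pow]
  rw [hI, ← mul_assoc, one_div, inv_mul_cancel₀ Real.pi_ne_zero, one_mul]
  refine Finset.sum_congr rfl fun k hk => ?_
  have h1 : (((-x):ℝ)^k)^2 = x^(2*k) := by
    rw [← pow_mul, mul_comm, pow_mul, neg_sq, ← pow_mul]
  have h2 : (((1-x):ℝ)^(n-k))^2 = (1-x)^(2*(n-k)) := by
    rw [← pow_mul, mul_comm]
  rw [mul_pow, mul_pow, h1, h2]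
end

section
/- Let $n\in\mathbb{N}$, $n\ge1$, and define $F_m(x)=\sum_{k=0}^{m}\binom{m}{k}^2 x^{2k}(1-x)^{2(m-k)}$ for $m\in\mathbb{N}$. Then for every real $x$, $F_{n+1}'(x)-(1-2x)^2F_{n-1}'(x)=2(1-2x)\big((2n-1)F_{n-1}(x)-(2n+1)F_n(x)\big)$, where $F_m'$ denotes the derivative of the polynomial function $F_m$. -/
open scoped BigOperators
open Finset

private def bS (m : ℕ) (x v : ℝ) : ℝ :=
  ∑ k ∈ Finset.range (m + 1), (m.choose k : ℝ) ^ 2 * x ^ (2 * k) * v ^ (2 * (m - k))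

private def bD (m : ℕ) (x v : ℝ) : ℝ :=
  ∑ j ∈ Finset.range m,
    ((j : ℝ) + 1) * (m.choose (j + 1) : ℝ) ^ 2 * x ^ (2 * j + 1) * v ^ (2 * (m - 1 - j))

private lemma chooseR (m j : ℕ) :
    ((j : ℝ) + 1) * (m.choose (j + 1) : ℝ) = ((m : ℝ) - j) * (m.choose j : ℝ) := by
  rcases le_or_gt j m with h | h
  · have := Nat.choose_succ_right_eq m j
    have h2 := congrArg (Nat.cast : ℕ → ℝ) this
    push_cast [Nat.cast_sub h] at h2
    linarith [h2]
  · rw [Nat.choose_eq_zero_of_lt h, Nat.choose_eq_zero_of_lt (by omega)]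
    push_cast; ring

private lemma coeffR (m i : ℕ) :
    ((i : ℝ) + 2) * ((m+2).choose (i+2) : ℝ)^2 =
      ((i : ℝ) + 2) * (m.choose (i+2) : ℝ)^2
      - 2 * (((i : ℝ) + 1) * (m.choose (i+1) : ℝ)^2)
      + (i : ℝ) * (m.choose i : ℝ)^2
      + (2*(m:ℝ)+1) * ((m.choose (i+1) : ℝ)^2 - (m.choose i : ℝ)^2)
      + (2*(m:ℝ)+3) * ((m+1).choose (i+1) : ℝ)^2 := by
  have p1 : ((m+1).choose (i+1) : ℝ) = (m.choose i : ℝ) + (m.choose (i+1) : ℝ) := by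
    rw [Nat.choose_succ_succ]; push_cast; ring
  have p2 : ((m+2).choose (i+2) : ℝ)
      = (m.choose i : ℝ) + 2 * (m.choose (i+1) : ℝ) + (m.choose (i+2) : ℝ) := by
    rw [Nat.choose_succ_succ (m+1) (i+1), Nat.choose_succ_succ m i, Nat.choose_succ_succ m (i+1)]
    push_cast; ring
  have r1 := chooseR m i
  have r2 := chooseR m (i+1)
  rw [p1, p2]
  push_cast at r2 ⊢
  linear_combination (2*((m.choose i : ℝ) + 2*(m.choose (i+1) : ℝ))) * r2
    + (2*(m.choose (i+1) : ℝ)) * r1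

private lemma canL (m : ℕ) (x v : ℝ) :
    bD (m+2) x v = ((m:ℝ)+2)^2 * (x * v^(2*m+2))
      + ∑ i ∈ Finset.range (m+1),
          (((i:ℝ)+2) * ((m+2).choose (i+2) : ℝ)^2) * (x^(2*i+3) * v^(2*(m-i))) := by
  have h1 : bD (m+2) x v = ∑ j ∈ Finset.range (m+2),
      ((j : ℝ) + 1) * ((m+2).choose (j + 1) : ℝ) ^ 2 * x ^ (2 * j + 1) * v ^ (2 * (m + 1 - j)) := by
    unfold bD
    refine Finset.sum_congr rfl fun j hj => ?_
    rw [show m + 2 - 1 - j = m + 1 - j by omega]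
  rw [h1, Finset.sum_range_succ']
  have hterm : ∀ i ∈ Finset.range (m+1),
      ((↑(i+1):ℝ) + 1) * ((m+2).choose (i+1+1) : ℝ)^2 * x^(2*(i+1)+1) * v^(2*(m+1-(i+1)))
      = (((i:ℝ)+2) * ((m+2).choose (i+2) : ℝ)^2) * (x^(2*i+3) * v^(2*(m-i))) := by
    intro i hi
    rw [show m+1-(i+1) = m-i by omega, show 2*(i+1)+1 = 2*i+3 by ring, show i+1+1 = i+2 by ring]
    push_cast; ring
  rw [Finset.sum_congr rfl hterm, Nat.choose_one_right]
  push_cast; ring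

private lemma canA (m : ℕ) (x v : ℝ) :
    v^2*v^2 * bD m x v = (m:ℝ)^2 * (x * v^(2*m+2))
      + ∑ i ∈ Finset.range (m+1),
          (((i:ℝ)+2) * (m.choose (i+2) : ℝ)^2) * (x^(2*i+3) * v^(2*(m-i))) := by
  have h1 : v^2*v^2 * bD m x v = ∑ j ∈ Finset.range m,
      ((j : ℝ) + 1) * (m.choose (j + 1) : ℝ) ^ 2 * x ^ (2 * j + 1) * v ^ (2 * (m + 1 - j)) := by
    unfold bD; rw [Finset.mul_sum]
    refine Finset.sum_congr rfl fun j hj => ?_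
    rw [Finset.mem_range] at hj
    rw [show 2 * (m + 1 - j) = 2 * (m - 1 - j) + 4 by omega]
    ring
  have h2 : ∑ j ∈ Finset.range m,
      ((j : ℝ) + 1) * (m.choose (j + 1) : ℝ) ^ 2 * x ^ (2 * j + 1) * v ^ (2 * (m + 1 - j))
      = ∑ j ∈ Finset.range (m+2),
      ((j : ℝ) + 1) * (m.choose (j + 1) : ℝ) ^ 2 * x ^ (2 * j + 1) * v ^ (2 * (m + 1 - j)) := by
    refine Finset.sum_subset (Finset.range_subset_range.2 (by omega)) fun j _ hj => ?_
    rw [Finset.mem_range] at hj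
    rw [Nat.choose_eq_zero_of_lt (by omega)]
    simp
  rw [h1, h2, Finset.sum_range_succ']
  have hterm : ∀ i ∈ Finset.range (m+1),
      ((↑(i+1):ℝ) + 1) * (m.choose (i+1+1) : ℝ)^2 * x^(2*(i+1)+1) * v^(2*(m+1-(i+1)))
      = (((i:ℝ)+2) * (m.choose (i+2) : ℝ)^2) * (x^(2*i+3) * v^(2*(m-i))) := by
    intro i hi
    rw [show m+1-(i+1) = m-i by omega, show 2*(i+1)+1 = 2*i+3 by ring, show i+1+1 = i+2 by ring]
    push_cast; ring
  rw [Finset.sum_congr rfl hterm, Nat.choose_one_right]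
  push_cast; ring

private lemma canB (m : ℕ) (x v : ℝ) :
    x^2*v^2 * bD m x v = ∑ i ∈ Finset.range (m+1),
          (((i:ℝ)+1) * (m.choose (i+1) : ℝ)^2) * (x^(2*i+3) * v^(2*(m-i))) := by
  have h1 : x^2*v^2 * bD m x v = ∑ j ∈ Finset.range m,
      (((j:ℝ)+1) * (m.choose (j+1) : ℝ)^2) * (x^(2*j+3) * v^(2*(m-j))) := by
    unfold bD; rw [Finset.mul_sum]
    refine Finset.sum_congr rfl fun j hj => ?_
    rw [Finset.mem_range] at hj
    rw [show 2 * (m - j) = 2 * (m - 1 - j) + 2 by omega, show 2*j+3 = 2*j+1+2 by ring]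
    ring
  rw [h1]
  refine Finset.sum_subset (Finset.range_subset_range.2 (by omega)) fun j _ hj => ?_
  rw [Finset.mem_range] at hj
  rw [Nat.choose_eq_zero_of_lt (by omega)]
  simp

private lemma canC (m : ℕ) (x v : ℝ) :
    x^2*x^2 * bD m x v = ∑ i ∈ Finset.range (m+1),
          ((i:ℝ) * (m.choose i : ℝ)^2) * (x^(2*i+3) * v^(2*(m-i))) := by
  have h1 : x^2*x^2 * bD m x v = ∑ j ∈ Finset.range m,
      ((↑(j+1):ℝ) * (m.choose (j+1) : ℝ)^2) * (x^(2*(j+1)+3) * v^(2*(m-(j+1)))) := by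
    unfold bD; rw [Finset.mul_sum]
    refine Finset.sum_congr rfl fun j hj => ?_
    rw [show m-(j+1) = m - 1 - j by omega, show 2*(j+1)+3 = 2*j+1+4 by ring]
    push_cast; ring
  rw [h1, Finset.sum_range_succ'
    (fun i => ((i:ℝ) * (m.choose i : ℝ)^2) * (x^(2*i+3) * v^(2*(m-i)))) m]
  push_cast; ring

private lemma canD (m : ℕ) (x v : ℝ) :
    x*v^2 * bS m x v = x * v^(2*m+2) + ∑ i ∈ Finset.range (m+1),
          ((m.choose (i+1) : ℝ)^2) * (x^(2*i+3) * v^(2*(m-i))) := by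
  have h1 : x*v^2 * bS m x v = ∑ k ∈ Finset.range (m+1),
      (m.choose k : ℝ)^2 * x^(2*k+1) * v^(2*(m+1-k)) := by
    unfold bS; rw [Finset.mul_sum]
    refine Finset.sum_congr rfl fun k hk => ?_
    rw [Finset.mem_range] at hk
    rw [show 2*(m+1-k) = 2*(m-k)+2 by omega, show 2*k+1 = 2*k+1 from rfl]
    ring
  rw [h1, Finset.sum_range_succ']
  have hterm : ∀ i ∈ Finset.range m,
      (m.choose (i+1) : ℝ)^2 * x^(2*(i+1)+1) * v^(2*(m+1-(i+1)))
      = ((m.choose (i+1) : ℝ)^2) * (x^(2*i+3) * v^(2*(m-i))) := by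
    intro i hi
    rw [show m+1-(i+1) = m-i by omega, show 2*(i+1)+1 = 2*i+3 by ring]
    ring
  rw [Finset.sum_congr rfl hterm]
  have h2 : ∑ i ∈ Finset.range m, ((m.choose (i+1) : ℝ)^2) * (x^(2*i+3) * v^(2*(m-i)))
      = ∑ i ∈ Finset.range (m+1), ((m.choose (i+1) : ℝ)^2) * (x^(2*i+3) * v^(2*(m-i))) := by
    refine Finset.sum_subset (Finset.range_subset_range.2 (by omega)) fun j _ hj => ?_
    rw [Finset.mem_range] at hj
    rw [Nat.choose_eq_zero_of_lt (by omega)]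
    simp
  rw [h2, Nat.choose_zero_right]
  push_cast
  rw [show 2*(m+1) = 2*m+2 by ring]
  ring

private lemma canE (m : ℕ) (x v : ℝ) :
    x^2*x * bS m x v = ∑ i ∈ Finset.range (m+1),
          ((m.choose i : ℝ)^2) * (x^(2*i+3) * v^(2*(m-i))) := by
  unfold bS; rw [Finset.mul_sum]
  refine Finset.sum_congr rfl fun k hk => ?_
  rw [show 2*k+3 = 2*k+1+2 by ring]
  ring

private lemma canF (m : ℕ) (x v : ℝ) :
    x * bS (m+1) x v = x * v^(2*m+2) + ∑ i ∈ Finset.range (m+1),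
          (((m+1).choose (i+1) : ℝ)^2) * (x^(2*i+3) * v^(2*(m-i))) := by
  have h1 : x * bS (m+1) x v = ∑ k ∈ Finset.range (m+2),
      ((m+1).choose k : ℝ)^2 * x^(2*k+1) * v^(2*(m+1-k)) := by
    unfold bS; rw [Finset.mul_sum]
    refine Finset.sum_congr rfl fun k hk => ?_
    ring
  rw [h1, Finset.sum_range_succ']
  have hterm : ∀ i ∈ Finset.range (m+1),
      ((m+1).choose (i+1) : ℝ)^2 * x^(2*(i+1)+1) * v^(2*(m+1-(i+1)))
      = (((m+1).choose (i+1) : ℝ)^2) * (x^(2*i+3) * v^(2*(m-i))) := by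
    intro i hi
    rw [show m+1-(i+1) = m-i by omega, show 2*(i+1)+1 = 2*i+3 by ring]
    ring
  rw [Finset.sum_congr rfl hterm, Nat.choose_zero_right]
  push_cast
  rw [show 2*(m+1) = 2*m+2 by ring]
  ring

private lemma keyB (m : ℕ) (x v : ℝ) :
    bD (m+2) x v = (v^2-x^2)^2 * bD m x v
      + (2*(m:ℝ)+1)*x*(v^2-x^2) * bS m x v + (2*(m:ℝ)+3)*x * bS (m+1) x v := by
  have e : (v^2-x^2)^2 * bD m x v
      + (2*(m:ℝ)+1)*x*(v^2-x^2) * bS m x v + (2*(m:ℝ)+3)*x * bS (m+1) x v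
      = v^2*v^2 * bD m x v - 2*(x^2*v^2 * bD m x v) + x^2*x^2 * bD m x v
        + (2*(m:ℝ)+1)*((x*v^2 * bS m x v) - (x^2*x * bS m x v))
        + (2*(m:ℝ)+3)*(x * bS (m+1) x v) := by ring
  have hmerge : (∑ i ∈ Finset.range (m+1),
          (((i:ℝ)+2) * ((m+2).choose (i+2) : ℝ)^2) * (x^(2*i+3) * v^(2*(m-i))))
      = (∑ i ∈ Finset.range (m+1),
          (((i:ℝ)+2) * (m.choose (i+2) : ℝ)^2) * (x^(2*i+3) * v^(2*(m-i))))
        - 2 * (∑ i ∈ Finset.range (m+1),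
          (((i:ℝ)+1) * (m.choose (i+1) : ℝ)^2) * (x^(2*i+3) * v^(2*(m-i))))
        + (∑ i ∈ Finset.range (m+1),
          ((i:ℝ) * (m.choose i : ℝ)^2) * (x^(2*i+3) * v^(2*(m-i))))
        + (2*(m:ℝ)+1) * ((∑ i ∈ Finset.range (m+1),
          ((m.choose (i+1) : ℝ)^2) * (x^(2*i+3) * v^(2*(m-i))))
          - (∑ i ∈ Finset.range (m+1),
          ((m.choose i : ℝ)^2) * (x^(2*i+3) * v^(2*(m-i)))))
        + (2*(m:ℝ)+3) * (∑ i ∈ Finset.range (m+1),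
          (((m+1).choose (i+1) : ℝ)^2) * (x^(2*i+3) * v^(2*(m-i)))) := by
    simp only [Finset.mul_sum, ← Finset.sum_sub_distrib, ← Finset.sum_add_distrib]
    refine Finset.sum_congr rfl fun i hi => ?_
    linear_combination (x^(2*i+3) * v^(2*(m-i))) * coeffR m i
  rw [canL, e, canA, canB, canC, canD, canE, canF]
  linear_combination hmerge

private lemma bS_symm (m : ℕ) (x v : ℝ) : bS m x v = bS m v x := by
  unfold bS
  conv_lhs => rw [← Finset.sum_range_reflect]
  refine Finset.sum_congr rfl fun j hj => ?_
  rw [Finset.mem_range] at hj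
  rw [show m+1-1-j = m-j by omega, Nat.choose_symm (show j ≤ m by omega),
    show m-(m-j) = j by omega]
  ring

private lemma derivS (m : ℕ) (x : ℝ) :
    deriv (fun y : ℝ => ∑ k ∈ Finset.range (m+1),
      (m.choose k : ℝ)^2 * y^(2*k) * (1-y)^(2*(m-k))) x
    = 2 * bD m x (1-x) - 2 * bD m (1-x) x := by
  have H : HasDerivAt (fun y : ℝ => ∑ k ∈ Finset.range (m+1),
      (m.choose k : ℝ)^2 * y^(2*k) * (1-y)^(2*(m-k)))
      (∑ k ∈ Finset.range (m+1),
        ((m.choose k : ℝ)^2 * (2*(k:ℝ) * x^(2*k-1) * (1-x)^(2*(m-k)))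
         - (m.choose k : ℝ)^2 * (x^(2*k) * (2*((m:ℝ)-(k:ℝ)) * (1-x)^(2*(m-k)-1))))) x := by
    apply HasDerivAt.fun_sum
    intro k hk
    rw [Finset.mem_range] at hk
    have h1 : HasDerivAt (fun y : ℝ => y^(2*k)) (((2*k : ℕ):ℝ) * x^(2*k-1)) x :=
      hasDerivAt_pow (2*k) x
    have h2 : HasDerivAt (fun y : ℝ => (1-y)^(2*(m-k)))
        ((((2*(m-k) : ℕ)):ℝ) * (1-x)^(2*(m-k)-1) * (-1)) x := by
      simpa using ((hasDerivAt_id x).const_sub 1).fun_pow (2*(m-k))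
    have h3 := (h1.const_mul ((m.choose k : ℝ)^2)).fun_mul h2
    refine h3.congr_deriv ?_
    push_cast [Nat.cast_sub (show k ≤ m by omega)]
    ring
  rw [H.deriv, Finset.sum_sub_distrib]
  have p1 : ∑ k ∈ Finset.range (m+1),
      (m.choose k : ℝ)^2 * (2*(k:ℝ) * x^(2*k-1) * (1-x)^(2*(m-k)))
      = 2 * bD m x (1-x) := by
    rw [Finset.sum_range_succ']
    have hterm : ∀ i ∈ Finset.range m,
        (m.choose (i+1) : ℝ)^2 * (2*((↑(i+1)):ℝ) * x^(2*(i+1)-1) * (1-x)^(2*(m-(i+1))))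
        = 2 * (((i:ℝ)+1) * (m.choose (i+1) : ℝ)^2 * x^(2*i+1) * (1-x)^(2*(m-1-i))) := by
      intro i hi
      rw [show 2*(i+1)-1 = 2*i+1 by omega, show m-(i+1) = m-1-i by omega]
      push_cast; ring
    rw [Finset.sum_congr rfl hterm]
    unfold bD
    rw [Finset.mul_sum]
    push_cast; ring
  have p2 : ∑ k ∈ Finset.range (m+1),
      (m.choose k : ℝ)^2 * (x^(2*k) * (2*((m:ℝ)-(k:ℝ)) * (1-x)^(2*(m-k)-1)))
      = 2 * bD m (1-x) x := by
    conv_lhs => rw [← Finset.sum_range_reflect]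
    rw [Finset.sum_range_succ']
    have hterm : ∀ i ∈ Finset.range m,
        (m.choose (m+1-1-(i+1)) : ℝ)^2 * (x^(2*(m+1-1-(i+1)))
          * (2*((m:ℝ)-((m+1-1-(i+1) : ℕ):ℝ)) * (1-x)^(2*(m-(m+1-1-(i+1)))-1)))
        = 2 * (((i:ℝ)+1) * (m.choose (i+1) : ℝ)^2 * (1-x)^(2*i+1) * x^(2*(m-1-i))) := by
      intro i hi
      rw [Finset.mem_range] at hi
      rw [show m+1-1-(i+1) = m-(i+1) by omega,
        Nat.choose_symm (show i+1 ≤ m by omega),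
        show m-(m-(i+1)) = i+1 by omega,
        show 2*(i+1)-1 = 2*i+1 by omega]
      push_cast [Nat.cast_sub (show i+1 ≤ m by omega)]
      rw [show m-(i+1) = m-1-i by omega]
      ring
    rw [Finset.sum_congr rfl hterm]
    unfold bD
    rw [Finset.mul_sum]
    rw [show m+1-1-0 = m by omega]
    push_cast; ring
  rw [p1, p2]

/-- For `n ≥ 1` and all real `x`,
`F_{n+1}'(x) - (1-2x)² F_{n-1}'(x) = 2(1-2x)((2n-1)F_{n-1}(x) - (2n+1)F_n(x))`. -/
theorem stmt_14 (n : ℕ) (hn : 1 ≤ n)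
    (F : ℕ → ℝ → ℝ)
    (hF : ∀ (m : ℕ) (x : ℝ), F m x = ∑ k ∈ Finset.range (m + 1),
      (m.choose k : ℝ) ^ 2 * x ^ (2 * k) * (1 - x) ^ (2 * (m - k))) (x : ℝ) :
    deriv (F (n + 1)) x - (1 - 2 * x) ^ 2 * deriv (F (n - 1)) x =
      2 * (1 - 2 * x) * ((2 * n - 1) * F (n - 1) x - (2 * n + 1) * F n x) := by
  obtain ⟨m, rfl⟩ : ∃ m, n = m + 1 := ⟨n - 1, by omega⟩
  have hFfun : ∀ r : ℕ, F r = fun y => ∑ k ∈ Finset.range (r+1),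
      (r.choose k : ℝ)^2 * y^(2*k) * (1-y)^(2*(r-k)) := fun r => funext (hF r)
  have hd2 : deriv (F (m+1+1)) x = 2 * bD (m+2) x (1-x) - 2 * bD (m+2) (1-x) x := by
    rw [hFfun (m+1+1)]; exact derivS (m+2) x
  have hd0 : deriv (F (m+1-1)) x = 2 * bD m x (1-x) - 2 * bD m (1-x) x := by
    rw [hFfun (m+1-1)]; exact derivS m x
  have hm : F (m+1-1) x = bS m x (1-x) := by rw [hF (m+1-1)]; rfl
  have hn1 : F (m+1) x = bS (m+1) x (1-x) := by rw [hF (m+1)]; rfl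
  have k1 := keyB m x (1-x)
  have k2 := keyB m (1-x) x
  rw [bS_symm m (1-x) x, bS_symm (m+1) (1-x) x] at k2
  rw [hd2, hd0, hm, hn1]
  push_cast
  linear_combination 2*k1 - 2*k2
end

section
/- Let $n\in\mathbb{N}$, $n\ge1$, and define $F_n(x)=\sum_{k=0}^{n}\binom{n}{k}^2 x^{2k}(1-x)^{2(n-k)}$. Then for every real $x$, $x(1-x)(1-2x)F_n''(x)+\big(1+4(n-1)x(1-x)\big)F_n'(x)+2n(1-2x)F_n(x)=0$. -/
open scoped BigOperators

private noncomputable def T0 (n k : ℕ) : ℝ → ℝ := fun x =>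
  (n.choose k : ℝ) ^ 2 * (x ^ (2 * k) * (1 - x) ^ (2 * (n - k)))

private noncomputable def T1 (n k : ℕ) : ℝ → ℝ := fun x =>
  (n.choose k : ℝ) ^ 2 *
    (((2 * k : ℕ) : ℝ) * (x ^ (2 * k - 1) * (1 - x) ^ (2 * (n - k))) -
      ((2 * (n - k) : ℕ) : ℝ) * (x ^ (2 * k) * (1 - x) ^ (2 * (n - k) - 1)))

private noncomputable def T2 (n k : ℕ) : ℝ → ℝ := fun x =>
  (n.choose k : ℝ) ^ 2 *
    (((2 * k : ℕ) : ℝ) * ((2 * k - 1 : ℕ) : ℝ) * x ^ (2 * k - 1 - 1) * (1 - x) ^ (2 * (n - k))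
      - 2 * ((2 * k : ℕ) : ℝ) * ((2 * (n - k) : ℕ) : ℝ) * x ^ (2 * k - 1) * (1 - x) ^ (2 * (n - k) - 1)
      + ((2 * (n - k) : ℕ) : ℝ) * ((2 * (n - k) - 1 : ℕ) : ℝ) * x ^ (2 * k) * (1 - x) ^ (2 * (n - k) - 1 - 1))

private noncomputable def GG (n k : ℕ) : ℝ → ℝ := fun x =>
  -4 * (k : ℝ) ^ 2 * (n.choose k : ℝ) ^ 2 * x ^ (2 * k - 1) * (1 - x) ^ (2 * (n - k) + 1)

private lemma hv (m : ℕ) (x : ℝ) :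
    HasDerivAt (fun y : ℝ => (1 - y) ^ m) (-((m : ℝ) * (1 - x) ^ (m - 1))) x := by
  have hu : HasDerivAt (fun y : ℝ => 1 - y) (-1) x := (hasDerivAt_id x).const_sub 1
  have h := (hasDerivAt_pow m (1 - x)).comp x hu
  refine h.congr_deriv ?_
  ring

private lemma hT1 (n k : ℕ) (x : ℝ) : HasDerivAt (T0 n k) (T1 n k x) x := by
  have h := (((hasDerivAt_pow (2 * k) x).mul (hv (2 * (n - k)) x)).const_mul
    ((n.choose k : ℝ) ^ 2))
  refine h.congr_deriv ?_
  simp only [T1]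
  ring

private lemma hT2 (n k : ℕ) (x : ℝ) : HasDerivAt (T1 n k) (T2 n k x) x := by
  have hA := ((hasDerivAt_pow (2 * k - 1) x).mul (hv (2 * (n - k)) x)).const_mul
    (((2 * k : ℕ) : ℝ))
  have hB := ((hasDerivAt_pow (2 * k) x).mul (hv (2 * (n - k) - 1) x)).const_mul
    (((2 * (n - k) : ℕ) : ℝ))
  have h := (hA.sub hB).const_mul ((n.choose k : ℝ) ^ 2)
  refine h.congr_deriv ?_
  simp only [T2]
  ring

private lemma key (n k : ℕ) (hn : 1 ≤ n) (hk : k ≤ n) (x : ℝ) :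
    x * (1 - x) * (1 - 2 * x) * T2 n k x +
      (1 + 4 * ((n : ℝ) - 1) * x * (1 - x)) * T1 n k x +
      2 * (n : ℝ) * (1 - 2 * x) * T0 n k x = GG n (k + 1) x - GG n k x := by
  rcases Nat.eq_zero_or_pos k with rfl | hk1
  · obtain ⟨e, rfl⟩ : ∃ e, n = e + 1 := ⟨n - 1, by omega⟩
    simp only [T0, T1, T2, GG]
    have h1 : 2 * (e + 1) - 1 = 2 * e + 1 := by omega
    have h2 : 2 * (e + 1) - 1 - 1 = 2 * e := by omega
    have h3 : 2 * (e + 1 - 1) + 1 = 2 * e + 1 := by omega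
    simp only [Nat.sub_zero, zero_add, Nat.choose_zero_right, Nat.choose_one_right, h1, h2, h3]
    push_cast
    ring
  · obtain ⟨i, rfl⟩ : ∃ i, k = i + 1 := ⟨k - 1, by omega⟩
    rcases eq_or_lt_of_le hk with rfl | hlt
    · -- k = n
      simp only [T0, T1, T2, GG]
      have h1 : 2 * (i + 1) - 1 = 2 * i + 1 := by omega
      have h2 : 2 * (i + 1) - 1 - 1 = 2 * i := by omega
      have h3 : (i + 1) - (i + 1) = 0 := by omega
      have h4 : (i + 1) - (i + 1 + 1) = 0 := by omega
      have h5 : Nat.choose (i + 1) (i + 1 + 1) = 0 := Nat.choose_eq_zero_of_lt (by omega)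
      simp only [h1, h2, h3, h4, h5, Nat.choose_self, Nat.mul_zero, Nat.zero_sub,
        Nat.cast_zero, Nat.cast_one, pow_zero]
      push_cast
      ring
    · -- 0 < k < n
      obtain ⟨j, rfl⟩ : ∃ j, n = i + j + 2 := ⟨n - i - 2, by omega⟩
      have hc : ((i + j + 2).choose (i + 2) : ℝ) * ((i : ℝ) + 2) =
          ((i + j + 2).choose (i + 1) : ℝ) * ((j : ℝ) + 1) := by
        have := Nat.choose_succ_right_eq (i + j + 2) (i + 1)
        have h' : (i + j + 2) - (i + 1) = j + 1 := by omega
        rw [h'] at this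
        exact_mod_cast this
      simp only [T0, T1, T2, GG]
      have h1 : 2 * (i + 1) - 1 = 2 * i + 1 := by omega
      have h2 : 2 * (i + 1) - 1 - 1 = 2 * i := by omega
      have h3 : (i + j + 2) - (i + 1) = j + 1 := by omega
      have h4 : (i + j + 2) - (i + 1 + 1) = j := by omega
      have h5 : 2 * (j + 1) - 1 = 2 * j + 1 := by omega
      have h6 : 2 * (j + 1) - 1 - 1 = 2 * j := by omega
      have h7 : 2 * (i + 1 + 1) - 1 = 2 * i + 3 := by omega
      have h8 : i + 1 + 1 = i + 2 := by omega
      simp only [h1, h2, h3, h4, h5, h6, h7, h8]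
      push_cast
      linear_combination (4 * x ^ (2 * i + 3) * (1 - x) ^ (2 * j + 1) *
        (((i + j + 2).choose (i + 2) : ℝ) * ((i : ℝ) + 2) +
          ((i + j + 2).choose (i + 1) : ℝ) * ((j : ℝ) + 1))) * hc

/-- For `n ≥ 1` and all real `x`,
`x(1-x)(1-2x)F_n''(x) + (1+4(n-1)x(1-x))F_n'(x) + 2n(1-2x)F_n(x) = 0`. -/
theorem stmt_15 (n : ℕ) (hn : 1 ≤ n)
    (F : ℝ → ℝ)
    (hF : ∀ x : ℝ, F x = ∑ k ∈ Finset.range (n + 1),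
      (n.choose k : ℝ) ^ 2 * x ^ (2 * k) * (1 - x) ^ (2 * (n - k))) (x : ℝ) :
    x * (1 - x) * (1 - 2 * x) * deriv (deriv F) x +
      (1 + 4 * ((n : ℝ) - 1) * x * (1 - x)) * deriv F x +
      2 * n * (1 - 2 * x) * F x = 0 := by
  have hFeq : F = fun y => ∑ k ∈ Finset.range (n + 1), T0 n k y := by
    funext y
    rw [hF y]
    exact Finset.sum_congr rfl fun k _ => by simp only [T0]; ring
  have hd1 : ∀ y : ℝ, HasDerivAt F (∑ k ∈ Finset.range (n + 1), T1 n k y) y := by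
    intro y
    rw [hFeq]
    exact HasDerivAt.fun_sum fun k _ => hT1 n k y
  have hdF : deriv F = fun y => ∑ k ∈ Finset.range (n + 1), T1 n k y :=
    funext fun y => (hd1 y).deriv
  have hd2 : ∀ y : ℝ, HasDerivAt (deriv F)
      (∑ k ∈ Finset.range (n + 1), T2 n k y) y := by
    intro y
    rw [hdF]
    exact HasDerivAt.fun_sum fun k _ => hT2 n k y
  rw [(hd2 x).deriv, (hd1 x).deriv, hFeq]
  have : x * (1 - x) * (1 - 2 * x) * ∑ k ∈ Finset.range (n + 1), T2 n k x +
      (1 + 4 * ((n : ℝ) - 1) * x * (1 - x)) * ∑ k ∈ Finset.range (n + 1), T1 n k x +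
      2 * (n : ℝ) * (1 - 2 * x) * ∑ k ∈ Finset.range (n + 1), T0 n k x =
      ∑ k ∈ Finset.range (n + 1), (GG n (k + 1) x - GG n k x) := by
    rw [Finset.mul_sum, Finset.mul_sum, Finset.mul_sum, ← Finset.sum_add_distrib,
      ← Finset.sum_add_distrib]
    exact Finset.sum_congr rfl fun k hk =>
      key n k hn (Nat.lt_succ_iff.mp (Finset.mem_range.mp hk)) x
  rw [this, Finset.sum_range_sub (fun k => GG n k x)]
  simp [GG, Nat.choose_eq_zero_of_lt (Nat.lt_succ_self n)]
end
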